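/- arXiv:0903.1743 — 5 statements merged into one kernel-verified Lean document; each statement's English description precedes it below -/
import Mathlib

section
/- Let p_e(n) (resp. p_o(n)) denote the number of partitions of n into an even (resp. odd) number of distinct parts. Then p_e(n) - p_o(n) = (-1)^m if n = m(3m±1)/2 for some positive integer m, and p_e(n) - p_o(n) = 0 otherwise. -/
/-- The finite set of partitions of `n` into distinct (positive) parts,
encoded as finite sets of positive integers summing to `n`. -/
def distinctPartitions (n : ℕ) : Finset (Finset ℕ) :=
  (Finset.range (n + 1)).powerset.filter (fun S => 0 ∉ S ∧ S.sum id = n)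

/-- Number of partitions of `n` into an even number of distinct parts. -/
def pe (n : ℕ) : ℕ := ((distinctPartitions n).filter (fun S => Even S.card)).card

/-- Number of partitions of `n` into an odd number of distinct parts. -/
def po (n : ℕ) : ℕ := ((distinctPartitions n).filter (fun S => Odd S.card)).card

set_option linter.unusedVariables false
set_option linter.unreachableTactic false
set_option linter.unusedTactic false

open Finset


/-- staircase length from the top -/
noncomputable def rr (S : Finset ℕ) (h : S.Nonempty) (h0 : 0 ∉ S) : ℕ :=
  Nat.find (⟨S.max' h, by simpa using h0⟩ : ∃ j, S.max' h - j ∉ S)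

lemma rr_spec1 {S : Finset ℕ} (h : S.Nonempty) (h0 : 0 ∉ S) :
    ∀ j < rr S h h0, S.max' h - j ∈ S := by
  intro j hj
  have := Nat.find_min (⟨S.max' h, by simpa using h0⟩ : ∃ j, S.max' h - j ∉ S) hj
  simpa using this

lemma rr_spec2 {S : Finset ℕ} (h : S.Nonempty) (h0 : 0 ∉ S) :
    S.max' h - rr S h h0 ∉ S :=
  Nat.find_spec (⟨S.max' h, by simpa using h0⟩ : ∃ j, S.max' h - j ∉ S)

lemma rr_pos {S : Finset ℕ} (h : S.Nonempty) (h0 : 0 ∉ S) : 0 < rr S h h0 := by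
  rcases Nat.eq_zero_or_pos (rr S h h0) with he | hp
  · exfalso
    have := rr_spec2 h h0
    rw [he] at this
    exact this (by simpa using S.max'_mem h)
  · exact hp

lemma rr_le_max {S : Finset ℕ} (h : S.Nonempty) (h0 : 0 ∉ S) : rr S h h0 ≤ S.max' h := by
  by_contra hc
  push_neg at hc
  have := rr_spec1 h h0 (S.max' h) hc
  simp at this
  exact h0 this

lemma mem_of_staircase {S : Finset ℕ} (h : S.Nonempty) (h0 : 0 ∉ S) {x : ℕ}
    (h1 : S.max' h - rr S h h0 < x) (h2 : x ≤ S.max' h) : x ∈ S := by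
  have hr := rr_le_max h h0
  have : x = S.max' h - (S.max' h - x) := by omega
  rw [this]
  exact rr_spec1 h h0 _ (by omega)

lemma min'_Icc' {a b : ℕ} (h : a ≤ b) (hne : (Finset.Icc a b).Nonempty) :
    (Finset.Icc a b).min' hne = a :=
  le_antisymm (Finset.min'_le _ _ (by simp [h])) (Finset.le_min' _ _ _ (fun y hy => (Finset.mem_Icc.1 hy).1))

lemma max'_Icc' {a b : ℕ} (h : a ≤ b) (hne : (Finset.Icc a b).Nonempty) :
    (Finset.Icc a b).max' hne = b :=
  le_antisymm (Finset.max'_le _ _ _ (fun y hy => (Finset.mem_Icc.1 hy).2)) (Finset.le_max' _ _ (by simp [h]))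

lemma sum_Icc_mul_two (a k : ℕ) : (Finset.Icc a (a + k)).sum id * 2 = (k + 1) * (2 * a + k) := by
  induction k with
  | zero => simp [mul_comm]
  | succ k ih =>
    have : Finset.Icc a (a + (k+1)) = insert (a + (k+1)) (Finset.Icc a (a + k)) := by
      ext x; simp [Finset.mem_Icc]; omega
    rw [this, Finset.sum_insert (by simp), add_mul, ih]
    simp only [id]
    ring

lemma rr_eq {S : Finset ℕ} (h : S.Nonempty) (h0 : 0 ∉ S) {k : ℕ}
    (h1 : S.max' h - k ∉ S) (h2 : ∀ j < k, S.max' h - j ∈ S) : rr S h h0 = k := by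
  rw [rr, Nat.find_eq_iff]
  exact ⟨h1, fun j hj hc => hc (h2 j hj)⟩

lemma rr_Icc1 {k : ℕ} (hk : 1 ≤ k) (h : (Finset.Icc k (2*k-1)).Nonempty)
    (h0 : 0 ∉ Finset.Icc k (2*k-1)) : rr _ h h0 = k := by
  have hm := max'_Icc' (by omega : k ≤ 2*k-1) h
  apply rr_eq
  · rw [hm]; simp [Finset.mem_Icc]; omega
  · intro j hj; rw [hm]; simp [Finset.mem_Icc]; omega

lemma rr_Icc2 {k : ℕ} (hk : 1 ≤ k) (h : (Finset.Icc (k+1) (2*k)).Nonempty)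
    (h0 : 0 ∉ Finset.Icc (k+1) (2*k)) : rr _ h h0 = k := by
  have hm := max'_Icc' (by omega : k+1 ≤ 2*k) h
  apply rr_eq
  · rw [hm]; simp [Finset.mem_Icc]; omega
  · intro j hj; rw [hm]; simp [Finset.mem_Icc]; omega

/-- exceptional partitions -/
def ExP (S : Finset ℕ) : Prop :=
  ∃ k, 1 ≤ k ∧ (S = Finset.Icc k (2*k-1) ∨ S = Finset.Icc (k+1) (2*k))

/-- Franklin's involution -/
noncomputable def fr (S : Finset ℕ) (h : S.Nonempty) (h0 : 0 ∉ S) : Finset ℕ :=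
  if S.min' h ≤ rr S h h0 then
    insert (S.max' h + 1) ((S.erase (S.min' h)).erase (S.max' h + 1 - S.min' h))
  else
    insert (rr S h h0) (insert (S.max' h - rr S h h0) (S.erase (S.max' h)))

lemma rr_congr {S T : Finset ℕ} (e : S = T) (hS : S.Nonempty) (hS0 : 0 ∉ S)
    (hT : T.Nonempty) (hT0 : 0 ∉ T) : rr S hS hS0 = rr T hT hT0 := by subst e; rfl

lemma min'_congr {S T : Finset ℕ} (e : S = T) (hS : S.Nonempty) (hT : T.Nonempty) :
    S.min' hS = T.min' hT := by subst e; rfl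

lemma max'_congr {S T : Finset ℕ} (e : S = T) (hS : S.Nonempty) (hT : T.Nonempty) :
    S.max' hS = T.max' hT := by subst e; rfl

lemma caseA {S : Finset ℕ} (h : S.Nonempty) (h0 : 0 ∉ S) (hEx : ¬ ExP S)
    (hsr : S.min' h ≤ rr S h h0) :
    (fr S h h0).sum id = S.sum id ∧ (fr S h h0).card + 1 = S.card ∧ 0 ∉ fr S h h0 ∧
    (fr S h h0).Nonempty ∧ ¬ ExP (fr S h h0) ∧
    ∀ h' h0', fr (fr S h h0) h' h0' = S := by
  set s := S.min' h with hs_def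
  set M := S.max' h with hM_def
  set r := rr S h h0 with hr_def
  have hsMem : s ∈ S := S.min'_mem h
  have hMMem : M ∈ S := S.max'_mem h
  have hs1 : 1 ≤ s := Nat.one_le_iff_ne_zero.2 (fun he => h0 (he ▸ hsMem))
  have hsM : s ≤ M := S.le_max' _ hsMem
  have hrM : r ≤ M := rr_le_max h h0
  have hmin : ∀ x ∈ S, s ≤ x := fun x hx => S.min'_le _ hx
  have hmax : ∀ x ∈ S, x ≤ M := fun x hx => S.le_max' _ hx
  have hMem2 : M + 1 - s ∈ S := by
    have := rr_spec1 h h0 (s - 1) (by omega)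
    have e : M - (s - 1) = M + 1 - s := by omega
    rwa [e] at this
  -- M ≥ 2s
  have h2s : 2 * s ≤ M := by
    by_contra hc
    push_neg at hc
    have hMeq : M = 2 * s - 1 := by
      have := hmin _ hMem2
      omega
    apply hEx
    refine ⟨s, hs1, Or.inl ?_⟩
    ext x
    simp only [Finset.mem_Icc]
    constructor
    · intro hx; exact ⟨hmin x hx, hMeq ▸ hmax x hx⟩
    · rintro ⟨hx1, hx2⟩
      exact mem_of_staircase h h0 (by omega) (by omega)
  -- the image set
  have hcond : fr S h h0 = insert (M + 1) ((S.erase s).erase (M + 1 - s)) := by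
    rw [fr, if_pos hsr]
  set X := (S.erase s).erase (M + 1 - s) with hX_def
  have hXsub : X ⊆ S := (Finset.erase_subset _ _).trans (Finset.erase_subset _ _)
  have hMemX : M + 1 - s ∈ S.erase s := Finset.mem_erase.2 ⟨by omega, hMem2⟩
  have hM1X : M + 1 ∉ X := fun hc => by have := hmax _ (hXsub hc); omega
  have hXmem : ∀ x, x ∈ X ↔ x ∈ S ∧ x ≠ s ∧ x ≠ M + 1 - s := by
    intro x
    simp only [hX_def, Finset.mem_erase]
    tauto
  have hsum : (fr S h h0).sum id = S.sum id := by
    rw [hcond, Finset.sum_insert hM1X]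
    have e1 : X.sum id + id (M + 1 - s) = (S.erase s).sum id := Finset.sum_erase_add _ _ hMemX
    have e2 : (S.erase s).sum id + id s = S.sum id := Finset.sum_erase_add _ _ hsMem
    simp only [id] at e1 e2 ⊢
    omega
  have hcard : (fr S h h0).card + 1 = S.card := by
    rw [hcond, Finset.card_insert_of_notMem hM1X]
    have e1 : X.card + 1 = (S.erase s).card :=
      Finset.card_erase_add_one hMemX
    have e2 : (S.erase s).card + 1 = S.card := Finset.card_erase_add_one hsMem
    omega
  have h0A : 0 ∉ fr S h h0 := by
    rw [hcond]
    intro hc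
    rcases Finset.mem_insert.1 hc with hc | hc
    · omega
    · exact h0 (hXsub hc)
  have hA : (fr S h h0).Nonempty := ⟨M + 1, by rw [hcond]; exact Finset.mem_insert_self _ _⟩
  have hmaxA : (fr S h h0).max' hA = M + 1 := by
    apply le_antisymm
    · apply Finset.max'_le
      intro y hy
      rw [hcond] at hy
      rcases Finset.mem_insert.1 hy with rfl | hy
      · exact le_refl _
      · exact le_trans (hmax _ (hXsub hy)) (by omega)
    · exact Finset.le_max' _ _ (by rw [hcond]; exact Finset.mem_insert_self _ _)
  have hgtA : ∀ x ∈ fr S h h0, s < x := by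
    intro x hx
    rw [hcond] at hx
    rcases Finset.mem_insert.1 hx with rfl | hx
    · omega
    · rcases (hXmem x).1 hx with ⟨hxS, hxs, _⟩
      have := hmin x hxS
      omega
  have hminA : s < (fr S h h0).min' hA := hgtA _ (Finset.min'_mem _ _)
  have hrrA : rr (fr S h h0) hA h0A = s := by
    apply rr_eq
    · rw [hmaxA]
      have e : M + 1 - s ∉ fr S h h0 := by
        rw [hcond]
        intro hc
        rcases Finset.mem_insert.1 hc with hc | hc
        · omega
        · exact ((hXmem _).1 hc).2.2 rfl
      simpa using e
    · intro j hj
      rw [hmaxA]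
      rcases Nat.eq_zero_or_pos j with rfl | hj1
      · simpa using (by rw [hcond]; exact Finset.mem_insert_self _ _ : M + 1 ∈ fr S h h0)
      · have hmem : M + 1 - j ∈ S := by
          have := rr_spec1 h h0 (j - 1) (by omega)
          have e : M - (j - 1) = M + 1 - j := by omega
          rwa [e] at this
        rw [hcond]
        apply Finset.mem_insert_of_mem
        rw [hXmem]
        exact ⟨hmem, by omega, by omega⟩
  have hExA : ¬ ExP (fr S h h0) := by
    rintro ⟨k, hk, hcase | hcase⟩
    · have hne : (Finset.Icc k (2*k-1)).Nonempty := hcase ▸ hA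
      have hne0 : 0 ∉ Finset.Icc k (2*k-1) := hcase ▸ h0A
      have e1 : rr (fr S h h0) hA h0A = k := (rr_congr hcase hA h0A hne hne0).trans (rr_Icc1 hk hne hne0)
      have e2 : (fr S h h0).min' hA = k := (min'_congr hcase hA hne).trans (min'_Icc' (by omega) hne)
      omega
    · have hne : (Finset.Icc (k+1) (2*k)).Nonempty := hcase ▸ hA
      have hne0 : 0 ∉ Finset.Icc (k+1) (2*k) := hcase ▸ h0A
      have e1 : rr (fr S h h0) hA h0A = k := (rr_congr hcase hA h0A hne hne0).trans (rr_Icc2 hk hne hne0)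
      have e2 : (fr S h h0).max' hA = 2 * k := (max'_congr hcase hA hne).trans (max'_Icc' (by omega) hne)
      omega
  refine ⟨hsum, hcard, h0A, hA, hExA, ?_⟩
  intro h' h0'
  have hcond2 : ¬ ((fr S h h0).min' h' ≤ rr (fr S h h0) h' h0') := by
    have e1 : rr (fr S h h0) h' h0' = s := hrrA
    have e2 : (fr S h h0).min' h' = (fr S h h0).min' hA := rfl
    omega
  rw [fr, if_neg hcond2]
  have e1 : rr (fr S h h0) h' h0' = s := hrrA
  have e2 : (fr S h h0).max' h' = M + 1 := hmaxA
  rw [e1, e2]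
  have e3 : (fr S h h0).erase (M + 1) = X := by rw [hcond]; exact Finset.erase_insert hM1X
  have e4 : M + 1 - s ≤ M + 1 := by omega
  rw [e3]
  rw [Finset.insert_erase hMemX, Finset.insert_erase hsMem]

lemma rr_ge {S : Finset ℕ} (h : S.Nonempty) (h0 : 0 ∉ S) {k : ℕ}
    (hk : ∀ j < k, S.max' h - j ∈ S) : k ≤ rr S h h0 := by
  by_contra hc
  push_neg at hc
  exact rr_spec2 h h0 (hk _ hc)

lemma caseB {S : Finset ℕ} (h : S.Nonempty) (h0 : 0 ∉ S) (hEx : ¬ ExP S)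
    (hsr : ¬ (S.min' h ≤ rr S h h0)) :
    (fr S h h0).sum id = S.sum id ∧ (fr S h h0).card = S.card + 1 ∧ 0 ∉ fr S h h0 ∧
    (fr S h h0).Nonempty ∧ ¬ ExP (fr S h h0) ∧
    ∀ h' h0', fr (fr S h h0) h' h0' = S := by
  push_neg at hsr
  set s := S.min' h with hs_def
  set M := S.max' h with hM_def
  set r := rr S h h0 with hr_def
  have hsMem : s ∈ S := S.min'_mem h
  have hMMem : M ∈ S := S.max'_mem h
  have hr1 : 1 ≤ r := rr_pos h h0
  have hs1 : 1 ≤ s := Nat.one_le_iff_ne_zero.2 (fun he => h0 (he ▸ hsMem))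
  have hsM : s ≤ M := S.le_max' _ hsMem
  have hrM : r ≤ M := rr_le_max h h0
  have hmin : ∀ x ∈ S, s ≤ x := fun x hx => S.min'_le _ hx
  have hmax : ∀ x ∈ S, x ≤ M := fun x hx => S.le_max' _ hx
  have hMem2 : M - r + 1 ∈ S := by
    have := rr_spec1 h h0 (r - 1) (by omega)
    have e : M - (r - 1) = M - r + 1 := by omega
    rwa [e] at this
  have hMrS : M - r ∉ S := rr_spec2 h h0
  -- M ≥ 2r + 1
  have h2r : 2 * r + 1 ≤ M := by
    have hge : 2 * r ≤ M := by have := hmin _ hMem2; omega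
    rcases Nat.lt_or_ge (2*r) M with hlt | hge2
    · omega
    exfalso
    have hMeq : M = 2 * r := by omega
    apply hEx
    refine ⟨r, hr1, Or.inr ?_⟩
    have hsr2 : s = r + 1 := by
      have := hmin _ hMem2
      omega
    ext x
    simp only [Finset.mem_Icc]
    constructor
    · intro hx; exact ⟨hsr2 ▸ hmin x hx, hMeq ▸ hmax x hx⟩
    · rintro ⟨hx1, hx2⟩
      exact mem_of_staircase h h0 (by omega) (by omega)
  have hcond : fr S h h0 = insert r (insert (M - r) (S.erase M)) := by
    rw [fr, if_neg (by omega)]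
  set X := insert (M - r) (S.erase M) with hX_def
  have hMrX : M - r ∉ S.erase M := fun hc => hMrS (Finset.mem_of_mem_erase hc)
  have hrX : r ∉ X := by
    intro hc
    rcases Finset.mem_insert.1 hc with hc | hc
    · omega
    · have := hmin _ (Finset.mem_of_mem_erase hc); omega
  have hXmem : ∀ x, x ∈ X ↔ x = M - r ∨ (x ∈ S ∧ x ≠ M) := by
    intro x
    simp only [hX_def, Finset.mem_insert, Finset.mem_erase]
    tauto
  have hsum : (fr S h h0).sum id = S.sum id := by
    rw [hcond, Finset.sum_insert hrX, hX_def, Finset.sum_insert hMrX]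
    have e2 : (S.erase M).sum id + id M = S.sum id := Finset.sum_erase_add _ _ hMMem
    simp only [id] at e2 ⊢
    omega
  have hcard : (fr S h h0).card = S.card + 1 := by
    rw [hcond, Finset.card_insert_of_notMem hrX, hX_def, Finset.card_insert_of_notMem hMrX]
    have e2 : (S.erase M).card + 1 = S.card := Finset.card_erase_add_one hMMem
    omega
  have h0B : 0 ∉ fr S h h0 := by
    rw [hcond]
    intro hc
    rcases Finset.mem_insert.1 hc with hc | hc
    · omega
    · rcases (hXmem 0).1 hc with hc | ⟨hc, _⟩
      · omega
      · exact h0 hc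
  have hB : (fr S h h0).Nonempty := ⟨r, by rw [hcond]; exact Finset.mem_insert_self _ _⟩
  have hgeB : ∀ x ∈ fr S h h0, r ≤ x := by
    intro x hx
    rw [hcond] at hx
    rcases Finset.mem_insert.1 hx with rfl | hx
    · exact le_refl _
    · rcases (hXmem x).1 hx with rfl | ⟨hc, _⟩
      · omega
      · have := hmin _ hc; omega
  have hminB : (fr S h h0).min' hB = r := by
    apply le_antisymm
    · exact Finset.min'_le _ _ (by rw [hcond]; exact Finset.mem_insert_self _ _)
    · exact Finset.le_min' _ _ _ hgeB
  have hmaxB : (fr S h h0).max' hB = M - 1 := by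
    apply le_antisymm
    · apply Finset.max'_le
      intro y hy
      rw [hcond] at hy
      rcases Finset.mem_insert.1 hy with rfl | hy
      · omega
      · rcases (hXmem y).1 hy with rfl | ⟨hc, hc2⟩
        · omega
        · have := hmax _ hc; omega
    · apply Finset.le_max'
      rcases Nat.eq_or_lt_of_le hr1 with he | hlt
      · rw [hcond]
        apply Finset.mem_insert_of_mem
        rw [hXmem]
        left; omega
      · have hmem : M - 1 ∈ S := rr_spec1 h h0 1 hlt
        rw [hcond]
        apply Finset.mem_insert_of_mem
        rw [hXmem]
        right; exact ⟨hmem, by omega⟩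
  have hrrB : r ≤ rr (fr S h h0) hB h0B := by
    apply rr_ge
    intro j hj
    rw [hmaxB]
    rcases Nat.eq_or_lt_of_le (by omega : j + 1 ≤ r) with he | hlt
    · rw [hcond]
      apply Finset.mem_insert_of_mem
      rw [hXmem]
      left; omega
    · have hmem : M - (j + 1) ∈ S := rr_spec1 h h0 (j+1) hlt
      have e : M - 1 - j = M - (j + 1) := by omega
      rw [e, hcond]
      apply Finset.mem_insert_of_mem
      rw [hXmem]
      right; exact ⟨hmem, by omega⟩
  have hExB : ¬ ExP (fr S h h0) := by
    rintro ⟨k, hk, hcase | hcase⟩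
    · have hne : (Finset.Icc k (2*k-1)).Nonempty := hcase ▸ hB
      have hne0 : 0 ∉ Finset.Icc k (2*k-1) := hcase ▸ h0B
      have e2 : (fr S h h0).min' hB = k := (min'_congr hcase hB hne).trans (min'_Icc' (by omega) hne)
      have e3 : (fr S h h0).max' hB = 2*k-1 := (max'_congr hcase hB hne).trans (max'_Icc' (by omega) hne)
      omega
    · have hne : (Finset.Icc (k+1) (2*k)).Nonempty := hcase ▸ hB
      have hne0 : 0 ∉ Finset.Icc (k+1) (2*k) := hcase ▸ h0B
      have e1 : rr (fr S h h0) hB h0B = k := (rr_congr hcase hB h0B hne hne0).trans (rr_Icc2 hk hne hne0)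
      have e2 : (fr S h h0).min' hB = k + 1 := (min'_congr hcase hB hne).trans (min'_Icc' (by omega) hne)
      omega
  refine ⟨hsum, hcard, h0B, hB, hExB, ?_⟩
  intro h' h0'
  have hcond2 : (fr S h h0).min' h' ≤ rr (fr S h h0) h' h0' := by
    have e2 : (fr S h h0).min' h' = r := hminB
    have e1 : r ≤ rr (fr S h h0) h' h0' := hrrB
    omega
  rw [fr, if_pos hcond2]
  have e1 : (fr S h h0).min' h' = r := hminB
  have e2 : (fr S h h0).max' h' = M - 1 := hmaxB
  rw [e1, e2]
  have e3 : M - 1 + 1 = M := by omega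
  rw [e3]
  have e4 : (fr S h h0).erase r = X := by rw [hcond]; exact Finset.erase_insert hrX
  rw [e4]
  have e5 : M - r ≤ M := by omega
  have e6 : X.erase (M - r) = S.erase M := by rw [hX_def]; exact Finset.erase_insert hMrX
  rw [e6, Finset.insert_erase hMMem]

lemma sum_Icc1 {k : ℕ} (hk : 1 ≤ k) : (Finset.Icc k (2*k-1)).sum id * 2 = k * (3*k-1) := by
  have e : 2*k-1 = k + (k-1) := by omega
  rw [e, sum_Icc_mul_two]
  have e1 : k - 1 + 1 = k := by omega
  have e2 : 2*k + (k-1) = 3*k-1 := by omega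
  rw [e1, e2]

lemma sum_Icc2 {k : ℕ} (hk : 1 ≤ k) : (Finset.Icc (k+1) (2*k)).sum id * 2 = k * (3*k+1) := by
  have e : 2*k = (k+1) + (k-1) := by omega
  rw [e, sum_Icc_mul_two]
  have e1 : k - 1 + 1 = k := by omega
  have e2 : 2*(k+1) + (k-1) = 3*k+1 := by omega
  rw [e1, e2]

lemma card_Icc1 {k : ℕ} (hk : 1 ≤ k) : (Finset.Icc k (2*k-1)).card = k := by
  rw [Nat.card_Icc]; omega

lemma card_Icc2 {k : ℕ} (hk : 1 ≤ k) : (Finset.Icc (k+1) (2*k)).card = k := by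
  rw [Nat.card_Icc]; omega

lemma pent_even1 {m : ℕ} (hm : 1 ≤ m) : 2 ∣ m * (3*m-1) := by
  rcases Nat.even_or_odd m with ⟨t, ht⟩ | ⟨t, ht⟩
  · exact ⟨t * (3*m-1), by rw [ht]; ring⟩
  · refine ⟨m * (3*t+1), ?_⟩
    have e : 3*m-1 = 2*(3*t+1) := by omega
    rw [e]; ring

lemma pent_even2 {m : ℕ} (hm : 1 ≤ m) : 2 ∣ m * (3*m+1) := by
  rcases Nat.even_or_odd m with ⟨t, ht⟩ | ⟨t, ht⟩
  · exact ⟨t * (3*m+1), by rw [ht]; ring⟩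
  · refine ⟨m * (3*t+2), ?_⟩
    have e : 3*m+1 = 2*(3*t+2) := by omega
    rw [e]; ring

lemma pent_inj1 {k m : ℕ} (hk : 1 ≤ k) (hm : 1 ≤ m) (h : k * (3*k-1) = m * (3*m-1)) :
    k = m := by
  have hz : (k:ℤ) * (3*k-1) = (m:ℤ) * (3*m-1) := by
    have := congrArg (Nat.cast : ℕ → ℤ) h
    push_cast [Nat.cast_sub (by omega : 1 ≤ 3*k), Nat.cast_sub (by omega : 1 ≤ 3*m)] at this ⊢
    convert this using 2 <;> push_cast <;> ring_nf <;> omega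
  have hfac : ((k:ℤ) - m) * (3*((k:ℤ)+m) - 1) = 0 := by linear_combination hz
  rcases mul_eq_zero.1 hfac with h1 | h1 <;> omega

lemma pent_inj2 {k m : ℕ} (hk : 1 ≤ k) (hm : 1 ≤ m) (h : k * (3*k+1) = m * (3*m+1)) :
    k = m := by
  have hz : (k:ℤ) * (3*k+1) = (m:ℤ) * (3*m+1) := by exact_mod_cast h
  have hfac : ((k:ℤ) - m) * (3*((k:ℤ)+m) + 1) = 0 := by linear_combination hz
  rcases mul_eq_zero.1 hfac with h1 | h1 <;> omega

lemma pent_ne {k m : ℕ} (hk : 1 ≤ k) (hm : 1 ≤ m) : k * (3*k-1) ≠ m * (3*m+1) := by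
  intro h
  have hz : (k:ℤ) * (3*k-1) = (m:ℤ) * (3*m+1) := by
    have := congrArg (Nat.cast : ℕ → ℤ) h
    push_cast [Nat.cast_sub (by omega : 1 ≤ 3*k)] at this ⊢
    exact this
  have hfac : ((k:ℤ) + m) * (3*((k:ℤ) - m) - 1) = 0 := by linear_combination hz
  rcases mul_eq_zero.1 hfac with h1 | h1 <;> omega


lemma mem_dp {n : ℕ} {T : Finset ℕ} :
    T ∈ distinctPartitions n ↔ 0 ∉ T ∧ T.sum id = n := by
  rw [distinctPartitions, Finset.mem_filter, Finset.mem_powerset]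
  constructor
  · rintro ⟨_, h2⟩; exact h2
  · rintro ⟨h1, h2⟩
    refine ⟨?_, h1, h2⟩
    intro x hx
    rw [Finset.mem_range]
    have : x ≤ T.sum id := Finset.single_le_sum (f := id) (fun i _ => Nat.zero_le _) hx
    omega

lemma dp_nonempty {n : ℕ} (hn : 1 ≤ n) {T : Finset ℕ} (hT : T ∈ distinctPartitions n) :
    T.Nonempty := by
  rcases T.eq_empty_or_nonempty with rfl | h
  · have := (mem_dp.1 hT).2
    simp at this
    omega
  · exact h

lemma fr_main {n : ℕ} (hn : 1 ≤ n) {S : Finset ℕ} (hS : S ∈ distinctPartitions n)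
    (hE : ¬ ExP S) (h : S.Nonempty) (h0 : 0 ∉ S) :
    fr S h h0 ∈ distinctPartitions n ∧ ¬ ExP (fr S h h0) ∧
    ((-1:ℤ)^S.card + (-1:ℤ)^(fr S h h0).card = 0) ∧ (fr S h h0 ≠ S) ∧
    ∀ h' h0', fr (fr S h h0) h' h0' = S := by
  obtain ⟨hS0, hSsum⟩ := mem_dp.1 hS
  by_cases hc : S.min' h ≤ rr S h h0
  · obtain ⟨c1, c2, c3, c4, c5, c6⟩ := caseA h h0 hE hc
    refine ⟨mem_dp.2 ⟨c3, by rw [c1, hSsum]⟩, c5, ?_, ?_, c6⟩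
    · rw [← c2, pow_succ]; ring
    · intro he
      rw [he] at c2
      omega
  · obtain ⟨c1, c2, c3, c4, c5, c6⟩ := caseB h h0 hE hc
    refine ⟨mem_dp.2 ⟨c3, by rw [c1, hSsum]⟩, c5, ?_, ?_, c6⟩
    · rw [c2, pow_succ]; ring
    · intro he
      rw [he] at c2
      omega

/-- `p_e(n) - p_o(n) = (-1)^m` if `n = m(3m∓1)/2` for some `m ≥ 1`, and `0` otherwise. -/
theorem stmt_3 (n : ℕ) (hn : 1 ≤ n) :
    (∀ m : ℕ, 1 ≤ m → (n = m * (3 * m - 1) / 2 ∨ n = m * (3 * m + 1) / 2) →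
      (pe n : ℤ) - po n = (-1) ^ m) ∧
    ((∀ m : ℕ, 1 ≤ m → n ≠ m * (3 * m - 1) / 2 ∧ n ≠ m * (3 * m + 1) / 2) →
      (pe n : ℤ) - po n = 0) := by
  classical
  -- signed sum identity
  have key : (pe n : ℤ) - po n = ∑ S ∈ distinctPartitions n, (-1:ℤ)^S.card := by
    rw [← Finset.sum_filter_add_sum_filter_not (distinctPartitions n)
      (fun S => Even S.card) (fun S => (-1:ℤ)^S.card)]
    have h1 : ∑ S ∈ (distinctPartitions n).filter (fun S => Even S.card),
        (-1:ℤ)^S.card = (pe n : ℤ) := by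
      rw [Finset.sum_congr rfl (fun S hS => (Finset.mem_filter.1 hS).2.neg_one_pow),
        Finset.sum_const, nsmul_eq_mul, mul_one, pe]
    have h2 : ∑ S ∈ (distinctPartitions n).filter (fun S => ¬ Even S.card),
        (-1:ℤ)^S.card = -(po n : ℤ) := by
      have e : (distinctPartitions n).filter (fun S => ¬ Even S.card)
          = (distinctPartitions n).filter (fun S => Odd S.card) := by
        apply Finset.filter_congr
        intro S _
        exact Nat.not_even_iff_odd
      rw [e, Finset.sum_congr rfl (fun S hS => (Finset.mem_filter.1 hS).2.neg_one_pow),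
        Finset.sum_const, nsmul_eq_mul, po]
      ring
    rw [h1, h2]
    ring
  -- the involution kills the non-exceptional part
  have hrest : ∑ S ∈ (distinctPartitions n).filter (fun S => ¬ ExP S),
      (-1:ℤ)^S.card = 0 := by
    refine Finset.sum_involution
      (fun S hS => fr S (dp_nonempty hn (Finset.mem_filter.1 hS).1)
        (mem_dp.1 (Finset.mem_filter.1 hS).1).1) ?_ ?_ ?_ ?_
    · intro S hS
      obtain ⟨hSD, hSE⟩ := Finset.mem_filter.1 hS
      exact (fr_main hn hSD hSE _ _).2.2.1
    · intro S hS _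
      obtain ⟨hSD, hSE⟩ := Finset.mem_filter.1 hS
      exact (fr_main hn hSD hSE _ _).2.2.2.1
    · intro S hS
      obtain ⟨hSD, hSE⟩ := Finset.mem_filter.1 hS
      exact Finset.mem_filter.2 ⟨(fr_main hn hSD hSE _ _).1, (fr_main hn hSD hSE _ _).2.1⟩
    · intro S hS
      obtain ⟨hSD, hSE⟩ := Finset.mem_filter.1 hS
      exact (fr_main hn hSD hSE _ _).2.2.2.2 _ _
  have hsplit : (pe n : ℤ) - po n
      = ∑ S ∈ (distinctPartitions n).filter ExP, (-1:ℤ)^S.card := by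
    rw [key, ← Finset.sum_filter_add_sum_filter_not (distinctPartitions n) ExP, hrest, add_zero]
  constructor
  · rintro m hm (hd | hd)
    · have h2n : 2 * n = m * (3 * m - 1) := by
        obtain ⟨t, ht⟩ := pent_even1 hm
        omega
      have hfil : (distinctPartitions n).filter ExP = {Finset.Icc m (2*m-1)} := by
        apply Finset.eq_singleton_iff_unique_mem.2
        constructor
        · refine Finset.mem_filter.2 ⟨mem_dp.2 ⟨?_, ?_⟩, ⟨m, hm, Or.inl rfl⟩⟩
          · simp [Finset.mem_Icc]; omega
          · have := sum_Icc1 hm; omega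
        · intro T hT
          obtain ⟨hTD, k, hk, hc | hc⟩ := Finset.mem_filter.1 hT
          · have hsum : T.sum id = n := (mem_dp.1 hTD).2
            rw [hc] at hsum
            have := sum_Icc1 hk
            have hkm : k = m := pent_inj1 hk hm (by omega)
            rw [hc, hkm]
          · exfalso
            have hsum : T.sum id = n := (mem_dp.1 hTD).2
            rw [hc] at hsum
            have := sum_Icc2 hk
            exact pent_ne hm hk (by omega)
      rw [hsplit, hfil, Finset.sum_singleton, card_Icc1 hm]
    · have h2n : 2 * n = m * (3 * m + 1) := by
        obtain ⟨t, ht⟩ := pent_even2 hm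
        omega
      have hfil : (distinctPartitions n).filter ExP = {Finset.Icc (m+1) (2*m)} := by
        apply Finset.eq_singleton_iff_unique_mem.2
        constructor
        · refine Finset.mem_filter.2 ⟨mem_dp.2 ⟨?_, ?_⟩, ⟨m, hm, Or.inr rfl⟩⟩
          · simp [Finset.mem_Icc]
          · have := sum_Icc2 hm; omega
        · intro T hT
          obtain ⟨hTD, k, hk, hc | hc⟩ := Finset.mem_filter.1 hT
          · exfalso
            have hsum : T.sum id = n := (mem_dp.1 hTD).2
            rw [hc] at hsum
            have := sum_Icc1 hk
            exact pent_ne hk hm (by omega)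
          · have hsum : T.sum id = n := (mem_dp.1 hTD).2
            rw [hc] at hsum
            have := sum_Icc2 hk
            have hkm : k = m := pent_inj2 hk hm (by omega)
            rw [hc, hkm]
      rw [hsplit, hfil, Finset.sum_singleton, card_Icc2 hm]
  · intro H
    have hfil : (distinctPartitions n).filter ExP = ∅ := by
      apply Finset.eq_empty_iff_forall_notMem.2
      intro T hT
      obtain ⟨hTD, k, hk, hc | hc⟩ := Finset.mem_filter.1 hT
      · have hsum : T.sum id = n := (mem_dp.1 hTD).2
        rw [hc] at hsum
        have h1 := sum_Icc1 hk
        exact (H k hk).1 (by omega)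
      · have hsum : T.sum id = n := (mem_dp.1 hTD).2
        rw [hc] at hsum
        have h1 := sum_Icc2 hk
        exact (H k hk).2 (by omega)
    rw [hsplit, hfil, Finset.sum_empty]
end

section
/- Euler's pentagonal number theorem: the formal power series product ∏_{n≥1} (1 - q^n) equals ∑_{m=-∞}^{∞} (-1)^m q^{m(3m-1)/2}. -/
open Finset

lemma coeff_prod_expand (N : ℕ) :
    PowerSeries.coeff (R := ℤ) N (∏ n ∈ Finset.Icc 1 N, (1 - PowerSeries.X ^ n)) =
      ∑ S ∈ ((Finset.Icc 1 N).powerset.filter fun S => S.sum id = N), (-1 : ℤ) ^ S.card := by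
  have h1 : ∀ n ∈ Finset.Icc 1 N, (1 - PowerSeries.X ^ n : PowerSeries ℤ)
      = (-PowerSeries.X ^ n) + 1 := by intros; ring
  rw [Finset.prod_congr rfl h1, Finset.prod_add, map_sum, Finset.sum_filter]
  refine Finset.sum_congr rfl ?_
  intro t ht
  rw [Finset.prod_const_one, mul_one]
  have h2 : (∏ i ∈ t, -PowerSeries.X ^ i : PowerSeries ℤ)
      = PowerSeries.C (R := ℤ) ((-1)^t.card) * PowerSeries.X ^ (t.sum id) := by
    calc ∏ i ∈ t, -PowerSeries.X ^ i
        = ∏ i ∈ t, ((-1) * PowerSeries.X ^ (id i) : PowerSeries ℤ) := by simp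
      _ = (∏ _i ∈ t, (-1 : PowerSeries ℤ)) * ∏ i ∈ t, PowerSeries.X ^ (id i) :=
          Finset.prod_mul_distrib
      _ = PowerSeries.C (R := ℤ) ((-1)^t.card) * PowerSeries.X ^ (t.sum id) := by
          rw [Finset.prod_const, Finset.prod_pow_eq_pow_sum, map_pow, map_neg, map_one]
  rw [h2, PowerSeries.coeff_C_mul, PowerSeries.coeff_X_pow]
  by_cases h : t.sum id = N
  · rw [if_pos h.symm, if_pos h, mul_one]
  · rw [if_neg (fun hh => h hh.symm), if_neg h, mul_zero]

lemma pent_two {m : ℤ} {N : ℕ} (h : (N:ℤ) = m * (3*m-1)/2) : 2*(N:ℤ) = m*(3*m-1) := by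
  have h2 : (2:ℤ) ∣ m*(3*m-1) := by
    rcases Int.even_or_odd m with he | ho
    · exact Dvd.dvd.mul_right he.two_dvd _
    · have : Even (3*m-1) := by rcases ho with ⟨t,ht⟩; exact ⟨3*t+1, by omega⟩
      exact Dvd.dvd.mul_left this.two_dvd _
  obtain ⟨c, hc⟩ := h2
  rw [hc] at h ⊢; omega

lemma pent_inj {a b : ℤ} (h : a*(3*a-1) = b*(3*b-1)) : a = b := by
  have h2 : (a - b) * (3*(a+b) - 1) = 0 := by linear_combination h
  rcases mul_eq_zero.1 h2 with h3 | h3 <;> omega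

lemma stair_sum1 (t : ℕ) (ht : 1 ≤ t) : 2 * (Finset.Icc t (2*t-1)).sum id = t*(3*t-1) := by
  have hIcc : Finset.Icc t (2*t-1) = Finset.Ico t (2*t) := by ext x; simp only [Finset.mem_Icc, Finset.mem_Ico]; omega
  have hab : (∑ i ∈ Finset.Ico 0 t, i) + ∑ i ∈ Finset.Ico t (2*t), i = ∑ i ∈ Finset.Ico 0 (2*t), i :=
    Finset.sum_Ico_consecutive id (Nat.zero_le t) (by omega)
  have ha : (∑ i ∈ Finset.range t, i) * 2 = t * (t-1) := Finset.sum_range_id_mul_two t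
  have hb : (∑ i ∈ Finset.range (2*t), i) * 2 = (2*t) * (2*t-1) := Finset.sum_range_id_mul_two (2*t)
  rw [← Finset.range_eq_Ico, ← Finset.range_eq_Ico] at hab
  rw [hIcc]
  have hs : (Finset.Ico t (2*t)).sum id = ∑ i ∈ Finset.Ico t (2*t), i := rfl
  rw [hs]
  have e1 : (1:ℕ) ≤ 2*t := by omega
  have e2 : (1:ℕ) ≤ 3*t := by omega
  zify [ht, e1, e2] at ha hb hab ⊢
  nlinarith [hab, ha, hb]



def IsStair (S : Finset ℕ) : Prop :=
  ∃ t : ℕ, 1 ≤ t ∧ (S = Finset.Icc t (2*t-1) ∨ S = Finset.Icc (t+1) (2*t))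

def franklin (S : Finset ℕ) : Finset ℕ :=
  if h : S.Nonempty then
    if S.min' h ≤ ((S.filter fun x => Finset.Icc x (S.max' h) ⊆ S).card) then
      insert (S.max' h + 1) ((S.erase (S.min' h)).erase (S.max' h + 1 - S.min' h))
    else
      insert ((S.filter fun x => Finset.Icc x (S.max' h) ⊆ S).card)
        (insert (S.max' h - (S.filter fun x => Finset.Icc x (S.max' h) ⊆ S).card)
          (S.erase (S.max' h)))
  else ∅

lemma franklin_if {S : Finset ℕ} (h : S.Nonempty)
    (hle : S.min' h ≤ ((S.filter fun x => Finset.Icc x (S.max' h) ⊆ S).card)) :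
    franklin S = insert (S.max' h + 1)
      ((S.erase (S.min' h)).erase (S.max' h + 1 - S.min' h)) := by
  rw [franklin, dif_pos h, if_pos hle]

lemma franklin_else {S : Finset ℕ} (h : S.Nonempty)
    (hgt : ¬ S.min' h ≤ ((S.filter fun x => Finset.Icc x (S.max' h) ⊆ S).card)) :
    franklin S = insert ((S.filter fun x => Finset.Icc x (S.max' h) ⊆ S).card)
        (insert (S.max' h - (S.filter fun x => Finset.Icc x (S.max' h) ⊆ S).card)
          (S.erase (S.max' h))) := by
  rw [franklin, dif_pos h, if_neg hgt]

lemma run_eq (S : Finset ℕ) (h : S.Nonempty) :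
    ∃ b, b ∈ S ∧ b ≤ S.max' h ∧
      S.filter (fun x => Finset.Icc x (S.max' h) ⊆ S) = Finset.Icc b (S.max' h) := by
  set M := S.max' h with hM
  set R := S.filter (fun x => Finset.Icc x M ⊆ S) with hRdef
  have hMR : M ∈ R := by
    rw [hRdef, Finset.mem_filter]
    refine ⟨S.max'_mem h, ?_⟩
    intro y hy
    rw [Finset.mem_Icc] at hy
    have : y = M := le_antisymm hy.2 hy.1
    rw [this]; exact S.max'_mem h
  have hRne : R.Nonempty := ⟨M, hMR⟩
  refine ⟨R.min' hRne, (Finset.mem_filter.1 (R.min'_mem hRne)).1,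
    S.le_max' _ (Finset.mem_filter.1 (R.min'_mem hRne)).1, ?_⟩
  ext x
  rw [Finset.mem_Icc]
  constructor
  · intro hx
    exact ⟨R.min'_le _ hx, S.le_max' _ (Finset.mem_filter.1 hx).1⟩
  · intro ⟨h1, h2⟩
    have hbmem := Finset.mem_filter.1 (R.min'_mem hRne)
    rw [hRdef, Finset.mem_filter]
    exact ⟨hbmem.2 (Finset.mem_Icc.2 ⟨h1, h2⟩),
      fun y hy => hbmem.2 (Finset.Icc_subset_Icc h1 le_rfl hy)⟩

lemma franklin_main {S : Finset ℕ} (h0 : 0 ∉ S) (hne : S.Nonempty) (hst : ¬ IsStair S) :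
    0 ∉ franklin S ∧ (franklin S).sum id = S.sum id ∧ ¬ IsStair (franklin S) ∧
      franklin (franklin S) = S ∧
      ((franklin S).card = S.card + 1 ∨ S.card = (franklin S).card + 1) := by
  obtain ⟨b, hbS, hbM, hRb⟩ := run_eq S hne
  set M := S.max' hne with hMdef
  set s := S.min' hne with hsdef
  set k := (S.filter fun x => Finset.Icc x M ⊆ S).card with hkdef
  have hkIcc : k = M + 1 - b := by rw [hkdef, hRb, Nat.card_Icc]
  have hb1 : 1 ≤ b := Nat.pos_of_ne_zero (fun h => h0 (h ▸ hbS))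
  have hkb : k + b = M + 1 := by omega
  have hs1 : 1 ≤ s := Nat.pos_of_ne_zero (fun h => h0 (h ▸ S.min'_mem hne))
  have hsS : s ∈ S := S.min'_mem hne
  have hMS : M ∈ S := S.max'_mem hne
  have hsb : s ≤ b := S.min'_le _ hbS
  have hsM : s ≤ M := le_trans hsb hbM
  have hk1 : 1 ≤ k := by omega
  have hIccS : Finset.Icc b M ⊆ S := hRb ▸ Finset.filter_subset _ S
  have hub : ∀ x ∈ S, x ≤ M := fun x hx => S.le_max' x hx
  have hlb : ∀ x ∈ S, s ≤ x := fun x hx => S.min'_le x hx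
  have hbm1 : b - 1 ∉ S := by
    intro hmem
    have hb2 : 2 ≤ b := by
      rcases Nat.lt_or_ge b 2 with h | h
      · interval_cases b
        · exact absurd hmem h0
      · exact h
    have : b - 1 ∈ Finset.Icc b M := by
      rw [← hRb, Finset.mem_filter]
      refine ⟨hmem, ?_⟩
      intro y hy
      rw [Finset.mem_Icc] at hy
      rcases Nat.eq_or_lt_of_le hy.1 with h | h
      · rwa [← h]
      · exact hIccS (Finset.mem_Icc.2 ⟨by omega, hy.2⟩)
    rw [Finset.mem_Icc] at this
    omega
  have hsbeq : s = b → S = Finset.Icc b M := by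
    intro h
    apply Finset.Subset.antisymm
    · intro x hx
      exact Finset.mem_Icc.2 ⟨h ▸ hlb x hx, hub x hx⟩
    · exact hIccS
  by_cases hcase : s ≤ k
  case pos =>
    -- Case A : remove smallest part, lengthen the top run by one at the top
    have hnsk : ¬(s = b ∧ s = k) := by
      rintro ⟨h1, h2⟩
      apply hst
      refine ⟨s, hs1, Or.inl ?_⟩
      have hM2 : M = 2*s - 1 := by omega
      rw [hsbeq h1, ← h1, hM2]
    have hMge : 2*s ≤ M := by
      by_cases h1 : s = b
      · have h2 : s ≠ k := fun h2 => hnsk ⟨h1, h2⟩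
        omega
      · have : s < b := lt_of_le_of_ne hsb h1
        omega
    set w := M + 1 - s with hwdef
    have hsw : s < w := by omega
    have hwS : w ∈ S := hIccS (Finset.mem_Icc.2 ⟨by omega, by omega⟩)
    have hM1S : M + 1 ∉ S := fun h => by have := hub _ h; omega
    set S' := insert (M+1) ((S.erase s).erase w) with hS'def
    have hfr : franklin S = S' := franklin_if hne hcase
    have hmem' : ∀ x, x ∈ S' ↔ (x = M+1 ∨ (x ≠ s ∧ x ≠ w ∧ x ∈ S)) := by
      intro x
      simp only [hS'def, Finset.mem_insert, Finset.mem_erase]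
      tauto
    have hne' : S'.Nonempty := ⟨M+1, (hmem' _).2 (Or.inl rfl)⟩
    have hub' : ∀ x ∈ S', x ≤ M+1 := by
      intro x hx
      rcases (hmem' x).1 hx with h | ⟨_, _, h⟩
      · omega
      · exact le_trans (hub x h) (by omega)
    have hmaxS' : S'.max' hne' = M + 1 :=
      le_antisymm (Finset.max'_le _ _ _ hub') (Finset.le_max' _ _ ((hmem' _).2 (Or.inl rfl)))
    have hup : ∀ y, w + 1 ≤ y → y ≤ M + 1 → y ∈ S' := by
      intro y hy1 hy2
      rcases Nat.eq_or_lt_of_le hy2 with h | h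
      · exact (hmem' _).2 (Or.inl h)
      · refine (hmem' _).2 (Or.inr ⟨by omega, by omega, hIccS (Finset.mem_Icc.2 ⟨by omega, by omega⟩)⟩)
    have hwnS' : w ∉ S' := by
      intro h
      rcases (hmem' w).1 h with h | ⟨_, h2, _⟩
      · omega
      · exact h2 rfl
    have hsnS' : s ∉ S' := by
      intro h
      rcases (hmem' s).1 h with h | ⟨h2, _, _⟩
      · omega
      · exact h2 rfl
    have hlb' : ∀ x ∈ S', s + 1 ≤ x := by
      intro x hx
      rcases (hmem' x).1 hx with h | ⟨h1, _, h3⟩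
      · omega
      · have := hlb x h3; omega
    have hRS' : S'.filter (fun x => Finset.Icc x (M+1) ⊆ S') = Finset.Icc (w+1) (M+1) := by
      ext x
      rw [Finset.mem_filter, Finset.mem_Icc]
      constructor
      · rintro ⟨hxS', hsub⟩
        refine ⟨?_, hub' x hxS'⟩
        by_contra hcon
        exact hwnS' (hsub (Finset.mem_Icc.2 ⟨by omega, by omega⟩))
      · rintro ⟨h1, h2⟩
        exact ⟨hup x h1 h2, fun y hy => hup y (le_trans h1 (Finset.mem_Icc.1 hy).1)
          (Finset.mem_Icc.1 hy).2⟩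
    have hkS' : (S'.filter fun x => Finset.Icc x (S'.max' hne') ⊆ S').card = s := by
      simp only [hmaxS']
      rw [hRS', Nat.card_Icc]
      omega
    have hcond : ¬ S'.min' hne' ≤ (S'.filter fun x => Finset.Icc x (S'.max' hne') ⊆ S').card := by
      rw [hkS']
      have := hlb' _ (S'.min'_mem hne')
      omega
    have hfr2 := franklin_else hne' hcond
    rw [hkS', hmaxS'] at hfr2
    have hES : S'.erase (M+1) = (S.erase s).erase w := by
      rw [hS'def, Finset.erase_insert]
      intro hcon
      exact hM1S (Finset.mem_of_mem_erase (Finset.mem_of_mem_erase hcon))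
    have hback : insert s (insert (M+1-s) (S'.erase (M+1))) = S := by
      rw [hES, ← hwdef]
      rw [Finset.insert_erase (Finset.mem_erase.2 ⟨by omega, hwS⟩)]
      rw [Finset.insert_erase hsS]
    have hffS : franklin (franklin S) = S := by
      rw [hfr, hfr2, ← hback]
    -- sums
    have hsum : S'.sum id = S.sum id := by
      have e0 : w ∈ S.erase s := Finset.mem_erase.2 ⟨by omega, hwS⟩
      have e1 : ((S.erase s).erase w).sum id + w = (S.erase s).sum id :=
        Finset.sum_erase_add _ _ e0
      have e2 : (S.erase s).sum id + s = S.sum id := Finset.sum_erase_add _ _ hsS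
      have e3 : S'.sum id = (M+1) + ((S.erase s).erase w).sum id := by
        rw [hS'def, Finset.sum_insert (fun hcon =>
          hM1S (Finset.mem_of_mem_erase (Finset.mem_of_mem_erase hcon)))]
        rfl
      omega
    -- cards
    have hcard : S.card = S'.card + 1 := by
      have e0 : w ∈ S.erase s := Finset.mem_erase.2 ⟨by omega, hwS⟩
      have e1 : ((S.erase s).erase w).card + 1 = (S.erase s).card :=
        Finset.card_erase_add_one e0
      have e2 : (S.erase s).card + 1 = S.card := Finset.card_erase_add_one hsS
      have e3 : S'.card = ((S.erase s).erase w).card + 1 := by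
        rw [hS'def, Finset.card_insert_of_notMem]
        intro hcon
        exact hM1S (Finset.mem_of_mem_erase (Finset.mem_of_mem_erase hcon))
      omega
    have h0' : 0 ∉ S' := by
      intro h
      rcases (hmem' 0).1 h with h | ⟨_, _, h⟩
      · omega
      · exact h0 h
    have hstair' : ¬ IsStair S' := by
      rintro ⟨t, ht1, hS'eq | hS'eq⟩
      · -- S' = Icc t (2t-1)
        have m1 : M+1 ∈ Finset.Icc t (2*t-1) := hS'eq ▸ (hmem' _).2 (Or.inl rfl)
        rw [Finset.mem_Icc] at m1
        have m2 : (2*t-1 : ℕ) ∈ S' := hS'eq ▸ Finset.mem_Icc.2 ⟨by omega, le_rfl⟩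
        have m2' := hub' _ m2
        have m3 : w ∉ Finset.Icc t (2*t-1) := hS'eq ▸ hwnS'
        rw [Finset.mem_Icc] at m3
        have m4 : s ∉ Finset.Icc t (2*t-1) := hS'eq ▸ hsnS'
        rw [Finset.mem_Icc] at m4
        have m5 : w+1 ∈ Finset.Icc t (2*t-1) := hS'eq ▸ hup (w+1) le_rfl (by omega)
        rw [Finset.mem_Icc] at m5
        omega
      · -- S' = Icc (t+1) (2t)
        have m1 : M+1 ∈ Finset.Icc (t+1) (2*t) := hS'eq ▸ (hmem' _).2 (Or.inl rfl)
        rw [Finset.mem_Icc] at m1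
        have m2 : (2*t : ℕ) ∈ S' := hS'eq ▸ Finset.mem_Icc.2 ⟨by omega, le_rfl⟩
        have m2' := hub' _ m2
        have m3 : w ∉ Finset.Icc (t+1) (2*t) := hS'eq ▸ hwnS'
        rw [Finset.mem_Icc] at m3
        have m4 : s ∉ Finset.Icc (t+1) (2*t) := hS'eq ▸ hsnS'
        rw [Finset.mem_Icc] at m4
        have m5 : t ∉ S' := hS'eq ▸ (by rw [Finset.mem_Icc]; omega)
        have m6 : ¬ (w + 1 ≤ t ∧ t ≤ M + 1) := fun ⟨a, c⟩ => m5 (hup t a c)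
        omega
    rw [hfr]
    refine ⟨h0', hsum, hstair', ?_, Or.inr hcard⟩
    rw [← hfr]
    exact hffS
  case neg =>
    have hks : k < s := Nat.lt_of_not_le hcase
    have hbne : b ≠ k + 1 := by
      intro h
      have hsbb : s = b := by omega
      apply hst
      refine ⟨k, hk1, Or.inr ?_⟩
      have hM2 : M = 2*k := by omega
      rw [hsbeq hsbb, h, hM2]
    have hkMk : k < M - k := by omega
    have hMkb : M - k = b - 1 := by omega
    have hMknS : M - k ∉ S := hMkb ▸ hbm1
    have hknS : k ∉ S := fun h => by have := hlb _ h; omega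
    set S' := insert k (insert (M-k) (S.erase M)) with hS'def
    have hfr : franklin S = S' := franklin_else hne hcase
    have hmem' : ∀ x, x ∈ S' ↔ (x = k ∨ x = M - k ∨ (x ≠ M ∧ x ∈ S)) := by
      intro x
      simp only [hS'def, Finset.mem_insert, Finset.mem_erase]
    have hne' : S'.Nonempty := ⟨k, (hmem' _).2 (Or.inl rfl)⟩
    have hub' : ∀ x ∈ S', x ≤ M - 1 := by
      intro x hx
      rcases (hmem' x).1 hx with h | h | ⟨h1, h2⟩
      · omega
      · omega
      · have := hub x h2; omega
    have hM1S' : M - 1 ∈ S' := by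
      rcases Nat.eq_or_lt_of_le hk1 with h | h
      · exact (hmem' _).2 (Or.inr (Or.inl (by omega)))
      · exact (hmem' _).2 (Or.inr (Or.inr ⟨by omega,
          hIccS (Finset.mem_Icc.2 ⟨by omega, by omega⟩)⟩))
    have hmaxS' : S'.max' hne' = M - 1 :=
      le_antisymm (Finset.max'_le _ _ _ hub') (Finset.le_max' _ _ hM1S')
    have hlb' : ∀ x ∈ S', k ≤ x := by
      intro x hx
      rcases (hmem' x).1 hx with h | h | ⟨_, h2⟩
      · omega
      · omega
      · have := hlb x h2; omega
    have hminS' : S'.min' hne' = k :=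
      le_antisymm (Finset.min'_le _ _ ((hmem' _).2 (Or.inl rfl))) (Finset.le_min' _ _ _ hlb')
    have hup' : ∀ y, M - k ≤ y → y ≤ M - 1 → y ∈ S' := by
      intro y h1 h2
      rcases Nat.eq_or_lt_of_le h1 with h | h
      · exact (hmem' _).2 (Or.inr (Or.inl h.symm))
      · exact (hmem' _).2 (Or.inr (Or.inr ⟨by omega,
          hIccS (Finset.mem_Icc.2 ⟨by omega, by omega⟩)⟩))
    have hsub' : Finset.Icc (M-k) (M-1) ⊆ S'.filter (fun x => Finset.Icc x (M-1) ⊆ S') := by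
      intro x hx
      rw [Finset.mem_Icc] at hx
      rw [Finset.mem_filter]
      exact ⟨hup' x hx.1 hx.2, fun y hy => hup' y (le_trans hx.1 (Finset.mem_Icc.1 hy).1)
        (Finset.mem_Icc.1 hy).2⟩
    have hcond : S'.min' hne' ≤ (S'.filter fun x => Finset.Icc x (S'.max' hne') ⊆ S').card := by
      simp only [hmaxS', hminS']
      have := Finset.card_le_card hsub'
      rw [Nat.card_Icc] at this
      omega
    have hfr2 := franklin_if hne' hcond
    rw [hminS', hmaxS'] at hfr2
    have hM11 : M - 1 + 1 = M := by omega
    rw [hM11] at hfr2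
    have hE1 : S'.erase k = insert (M-k) (S.erase M) := by
      rw [hS'def]
      apply Finset.erase_insert
      intro h
      rcases Finset.mem_insert.1 h with h | h
      · omega
      · exact hknS (Finset.mem_of_mem_erase h)
    have hE2 : (insert (M-k) (S.erase M)).erase (M-k) = S.erase M := by
      apply Finset.erase_insert
      intro h
      exact hMknS (Finset.mem_of_mem_erase h)
    have hffS : franklin (franklin S) = S := by
      rw [hfr, hfr2, hE1, hE2, Finset.insert_erase hMS]
    have hnm1 : (M - k) ∉ S.erase M := fun h => hMknS (Finset.mem_of_mem_erase h)
    have hnm2 : k ∉ insert (M-k) (S.erase M) := by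
      intro h
      rcases Finset.mem_insert.1 h with h | h
      · omega
      · exact hknS (Finset.mem_of_mem_erase h)
    have hsum : S'.sum id = S.sum id := by
      have e1 : (S.erase M).sum id + M = S.sum id := Finset.sum_erase_add _ _ hMS
      have e2 : S'.sum id = k + ((M - k) + (S.erase M).sum id) := by
        rw [hS'def, Finset.sum_insert hnm2, Finset.sum_insert hnm1]; rfl
      omega
    have hcard : S'.card = S.card + 1 := by
      have e1 : (S.erase M).card + 1 = S.card := Finset.card_erase_add_one hMS
      have e2 : S'.card = ((S.erase M).card + 1) + 1 := by
        rw [hS'def, Finset.card_insert_of_notMem hnm2, Finset.card_insert_of_notMem hnm1]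
      omega
    have h0' : 0 ∉ S' := by
      intro h
      rcases (hmem' 0).1 h with h | h | ⟨_, h2⟩
      · omega
      · omega
      · exact h0 h2
    have hstair' : ¬ IsStair S' := by
      rintro ⟨t, ht1, hS'eq | hS'eq⟩
      · have m1 : M-1 ∈ Finset.Icc t (2*t-1) := hS'eq ▸ hM1S'
        rw [Finset.mem_Icc] at m1
        have m2 : (2*t-1 : ℕ) ∈ S' := hS'eq ▸ Finset.mem_Icc.2 ⟨by omega, le_rfl⟩
        have m2' := hub' _ m2
        have m3 : k ∈ Finset.Icc t (2*t-1) := hS'eq ▸ (hmem' _).2 (Or.inl rfl)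
        rw [Finset.mem_Icc] at m3
        have m4 : (t:ℕ) ∈ S' := hS'eq ▸ Finset.mem_Icc.2 ⟨le_rfl, by omega⟩
        rcases (hmem' t).1 m4 with h | h | ⟨_, h2⟩
        · omega
        · omega
        · have := hlb _ h2; omega
      · have m1 : M-1 ∈ Finset.Icc (t+1) (2*t) := hS'eq ▸ hM1S'
        rw [Finset.mem_Icc] at m1
        have m2 : (2*t : ℕ) ∈ S' := hS'eq ▸ Finset.mem_Icc.2 ⟨by omega, le_rfl⟩
        have m2' := hub' _ m2
        have m3 : k ∈ Finset.Icc (t+1) (2*t) := hS'eq ▸ (hmem' _).2 (Or.inl rfl)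
        rw [Finset.mem_Icc] at m3
        have m4 : (t+1 : ℕ) ∈ S' := hS'eq ▸ Finset.mem_Icc.2 ⟨le_rfl, by omega⟩
        rcases (hmem' (t+1)).1 m4 with h | h | ⟨_, h2⟩
        · omega
        · omega
        · have := hlb _ h2; omega
    rw [hfr]
    refine ⟨h0', hsum, hstair', ?_, Or.inl hcard⟩
    rw [← hfr]
    exact hffS


lemma mem_le_sum {S : Finset ℕ} {x : ℕ} (hx : x ∈ S) : x ≤ S.sum id :=
  Finset.single_le_sum (fun i _ => Nat.zero_le (id i)) hx

lemma stair_sum2 (t : ℕ) (ht : 1 ≤ t) : 2 * (Finset.Icc (t+1) (2*t)).sum id = t*(3*t+1) := by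
  have hIcc : Finset.Icc (t+1) (2*t) = Finset.Ico (t+1) (2*t+1) := by ext x; simp
  have hab : (∑ i ∈ Finset.Ico 0 (t+1), i) + ∑ i ∈ Finset.Ico (t+1) (2*t+1), i
      = ∑ i ∈ Finset.Ico 0 (2*t+1), i := Finset.sum_Ico_consecutive id (Nat.zero_le _) (by omega)
  have ha : (∑ i ∈ Finset.range (t+1), i) * 2 = (t+1) * t := Finset.sum_range_id_mul_two (t+1)
  have hb : (∑ i ∈ Finset.range (2*t+1), i) * 2 = (2*t+1) * (2*t) := Finset.sum_range_id_mul_two (2*t+1)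
  rw [← Finset.range_eq_Ico, ← Finset.range_eq_Ico] at hab
  rw [hIcc]
  have hs : (Finset.Ico (t+1) (2*t+1)).sum id = ∑ i ∈ Finset.Ico (t+1) (2*t+1), i := rfl
  rw [hs]
  zify at ha hb hab ⊢
  nlinarith [hab, ha, hb]

lemma cast1 (t : ℕ) (ht : 1 ≤ t) : ((t*(3*t-1):ℕ):ℤ) = (t:ℤ)*(3*(t:ℤ)-1) := by
  push_cast [Nat.cast_sub (show (1:ℕ) ≤ 3*t by omega)]
  ring

lemma cast2 (t : ℕ) : ((t*(3*t+1):ℕ):ℤ) = (-(t:ℤ))*(3*(-(t:ℤ))-1) := by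
  push_cast; ring

lemma stair_int {S : Finset ℕ} (h : IsStair S) :
    ∃ m' : ℤ, m' ≠ 0 ∧ 2*((S.sum id : ℕ):ℤ) = m'*(3*m'-1) ∧ S.card = m'.natAbs := by
  obtain ⟨t, ht1, rfl | rfl⟩ := h
  · refine ⟨(t:ℤ), by exact_mod_cast (by omega : (t:ℕ) ≠ 0), ?_, ?_⟩
    · rw [show (2:ℤ)*(((Finset.Icc t (2*t-1)).sum id : ℕ):ℤ)
          = ((2*(Finset.Icc t (2*t-1)).sum id : ℕ):ℤ) by push_cast; ring,
        stair_sum1 t ht1, cast1 t ht1]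
    · rw [Nat.card_Icc, Int.natAbs_natCast]; omega
  · refine ⟨-(t:ℤ), by simpa using (by exact_mod_cast (by omega : (t:ℕ) ≠ 0) : (t:ℤ) ≠ 0), ?_, ?_⟩
    · rw [show (2:ℤ)*(((Finset.Icc (t+1) (2*t)).sum id : ℕ):ℤ)
          = ((2*(Finset.Icc (t+1) (2*t)).sum id : ℕ):ℤ) by push_cast; ring,
        stair_sum2 t ht1, cast2 t]
    · rw [Nat.card_Icc, Int.natAbs_neg, Int.natAbs_natCast]; omega

lemma stair_pos {S : Finset ℕ} (h : IsStair S) : 0 ∉ S ∧ S.Nonempty := by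
  obtain ⟨t, ht1, rfl | rfl⟩ := h
  · exact ⟨by rw [Finset.mem_Icc]; omega, ⟨t, Finset.mem_Icc.2 ⟨le_rfl, by omega⟩⟩⟩
  · exact ⟨by rw [Finset.mem_Icc]; omega, ⟨t+1, Finset.mem_Icc.2 ⟨le_rfl, by omega⟩⟩⟩

lemma stair_eq {S T : Finset ℕ} (hS : IsStair S) (hT : IsStair T)
    (hsum : S.sum id = T.sum id) : S = T := by
  obtain ⟨t1, h11, h12⟩ := hS
  obtain ⟨t2, h21, h22⟩ := hT
  rcases h12 with rfl | rfl <;> rcases h22 with rfl | rfl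
  · have e : t1*(3*t1-1) = t2*(3*t2-1) := by
      rw [← stair_sum1 t1 h11, ← stair_sum1 t2 h21, hsum]
    have e2 : (t1:ℤ) = (t2:ℤ) := pent_inj (by rw [← cast1 t1 h11, ← cast1 t2 h21, e])
    have e3 : t1 = t2 := by exact_mod_cast e2
    rw [e3]
  · exfalso
    have e : t1*(3*t1-1) = t2*(3*t2+1) := by
      rw [← stair_sum1 t1 h11, ← stair_sum2 t2 h21, hsum]
    have e2 : (t1:ℤ) = -(t2:ℤ) := pent_inj (by rw [← cast1 t1 h11, ← cast2 t2, e])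
    have e3 : (1:ℤ) ≤ (t1:ℤ) := by exact_mod_cast h11
    have e4 : (1:ℤ) ≤ (t2:ℤ) := by exact_mod_cast h21
    omega
  · exfalso
    have e : t2*(3*t2-1) = t1*(3*t1+1) := by
      rw [← stair_sum1 t2 h21, ← stair_sum2 t1 h11, hsum]
    have e2 : (t2:ℤ) = -(t1:ℤ) := pent_inj (by rw [← cast1 t2 h21, ← cast2 t1, e])
    have e3 : (1:ℤ) ≤ (t1:ℤ) := by exact_mod_cast h11
    have e4 : (1:ℤ) ≤ (t2:ℤ) := by exact_mod_cast h21
    omega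
  · have e : t1*(3*t1+1) = t2*(3*t2+1) := by
      rw [← stair_sum2 t1 h11, ← stair_sum2 t2 h21, hsum]
    have e2 : -(t1:ℤ) = -(t2:ℤ) := pent_inj (by rw [← cast2 t1, ← cast2 t2, e])
    have e3 : t1 = t2 := by exact_mod_cast neg_inj.1 e2
    rw [e3]

/-- Euler's pentagonal number theorem, stated coefficient-wise: the coefficient of `q^N`
in `∏_{n≥1} (1 - q^n)` (which equals that of the finite truncation `∏_{n=1}^{N} (1 - q^n)`)
is `(-1)^m` if `N = m(3m-1)/2` for some `m ∈ ℤ`, and `0` otherwise. -/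
theorem stmt_4 (N : ℕ) :
    (∀ m : ℤ, (N : ℤ) = m * (3 * m - 1) / 2 →
      PowerSeries.coeff (R := ℤ) N (∏ n ∈ Finset.Icc 1 N, (1 - PowerSeries.X ^ n)) =
        (-1) ^ m.natAbs) ∧
    ((¬ ∃ m : ℤ, (N : ℤ) = m * (3 * m - 1) / 2) →
      PowerSeries.coeff (R := ℤ) N (∏ n ∈ Finset.Icc 1 N, (1 - PowerSeries.X ^ n)) = 0) := by
  rcases Nat.eq_zero_or_pos N with rfl | hN
  · constructor
    · intro m hm
      have h2 : 2*((0:ℕ):ℤ) = m*(3*m-1) := pent_two hm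
      have hm0 : m = 0 := pent_inj (a := m) (b := 0) (by push_cast at h2; linarith)
      subst hm0
      rw [Finset.Icc_eq_empty (by omega : ¬ (1:ℕ) ≤ 0), Finset.prod_empty]
      simp
    · intro hcon
      exact absurd ⟨0, by norm_num⟩ hcon
  · have hcoeff := coeff_prod_expand N
    set A := (Finset.Icc 1 N).powerset.filter (fun S => S.sum id = N) with hA
    have hmemA : ∀ S : Finset ℕ, S ∈ A ↔ (S.sum id = N ∧ 0 ∉ S ∧ S.Nonempty) := by
      intro S
      rw [hA, Finset.mem_filter, Finset.mem_powerset]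
      constructor
      · rintro ⟨h1, h2⟩
        refine ⟨h2, fun h => by have := Finset.mem_Icc.1 (h1 h); omega, ?_⟩
        rcases S.eq_empty_or_nonempty with rfl | h
        · rw [Finset.sum_empty] at h2; omega
        · exact h
      · rintro ⟨h1, h2, h3⟩
        refine ⟨fun x hx => Finset.mem_Icc.2 ⟨?_, h1 ▸ mem_le_sum hx⟩, h1⟩
        have : x ≠ 0 := fun h => h2 (h ▸ hx)
        omega
    have hinv : ∀ (B : Finset (Finset ℕ)), B ⊆ A → (∀ S ∈ B, ¬ IsStair S) →
        (∀ S ∈ A, ¬ IsStair S → S ∈ B) → ∑ S ∈ B, (-1:ℤ)^S.card = 0 := by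
      intro B hBA hBstair hABback
      have key : ∀ S ∈ B, 0 ∉ franklin S ∧ (franklin S).sum id = S.sum id ∧
          ¬ IsStair (franklin S) ∧ franklin (franklin S) = S ∧
          ((franklin S).card = S.card + 1 ∨ S.card = (franklin S).card + 1) :=
        fun S hS => franklin_main ((hmemA S).1 (hBA hS)).2.1 ((hmemA S).1 (hBA hS)).2.2
          (hBstair S hS)
      have g_mem : ∀ (S : Finset ℕ) (hS : S ∈ B), franklin S ∈ B := by
        intro S hS
        obtain ⟨k1, k2, k3, k4, k5⟩ := key S hS
        apply hABback _ _ k3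
        rw [hmemA]
        have hsum : (franklin S).sum id = N := k2.trans ((hmemA S).1 (hBA hS)).1
        refine ⟨hsum, k1, ?_⟩
        rcases (franklin S).eq_empty_or_nonempty with h | h
        · rw [h, Finset.sum_empty] at hsum; omega
        · exact h
      refine Finset.sum_involution (fun S _ => franklin S) ?_ ?_ g_mem ?_
      · intro S hS
        obtain ⟨k1, k2, k3, k4, k5⟩ := key S hS
        rcases k5 with h | h
        · rw [h, pow_succ]; ring
        · rw [h, pow_succ]; ring
      · intro S hS _
        obtain ⟨k1, k2, k3, k4, k5⟩ := key S hS
        intro heq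
        have heq' : franklin S = S := heq
        rw [heq'] at k5
        omega
      · intro S hS
        exact (key S hS).2.2.2.1
    constructor
    · intro m hm
      have h2N : 2*(N:ℤ) = m*(3*m-1) := pent_two hm
      have hmne : m ≠ 0 := by rintro rfl; simp at h2N; omega
      obtain ⟨P, hPstair, hPsumN, hPcard⟩ :
          ∃ P : Finset ℕ, IsStair P ∧ P.sum id = N ∧ P.card = m.natAbs := by
        rcases lt_or_gt_of_ne hmne with hneg | hpos
        · set t := m.natAbs with ht
          have ht1 : 1 ≤ t := by omega
          refine ⟨Finset.Icc (t+1) (2*t), ⟨t, ht1, Or.inr rfl⟩, ?_, ?_⟩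
          · have h1 := stair_sum2 t ht1
            have hc : (t:ℤ) = -m := by omega
            have h2 : ((t*(3*t+1) : ℕ):ℤ) = 2*(N:ℤ) := by
              rw [cast2 t, hc]
              linear_combination -h2N
            have h3 : t*(3*t+1) = 2*N := by exact_mod_cast h2
            linarith
          · rw [Nat.card_Icc]; omega
        · set t := m.natAbs with ht
          have ht1 : 1 ≤ t := by omega
          refine ⟨Finset.Icc t (2*t-1), ⟨t, ht1, Or.inl rfl⟩, ?_, ?_⟩
          · have h1 := stair_sum1 t ht1
            have hc : (t:ℤ) = m := by omega
            have h2 : ((t*(3*t-1) : ℕ):ℤ) = 2*(N:ℤ) := by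
              rw [cast1 t ht1, hc]
              linear_combination -h2N
            have h3 : t*(3*t-1) = 2*N := by exact_mod_cast h2
            linarith
          · rw [Nat.card_Icc]; omega
      have hPA : P ∈ A := (hmemA P).2 ⟨hPsumN, (stair_pos hPstair).1, (stair_pos hPstair).2⟩
      rw [hcoeff, ← Finset.sum_erase_add A _ hPA]
      have hzero : ∑ S ∈ A.erase P, (-1:ℤ)^S.card = 0 := by
        apply hinv
        · exact Finset.erase_subset _ _
        · intro S hS hstS
          have hSA := Finset.mem_of_mem_erase hS
          have hSP := (Finset.mem_erase.1 hS).1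
          exact hSP (stair_eq hstS hPstair (by rw [((hmemA S).1 hSA).1, hPsumN]))
        · intro S hSA hnst
          exact Finset.mem_erase.2 ⟨fun h => hnst (h ▸ hPstair), hSA⟩
      rw [hzero, zero_add, hPcard]
    · intro hnon
      rw [hcoeff]
      apply hinv A (subset_refl A)
      · intro S hS hstS
        obtain ⟨m', hm'0, hm', _⟩ := stair_int hstS
        rw [((hmemA S).1 hS).1] at hm'
        exact hnon ⟨m', by omega⟩
      · exact fun S hS _ => hS
end

section
/- With the convention p(m) = 0 for m < 0 and p(0) = 1, the partition function satisfies the recursion p(n) = ∑_{m≥1} (-1)^{m-1} [ p(n - m(3m-1)/2) + p(n - m(3m+1)/2) ] for all n ≥ 1. -/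
/-- The partition function extended to `ℤ` with `p(m) = 0` for `m < 0`
(and `p(0) = 1`, the empty partition). -/
noncomputable def partitionFun (z : ℤ) : ℤ :=
  if 0 ≤ z then (Fintype.card (Nat.Partition z.toNat) : ℤ) else 0


namespace BZ

def G (j : ℤ) : ℤ := (3 * j * j + j) / 2

lemma two_G (j : ℤ) : 2 * G j = 3 * j * j + j := by
  apply Int.mul_ediv_cancel'
  rcases Int.even_or_odd j with ⟨k, hk⟩ | ⟨k, hk⟩
  · exact ⟨3 * k * j + k, by subst hk; ring⟩
  · exact ⟨3 * j * k + 2 * j, by subst hk; ring⟩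

lemma G_sub (j : ℤ) : G (j - 1) = G j - 3 * j + 1 := by
  have h1 := two_G j
  have h2 := two_G (j - 1)
  have h3 : 3 * (j - 1) * (j - 1) + (j - 1) = 3 * j * j + j - (6 * j - 2) := by ring
  linarith

lemma G_add (j : ℤ) : G (j + 1) = G j + 3 * j + 2 := by
  have := G_sub (j + 1); simp at this; linarith

lemma natAbs_le_G (j : ℤ) : (j.natAbs : ℤ) ≤ G j := by
  have h1 := two_G j
  rcases le_or_gt 0 j with h | h
  · have h2 : (j.natAbs : ℤ) = j := Int.natAbs_of_nonneg h
    rcases eq_or_lt_of_le h with rfl | h3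
    · simp [G]
    · have h4 : (0 : ℤ) ≤ j * (3 * j - 1) :=
        mul_nonneg (by omega) (by omega)
      nlinarith
  · have h2 : (j.natAbs : ℤ) = -j := by omega
    have h4 : (0 : ℤ) ≤ (-j) * (-(j + 1)) :=
      mul_nonneg (by omega) (by omega)
    nlinarith

lemma G_nonneg (j : ℤ) : 0 ≤ G j := le_trans (by positivity) (natAbs_le_G j)

def eps (j : ℤ) : ℤ := (-1) ^ j.natAbs

lemma eps_even {j : ℤ} (h : j.natAbs % 2 = 0) : eps j = 1 :=
  Even.neg_one_pow (Nat.even_iff.mpr h)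

lemma eps_odd {j : ℤ} (h : j.natAbs % 2 = 1) : eps j = -1 :=
  Odd.neg_one_pow (Nat.odd_iff.mpr h)

lemma eps_add_one (j : ℤ) : eps (j + 1) = - eps j := by
  rcases Nat.mod_two_eq_zero_or_one j.natAbs with h | h
  · rw [eps_even h, eps_odd (by omega)]
  · rw [eps_odd h, eps_even (by omega)]; norm_num

lemma eps_sub_one (j : ℤ) : eps (j - 1) = - eps j := by
  have := eps_add_one (j - 1); simp at this; linarith

lemma eps_neg (j : ℤ) : eps (-j) = eps j := by simp [eps]

lemma eps_natCast (m : ℕ) : eps m = (-1) ^ m := by simp [eps]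

-- multiset lemmas
lemma sup_mem (M : Multiset ℕ) (h : M ≠ 0) : M.sup ∈ M := by
  induction M using Multiset.induction with
  | empty => simp at h
  | cons a s ih =>
    rw [Multiset.sup_cons]
    rcases eq_or_ne s 0 with rfl | hs
    · simp
    · rcases le_total a s.sup with h' | h'
      · rw [sup_eq_right.2 h']; exact Multiset.mem_cons_of_mem (ih hs)
      · rw [sup_eq_left.2 h']; exact Multiset.mem_cons_self _ _

lemma card_le_sum (M : Multiset ℕ) (h : ∀ i ∈ M, 0 < i) : M.card ≤ M.sum := by
  induction M using Multiset.induction with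
  | empty => simp
  | cons a s ih =>
    simp only [Multiset.card_cons, Multiset.sum_cons]
    have ha := h a (Multiset.mem_cons_self _ _)
    have := ih (fun i hi => h i (Multiset.mem_cons_of_mem hi))
    omega

lemma sum_map_pred (M : Multiset ℕ) (h : ∀ i ∈ M, 0 < i) :
    (M.map (fun m => m - 1)).sum = M.sum - M.card := by
  induction M using Multiset.induction with
  | empty => simp
  | cons a s ih =>
    simp only [Multiset.map_cons, Multiset.sum_cons, Multiset.card_cons]
    have ha := h a (Multiset.mem_cons_self _ _)
    have h2 := ih (fun i hi => h i (Multiset.mem_cons_of_mem hi))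
    have h3 := card_le_sum s (fun i hi => h i (Multiset.mem_cons_of_mem hi))
    omega

lemma sum_map_succ (M : Multiset ℕ) : (M.map (fun m => m + 1)).sum = M.sum + M.card := by
  induction M using Multiset.induction with
  | empty => simp
  | cons a s ih => simp only [Multiset.map_cons, Multiset.sum_cons, Multiset.card_cons]; omega

lemma sum_filter_pos (M : Multiset ℕ) : (M.filter (fun m => 0 < m)).sum = M.sum := by
  induction M using Multiset.induction with
  | empty => simp
  | cons a s ih =>
    rw [Multiset.filter_cons, Multiset.sum_cons]
    by_cases ha : 0 < a
    · simp [ha, ih]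
    · simp only [ha, if_neg, if_false]; simp [ih]; omega

lemma dec_filter_inc (M : Multiset ℕ) :
    (((M.map (fun m => m - 1)).filter (fun m => 0 < m)).map (fun m => m + 1)) =
      M.filter (fun m => 2 ≤ m) := by
  induction M using Multiset.induction with
  | empty => simp
  | cons a s ih =>
    rw [Multiset.map_cons, Multiset.filter_cons, Multiset.filter_cons]
    by_cases ha : 2 ≤ a
    · have : 0 < a - 1 := by omega
      simp only [ha, this, if_pos]
      rw [Multiset.map_add, ih]
      congr 1
      simp; omega
    · have : ¬ 0 < a - 1 := by omega
      simp [ha, this, ih]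

noncomputable def PF (m : ℕ) : Finset (Multiset ℕ) :=
  Finset.univ.image (fun p : Nat.Partition m => p.parts)

lemma mem_PF {m : ℕ} {M : Multiset ℕ} :
    M ∈ PF m ↔ (∀ i ∈ M, 0 < i) ∧ M.sum = m := by
  constructor
  · rintro h
    simp only [PF, Finset.mem_image] at h
    obtain ⟨p, -, rfl⟩ := h
    exact ⟨fun i hi => p.parts_pos hi, p.parts_sum⟩
  · rintro ⟨h1, h2⟩
    simp only [PF, Finset.mem_image]
    exact ⟨⟨M, fun {i} hi => h1 i hi, h2⟩, Finset.mem_univ _, rfl⟩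

lemma card_PF (m : ℕ) : ((PF m).card : ℤ) = Fintype.card (Nat.Partition m) := by
  rw [PF, Finset.card_image_of_injective _ (fun p q h => Nat.Partition.ext h),
    Finset.card_univ]

noncomputable def S (n : ℕ) : Finset ((_ : ℤ) × Multiset ℕ) :=
  ((Finset.Icc (-(n : ℤ)) n).filter (fun j => G j ≤ n)).sigma
    (fun j => PF ((n : ℤ) - G j).toNat)

lemma mem_S {n : ℕ} {x : (_ : ℤ) × Multiset ℕ} :
    x ∈ S n ↔ (∀ i ∈ x.2, 0 < i) ∧ (x.2.sum : ℤ) = (n : ℤ) - G x.1 := by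
  obtain ⟨j, M⟩ := x
  simp only [S, Finset.mem_sigma, Finset.mem_filter, Finset.mem_Icc, mem_PF]
  constructor
  · rintro ⟨⟨⟨h1, h2⟩, h3⟩, h4, h5⟩
    refine ⟨h4, ?_⟩
    rw [h5, Int.toNat_of_nonneg (by omega)]
  · rintro ⟨h1, h2⟩
    have hG : G j ≤ (n : ℤ) := by
      have : (0 : ℤ) ≤ M.sum := Int.natCast_nonneg _
      omega
    have hj := natAbs_le_G j
    exact ⟨⟨⟨by omega, by omega⟩, hG⟩, h1, by omega⟩

def bz (n : ℕ) : (_ : ℤ) × Multiset ℕ → (_ : ℤ) × Multiset ℕ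
  | ⟨j, M⟩ =>
    if (M.sup : ℤ) ≤ (M.card : ℤ) + 3 * j then
      ⟨j - 1, (((M.card : ℤ) + 3 * j - 1).toNat ::ₘ M.map (fun m => m - 1)).filter
        (fun m => 0 < m)⟩
    else
      ⟨j + 1, (M.erase M.sup).map (fun m => m + 1) +
        Multiset.replicate
          ((n : ℤ) - G (j + 1) - (((M.erase M.sup).sum : ℤ) + (M.erase M.sup).card)).toNat 1⟩

lemma G_zero : G 0 = 0 := rfl

lemma stepA {n : ℕ} (hn : 1 ≤ n) {j : ℤ} {M : Multiset ℕ}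
    (hpos : ∀ i ∈ M, 0 < i) (hsum : (M.sum : ℤ) = (n : ℤ) - G j)
    (hc : (M.sup : ℤ) ≤ (M.card : ℤ) + 3 * j) :
    (∀ i ∈ (bz n ⟨j, M⟩).2, 0 < i) ∧ (((bz n ⟨j, M⟩).2.sum : ℤ) = (n : ℤ) - G (j - 1)) ∧
      (bz n ⟨j, M⟩).1 = j - 1 ∧ bz n (bz n ⟨j, M⟩) = ⟨j, M⟩ := by
  have hGsub := G_sub j
  -- basic facts
  have hc0 : 0 ≤ (M.card : ℤ) + 3 * j - 1 := by
    rcases Nat.eq_zero_or_pos M.card with h0 | h0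
    · have hM : M = 0 := Multiset.card_eq_zero.mp h0
      subst hM
      have hGn : G j = (n : ℤ) := by have := hsum.symm; simp at this; omega
      have hj0 : j ≠ 0 := by rintro rfl; rw [G_zero] at hGn; omega
      have hj : 0 ≤ 3 * j := by simpa using hc
      omega
    · obtain ⟨i, hi⟩ := Multiset.card_pos_iff_exists_mem.mp h0
      have h1 : 1 ≤ M.sup := le_trans (hpos i hi) (Multiset.le_sup hi)
      omega
  set c : ℕ := ((M.card : ℤ) + 3 * j - 1).toNat with hcdef
  have hcZ : (c : ℤ) = (M.card : ℤ) + 3 * j - 1 := Int.toNat_of_nonneg hc0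
  set D : Multiset ℕ := (M.map (fun m => m - 1)).filter (fun m => 0 < m) with hDdef
  have hbz1 : bz n ⟨j, M⟩ =
      ⟨j - 1, (c ::ₘ M.map (fun m => m - 1)).filter (fun m => 0 < m)⟩ := by
    simp only [bz, if_pos hc]
    rfl
  set M' : Multiset ℕ := (c ::ₘ M.map (fun m => m - 1)).filter (fun m => 0 < m) with hM'def
  have hsplit : M' = (if 0 < c then {c} else 0) + D := by
    rw [hM'def, Multiset.filter_cons]
  have hposM' : ∀ i ∈ M', 0 < i := fun i hi => (Multiset.mem_filter.mp hi).2
  have hDsum : (D.sum : ℤ) = (M.sum : ℤ) - M.card := by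
    have h1 : D.sum = (M.map (fun m => m - 1)).sum := sum_filter_pos _
    have h2 := sum_map_pred M hpos
    have h3 := card_le_sum M hpos
    omega
  have hM'sum : (M'.sum : ℤ) = (c : ℤ) + D.sum := by
    rw [hsplit]
    split
    · simp
    · have : c = 0 := by omega
      simp [this]
  have hsum' : ((M'.sum : ℤ)) = (n : ℤ) - G (j - 1) := by
    rw [hM'sum]; omega
  have hDcard : D.card ≤ M.card := by
    have h1 : D.card ≤ (M.map (fun m => m - 1)).card :=
      Multiset.card_le_card (Multiset.filter_le _ _)
    simpa using h1
  have hDelt : ∀ b ∈ D, ∃ m ∈ M, b = m - 1 ∧ 0 < b := by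
    intro b hb
    obtain ⟨hb1, hb2⟩ := Multiset.mem_filter.mp hb
    obtain ⟨m, hm, rfl⟩ := Multiset.mem_map.mp hb1
    exact ⟨m, hm, rfl, hb2⟩
  have hMle : ∀ m ∈ M, m ≤ M.sup := fun m hm => Multiset.le_sup hm
  -- the flip condition at the image
  refine ⟨by rw [hbz1]; exact hposM', by rw [hbz1]; exact hsum', by rw [hbz1], ?_⟩
  rw [hbz1]
  by_cases hc1 : 0 < c
  · -- c ≥ 1 : sup M' = c
    have hcM' : c ∈ M' := by
      rw [hM'def]
      exact Multiset.mem_filter.mpr ⟨Multiset.mem_cons_self _ _, hc1⟩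
    have hsupM' : M'.sup = c := by
      apply le_antisymm
      · apply Multiset.sup_le.2
        intro b hb
        rw [hsplit] at hb
        rw [if_pos hc1] at hb
        rcases Multiset.mem_add.mp hb with hb | hb
        · rw [Multiset.mem_singleton.mp hb]
        · obtain ⟨m, hm, rfl, hb2⟩ := hDelt _ hb
          have := hMle m hm
          omega
      · exact Multiset.le_sup hcM'
    have hcardM' : (M'.card : ℤ) ≤ (M.card : ℤ) + 1 := by
      rw [hsplit, if_pos hc1]
      push_cast [Multiset.card_add, Multiset.card_singleton]
      omega
    have hflip : ¬ ((M'.sup : ℤ) ≤ (M'.card : ℤ) + 3 * (j - 1)) := by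
      rw [hsupM']
      omega
    simp only [bz, if_neg hflip]
    -- erase the head
    have hM'c : M' = c ::ₘ D := by rw [hsplit, if_pos hc1]; rfl
    have herase : M'.erase M'.sup = D := by rw [hsupM', hM'c, Multiset.erase_cons_head]
    rw [herase]
    have hmap : D.map (fun m => m + 1) = M.filter (fun m => 2 ≤ m) := dec_filter_inc M
    have hEsum : ((D.sum : ℤ) + (D.card : ℤ)) = ((M.filter (fun m => 2 ≤ m)).sum : ℤ) := by
      have h1 := sum_map_succ D
      rw [hmap] at h1
      omega
    have hfsplit : (M.filter (fun m => 2 ≤ m)).sum + (M.filter (fun m => ¬ 2 ≤ m)).sum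
        = M.sum := by
      rw [← Multiset.sum_add, Multiset.filter_add_not]
    have hones : ∀ b ∈ M.filter (fun m => ¬ 2 ≤ m), b = 1 := by
      intro b hb
      obtain ⟨hb1, hb2⟩ := Multiset.mem_filter.mp hb
      have := hpos b hb1
      omega
    have hfsum : (M.filter (fun m => ¬ 2 ≤ m)).sum = (M.filter (fun m => ¬ 2 ≤ m)).card := by
      calc (M.filter (fun m => ¬ 2 ≤ m)).sum
          = ((M.filter (fun m => ¬ 2 ≤ m)).map (fun _ => 1)).sum := by
            rw [Multiset.map_congr rfl (fun b hb => (hones b hb).symm)]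
            simp
        _ = _ := by simp [Multiset.sum_replicate]
    have hK : ((n : ℤ) - G j - (((D.sum : ℤ)) + (D.card : ℤ))).toNat
        = (M.filter (fun m => ¬ 2 ≤ m)).card := by
      rw [hEsum]
      have : (n : ℤ) - G j - ((M.filter (fun m => 2 ≤ m)).sum : ℤ)
          = ((M.filter (fun m => ¬ 2 ≤ m)).card : ℤ) := by
        omega
      rw [this, Int.toNat_natCast]
    have hrep : Multiset.replicate (M.filter (fun m => ¬ 2 ≤ m)).card 1
        = M.filter (fun m => ¬ 2 ≤ m) := by
      symm
      rw [Multiset.eq_replicate]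
      exact ⟨rfl, hones⟩
    rw [show j - 1 + 1 = j from by ring]
    congr 1
    rw [hmap, hK, hrep, Multiset.filter_add_not]
  · -- c = 0 : M' = 0
    have hc00 : c = 0 := by omega
    have htj : (M.card : ℤ) + 3 * j = 1 := by omega
    have ht1 : 1 ≤ M.card := by
      by_contra h
      have : M.card = 0 := by omega
      omega
    have hsup1 : M.sup ≤ 1 := by
      have := hc
      omega
    have hall1 : ∀ m ∈ M, m = 1 := by
      intro m hm
      have := hMle m hm
      have := hpos m hm
      omega
    have hD0 : D = 0 := by
      rw [Multiset.eq_zero_iff_forall_notMem]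
      intro b hb
      obtain ⟨m, hm, rfl, hb2⟩ := hDelt _ hb
      have := hall1 m hm
      omega
    have hM'0 : M' = 0 := by
      rw [hsplit, if_neg hc1, hD0]; rfl
    rw [hM'0]
    have hflip : ¬ (((0 : Multiset ℕ).sup : ℤ) ≤ ((0 : Multiset ℕ).card : ℤ) + 3 * (j - 1)) := by
      simp only [Multiset.sup_zero, Multiset.card_zero]
      simp only [Nat.cast_zero]
      omega
    simp only [bz, if_neg hflip]
    rw [show j - 1 + 1 = j from by ring]
    congr 1
    · have hMrep : M = Multiset.replicate M.card 1 := by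
        rw [Multiset.eq_replicate]; exact ⟨rfl, hall1⟩
      simp only [Multiset.erase_zero, Multiset.map_zero, Multiset.sum_zero,
        Multiset.card_zero]
      have hnat : ((n : ℤ) - G j - (((0:ℕ):ℤ) + ((0:ℕ):ℤ))).toNat = M.card := by
        have h2 : (n : ℤ) - G j = (M.card : ℤ) := by
          have hs : M.sum = M.card := by
            conv_lhs => rw [hMrep]
            simp [Multiset.sum_replicate]
          omega
        simp [h2]
      rw [hnat, zero_add]
      exact hMrep.symm

lemma stepB {n : ℕ} (hn : 1 ≤ n) {j : ℤ} {M : Multiset ℕ}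
    (hpos : ∀ i ∈ M, 0 < i) (hsum : (M.sum : ℤ) = (n : ℤ) - G j)
    (hc : ¬ ((M.sup : ℤ) ≤ (M.card : ℤ) + 3 * j)) :
    (∀ i ∈ (bz n ⟨j, M⟩).2, 0 < i) ∧ (((bz n ⟨j, M⟩).2.sum : ℤ) = (n : ℤ) - G (j + 1)) ∧
      (bz n ⟨j, M⟩).1 = j + 1 ∧ bz n (bz n ⟨j, M⟩) = ⟨j, M⟩ := by
  have hGadd := G_add j
  set a : ℕ := M.sup with hadef
  set E : Multiset ℕ := M.erase a with hEdef
  set kZ : ℤ := (n : ℤ) - G (j + 1) - ((E.sum : ℤ) + E.card) with hkZdef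
  -- uniform facts
  have hEposall : ∀ i ∈ E, 0 < i := fun i hi => hpos i (Multiset.mem_of_mem_erase hi)
  have hconsE : M ≠ 0 → a ::ₘ E = M := fun hM0 => by
    rw [hEdef]; exact Multiset.cons_erase (sup_mem M hM0)
  have hEs : (E.sum : ℤ) = (M.sum : ℤ) - a := by
    rcases eq_or_ne M 0 with rfl | hM0
    · simp [hEdef, hadef]
    · have hs : (a ::ₘ E).sum = M.sum := by rw [hconsE hM0]
      rw [Multiset.sum_cons] at hs
      omega
  have hEc : (E.card : ℤ) = (M.card : ℤ) - (if M = 0 then 0 else 1) := by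
    rcases eq_or_ne M 0 with rfl | hM0
    · simp [hEdef]
    · have hs : (a ::ₘ E).card = M.card := by rw [hconsE hM0]
      rw [Multiset.card_cons] at hs
      simp only [hM0, if_neg, if_false]
      omega
  have hk0 : 0 ≤ kZ := by
    rcases eq_or_ne M 0 with hM0 | hM0
    · have ha0 : a = 0 := by rw [hadef, hM0]; rfl
      have ht0 : M.card = 0 := by rw [hM0]; rfl
      have hj : 3 * j ≤ -1 := by
        rw [ha0, ht0] at hc; push_cast at hc; omega
      rw [hkZdef, hEs, hEc, if_pos hM0]
      omega
    · have h1 : 1 ≤ a := by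
        have hmem : a ∈ M := sup_mem M hM0
        exact hpos a hmem
      rw [hkZdef, hEs, hEc, if_neg hM0]
      omega
  have hkZa : kZ = (a : ℤ) - 3 * j - 2 - E.card := by
    rw [hkZdef, hEs]; omega
  set k : ℕ := kZ.toNat with hkdef
  have hkZk : (k : ℤ) = kZ := Int.toNat_of_nonneg hk0
  set M' : Multiset ℕ := E.map (fun m => m + 1) + Multiset.replicate k 1 with hM'def
  have hbz1 : bz n ⟨j, M⟩ = ⟨j + 1, M'⟩ := by
    simp only [bz, ← hadef, if_neg hc]
    rfl
  have hposM' : ∀ i ∈ M', 0 < i := by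
    intro i hi
    rcases Multiset.mem_add.mp hi with hi | hi
    · obtain ⟨e, -, rfl⟩ := Multiset.mem_map.mp hi; omega
    · rw [Multiset.eq_of_mem_replicate hi]; omega
  have hM'card : (M'.card : ℤ) = (E.card : ℤ) + k := by
    rw [hM'def]; push_cast [Multiset.card_add, Multiset.card_replicate, Multiset.card_map]; ring
  have hM'sum : (M'.sum : ℤ) = (n : ℤ) - G (j + 1) := by
    have h1 : (E.map (fun m => m + 1)).sum = E.sum + E.card := sum_map_succ E
    have h2 : M'.sum = (E.map (fun m => m + 1)).sum + k * 1 := by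
      rw [hM'def, Multiset.sum_add, Multiset.sum_replicate, smul_eq_mul]
    have h3 : M'.sum = E.sum + E.card + k := by rw [h2, h1]; omega
    rw [h3, Nat.cast_add, Nat.cast_add]
    omega
  refine ⟨by rw [hbz1]; exact hposM', by rw [hbz1]; exact hM'sum, by rw [hbz1], ?_⟩
  rw [hbz1]
  -- sup of M' is at most a + 1
  have hsupM' : (M'.sup : ℤ) ≤ (a : ℤ) + 1 := by
    have : ∀ b ∈ M', (b : ℤ) ≤ (a : ℤ) + 1 := by
      intro b hb
      rcases Multiset.mem_add.mp hb with hb | hb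
      · obtain ⟨e, he, rfl⟩ := Multiset.mem_map.mp hb
        have : e ≤ a := Multiset.le_sup (Multiset.mem_of_mem_erase he)
        push_cast; omega
      · rw [Multiset.eq_of_mem_replicate hb]
        have : (0 : ℤ) ≤ a := Int.natCast_nonneg _
        omega
    rcases eq_or_ne M' 0 with h0 | h0
    · rw [h0]; simp; positivity
    · exact this _ (sup_mem M' h0)
  have hflip : (M'.sup : ℤ) ≤ (M'.card : ℤ) + 3 * (j + 1) := by
    rw [hM'card, hkZk, hkZa]
    omega
  simp only [bz, if_pos hflip]
  rw [show j + 1 - 1 = j from by ring]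
  congr 1
  -- the new part is a
  have hcnew : ((M'.card : ℤ) + 3 * (j + 1) - 1).toNat = a := by
    rw [hM'card, hkZk, hkZa]
    have : (M'.card : ℤ) + 3 * (j + 1) - 1 = a := by rw [hM'card, hkZk, hkZa]; ring
    omega
  rw [hcnew]
  -- M'.map pred = E + replicate k 0
  have hmapM' : M'.map (fun m => m - 1) = E + Multiset.replicate k 0 := by
    rw [hM'def, Multiset.map_add, Multiset.map_map]
    congr 1
    · simp
    · rw [Multiset.map_replicate]
  rw [hmapM']
  rcases eq_or_ne M 0 with rfl | hM0
  · have hE0 : E = 0 := by rw [hEdef]; rfl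
    have ha0 : a = 0 := by rw [hadef]; rfl
    rw [hE0, ha0, zero_add]
    rw [Multiset.eq_zero_iff_forall_notMem]
    intro b hb
    obtain ⟨hb1, hb2⟩ := Multiset.mem_filter.mp hb
    rcases Multiset.mem_cons.mp hb1 with rfl | hb1
    · omega
    · rw [Multiset.eq_of_mem_replicate hb1] at hb2; omega
  · have hmem : a ∈ M := sup_mem M hM0
    have ha1 : 0 < a := hpos a hmem
    rw [Multiset.filter_cons, if_pos ha1, Multiset.filter_add]
    have h1 : E.filter (fun m => 0 < m) = E := Multiset.filter_eq_self.mpr hEposall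
    have h2 : (Multiset.replicate k 0).filter (fun m => 0 < m) = 0 := by
      rw [Multiset.eq_zero_iff_forall_notMem]
      intro b hb
      obtain ⟨hb1, hb2⟩ := Multiset.mem_filter.mp hb
      rw [Multiset.eq_of_mem_replicate hb1] at hb2; omega
    rw [h1, h2, add_zero]
    have : ({a} : Multiset ℕ) + E = a ::ₘ E := by rw [Multiset.singleton_add]
    rw [this, Multiset.cons_erase hmem]

lemma step_all {n : ℕ} (hn : 1 ≤ n) {x : (_ : ℤ) × Multiset ℕ} (hx : x ∈ S n) :
    bz n x ∈ S n ∧ eps x.1 + eps (bz n x).1 = 0 ∧ (bz n x).1 ≠ x.1 ∧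
      bz n (bz n x) = x := by
  obtain ⟨j, M⟩ := x
  obtain ⟨hpos, hsum⟩ := mem_S.mp hx
  dsimp only at hpos hsum
  by_cases hc : (M.sup : ℤ) ≤ (M.card : ℤ) + 3 * j
  · obtain ⟨h1, h2, h3, h4⟩ := stepA hn hpos hsum hc
    refine ⟨mem_S.mpr ⟨h1, by rw [h3]; exact h2⟩, ?_, by simp only [h3]; omega, h4⟩
    rw [h3, eps_sub_one]; ring
  · obtain ⟨h1, h2, h3, h4⟩ := stepB hn hpos hsum hc
    refine ⟨mem_S.mpr ⟨h1, by rw [h3]; exact h2⟩, ?_, by simp only [h3]; omega, h4⟩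
    rw [h3, eps_add_one]; ring

lemma pf_card {z : ℤ} (hz : 0 ≤ z) : partitionFun z = ((PF z.toNat).card : ℤ) := by
  rw [partitionFun, if_pos hz, card_PF]

lemma key (n : ℕ) (hn : 1 ≤ n) :
    ∑ j ∈ Finset.Icc (-(n : ℤ)) (n : ℤ), eps j * partitionFun ((n : ℤ) - G j) = 0 := by
  classical
  rw [← Finset.sum_filter_add_sum_filter_not (Finset.Icc (-(n : ℤ)) (n : ℤ))
    (fun j => G j ≤ (n : ℤ))]
  have h2 : ∑ j ∈ (Finset.Icc (-(n : ℤ)) (n : ℤ)).filter (fun j => ¬ G j ≤ (n : ℤ)),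
      eps j * partitionFun ((n : ℤ) - G j) = 0 := by
    apply Finset.sum_eq_zero
    intro j hj
    have := (Finset.mem_filter.mp hj).2
    rw [partitionFun, if_neg (by omega)]
    ring
  rw [h2, add_zero]
  have h3 : ∀ j ∈ (Finset.Icc (-(n : ℤ)) (n : ℤ)).filter (fun j => G j ≤ (n : ℤ)),
      eps j * partitionFun ((n : ℤ) - G j) = ∑ M ∈ PF ((n : ℤ) - G j).toNat, eps j := by
    intro j hj
    have hG := (Finset.mem_filter.mp hj).2
    rw [pf_card (by omega), Finset.sum_const, nsmul_eq_mul]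
    ring
  rw [Finset.sum_congr rfl h3,
    Finset.sum_sigma' ((Finset.Icc (-(n : ℤ)) (n : ℤ)).filter (fun j => G j ≤ (n : ℤ)))
      (fun j => PF ((n : ℤ) - G j).toNat) (fun j _ => eps j)]
  show ∑ x ∈ S n, eps x.1 = 0
  apply Finset.sum_involution (fun x _ => bz n x)
  · intro x hx; exact (step_all hn hx).2.1
  · intro x hx _
    intro h
    exact (step_all hn hx).2.2.1 (by rw [h])
  · intro x hx; exact (step_all hn hx).1
  · intro x hx; exact (step_all hn hx).2.2.2

lemma sum_Icc_neg (F : ℤ → ℤ) (n : ℕ) :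
    ∑ j ∈ Finset.Icc (-(n : ℤ)) (n : ℤ), F j
      = F 0 + ∑ m ∈ Finset.Icc 1 n, (F m + F (-(m : ℤ))) := by
  induction n with
  | zero => simp
  | succ n ih =>
    have h1 : Finset.Icc (-(↑(n+1) : ℤ)) (↑(n+1) : ℤ)
        = insert (↑(n+1) : ℤ) (insert (-(↑(n+1) : ℤ)) (Finset.Icc (-(n : ℤ)) (n : ℤ))) := by
      ext j
      simp only [Finset.mem_Icc, Finset.mem_insert]
      push_cast
      omega
    have h2 : (↑(n+1) : ℤ) ∉ insert (-(↑(n+1) : ℤ)) (Finset.Icc (-(n : ℤ)) (n : ℤ)) := by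
      simp only [Finset.mem_Icc, Finset.mem_insert]
      push_cast
      omega
    have h3 : (-(↑(n+1) : ℤ)) ∉ Finset.Icc (-(n : ℤ)) (n : ℤ) := by
      simp only [Finset.mem_Icc]
      push_cast
      omega
    have h4 : Finset.Icc 1 (n+1) = insert (n+1) (Finset.Icc 1 n) := by
      ext m
      simp only [Finset.mem_Icc, Finset.mem_insert]
      omega
    have h5 : (n+1) ∉ Finset.Icc 1 n := by simp
    rw [h1, Finset.sum_insert h2, Finset.sum_insert h3, ih, h4, Finset.sum_insert h5]
    push_cast
    ring

lemma G_natCast (m : ℕ) : ((m * (3 * m + 1) / 2 : ℕ) : ℤ) = G (m : ℤ) := by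
  have hdvd : 2 ∣ m * (3 * m + 1) := by
    rcases Nat.even_or_odd m with ⟨k, hk⟩ | ⟨k, hk⟩
    · exact ⟨k * (3 * m + 1), by subst hk; ring⟩
    · exact ⟨m * (3 * k + 2), by subst hk; ring⟩
  have h1 : 2 * (m * (3 * m + 1) / 2) = m * (3 * m + 1) := Nat.mul_div_cancel' hdvd
  have h2 := two_G (m : ℤ)
  have h3 : (2 : ℤ) * ((m * (3 * m + 1) / 2 : ℕ) : ℤ) = ((m * (3 * m + 1) : ℕ) : ℤ) := by
    exact_mod_cast congrArg (Nat.cast : ℕ → ℤ) h1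
  have h4 : ((m * (3 * m + 1) : ℕ) : ℤ) = 3 * (m : ℤ) * m + m := by push_cast; ring
  omega

lemma G_neg_natCast (m : ℕ) : ((m * (3 * m - 1) / 2 : ℕ) : ℤ) = G (-(m : ℤ)) := by
  rcases Nat.eq_zero_or_pos m with rfl | hm
  · simp [G]
  have hdvd : 2 ∣ m * (3 * m - 1) := by
    rcases Nat.even_or_odd m with ⟨k, hk⟩ | ⟨k, hk⟩
    · exact ⟨k * (3 * m - 1), by subst hk; ring⟩
    · refine ⟨m * (3 * k + 1), ?_⟩
      subst hk
      have : 3 * (2 * k + 1) - 1 = 2 * (3 * k + 1) := by omega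
      rw [this]; ring
  have h1 : 2 * (m * (3 * m - 1) / 2) = m * (3 * m - 1) := Nat.mul_div_cancel' hdvd
  have h2 := two_G (-(m : ℤ))
  have h3 : (2 : ℤ) * ((m * (3 * m - 1) / 2 : ℕ) : ℤ) = ((m * (3 * m - 1) : ℕ) : ℤ) := by
    exact_mod_cast congrArg (Nat.cast : ℕ → ℤ) h1
  have h4 : ((m * (3 * m - 1) : ℕ) : ℤ) = 3 * (m : ℤ) * m - m := by
    push_cast [Nat.cast_sub (by omega : 1 ≤ 3 * m)]
    ring
  have h5 : 3 * (-(m:ℤ)) * (-(m:ℤ)) + (-(m:ℤ)) = 3 * (m : ℤ) * m - m := by ring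
  omega

end BZ

open BZ in
/-- Pentagonal recursion for the partition function:
`p(n) = ∑_{m≥1} (-1)^{m-1} [p(n - m(3m-1)/2) + p(n - m(3m+1)/2)]` for `n ≥ 1`. -/
theorem stmt_5 (n : ℕ) (hn : 1 ≤ n) :
    partitionFun n =
      ∑ m ∈ Finset.Icc 1 n, (-1 : ℤ) ^ (m - 1) *
        (partitionFun ((n : ℤ) - (m * (3 * m - 1) / 2 : ℕ)) +
         partitionFun ((n : ℤ) - (m * (3 * m + 1) / 2 : ℕ))) := by
  have hk := key n hn
  rw [sum_Icc_neg (fun j => eps j * partitionFun ((n : ℤ) - G j)) n] at hk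
  have h0 : eps 0 * partitionFun ((n : ℤ) - G 0) = partitionFun n := by
    have : G 0 = 0 := rfl
    rw [this]
    simp [eps]
  rw [h0] at hk
  have hterm : ∀ m ∈ Finset.Icc 1 n,
      (eps m * partitionFun ((n : ℤ) - G m) + eps (-(m:ℤ)) * partitionFun ((n : ℤ) - G (-(m:ℤ))))
      = - ((-1 : ℤ) ^ (m - 1) *
        (partitionFun ((n : ℤ) - (m * (3 * m - 1) / 2 : ℕ)) +
         partitionFun ((n : ℤ) - (m * (3 * m + 1) / 2 : ℕ)))) := by
    intro m hm
    have hm1 : 1 ≤ m := (Finset.mem_Icc.mp hm).1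
    have he1 : eps (m : ℤ) = (-1 : ℤ) ^ m := by simp [eps]
    have he2 : eps (-(m : ℤ)) = (-1 : ℤ) ^ m := by simp [eps]
    have he3 : (-1 : ℤ) ^ m = -((-1 : ℤ) ^ (m - 1)) := by
      have h : (-1 : ℤ) ^ m = (-1 : ℤ) ^ ((m - 1) + 1) := by congr 1; omega
      rw [h, pow_succ]; ring
    rw [he1, he2, he3, G_natCast, G_neg_natCast]
    ring
  rw [Finset.sum_congr rfl hterm, Finset.sum_neg_distrib] at hk
  linarith
end

section
/- Let A = (a_1, …, a_k) be a finite sequence of positive integers and x a real number. For i with 1 ≤ i ≤ 2^k write i - 1 = ∑_{j ∈ S_i} 2^{j-1} in binary, and set b_i(x) = ∑_{j ∈ S_i} a_j^x and b_i = b_i(1). Define σ_x^{(A)}(n) = ∑_{j : a_j | n} a_j^x for n ≥ 1 (counting multiplicity in the sequence) and σ_x^{(A)}(n) = 0 for n ≤ 0. Then for all n ≥ 1: σ_x^{(A)}(n) = h_x^{(A)}(n) + ∑_{i=2}^{2^k} (-1)^{s(2i-1)} σ_x^{(A)}(n - b_i), where h_x^{(A)}(n) = ∑_{i ≥ 2,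 b_i = n} (-1)^{s(2i-1)} b_i(x) and s is the binary digit sum. -/
/-- Binary digit sum: number of ones in the binary expansion of `n`. -/
def binDigitSum (n : ℕ) : ℕ := (Nat.digits 2 n).sum

/-- `b_i(x) = ∑_{j ∈ S_i} a_j^x` where `i - 1 = ∑_{j ∈ S_i} 2^{j-1}` is the binary
expansion of `i-1` (indices `1 ≤ j ≤ k`). -/
noncomputable def bAssoc (k : ℕ) (a : ℕ → ℕ) (x : ℝ) (i : ℕ) : ℝ :=
  ∑ j ∈ Finset.Icc 1 k, if (i - 1).testBit (j - 1) then (a j : ℝ) ^ x else 0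

/-- `b_i = b_i(1) = ∑_{j ∈ S_i} a_j`. -/
def bAssocNat (k : ℕ) (a : ℕ → ℕ) (i : ℕ) : ℕ :=
  ∑ j ∈ Finset.Icc 1 k, if (i - 1).testBit (j - 1) then a j else 0

/-- `σ_x^{(A)}(n) = ∑_{j : a_j ∣ n} a_j^x` for `n ≥ 1` (with multiplicity), `0` for `n ≤ 0`. -/
noncomputable def sigmaSeq (k : ℕ) (a : ℕ → ℕ) (x : ℝ) (n : ℤ) : ℝ :=
  if 0 < n then ∑ j ∈ Finset.Icc 1 k, (if (a j : ℤ) ∣ n then (a j : ℝ) ^ x else 0) else 0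

open Finset

lemma binDigitSum_zero' : binDigitSum 0 = 0 := by simp [binDigitSum]

lemma binDigitSum_two_mul_add_one (m : ℕ) :
    binDigitSum (2 * m + 1) = binDigitSum m + 1 := by
  unfold binDigitSum
  rw [Nat.digits_def' (by norm_num : 1 < 2) (by omega)]
  have h1 : (2 * m + 1) % 2 = 1 := by omega
  have h2 : (2 * m + 1) / 2 = m := by omega
  rw [h1, h2, List.sum_cons]
  omega

lemma binDigitSum_eq_card : ∀ K m, m < 2 ^ K →
    binDigitSum m = ((Finset.range K).filter (fun t => m.testBit t)).card := by
  intro K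
  induction K with
  | zero => intro m hm; interval_cases m; simp [binDigitSum]
  | succ K ih =>
    intro m hm
    rcases Nat.eq_zero_or_pos m with h0 | h0
    · subst h0; simp [binDigitSum]
    · have hd : binDigitSum m = m % 2 + binDigitSum (m / 2) := by
        unfold binDigitSum
        rw [Nat.digits_def' (by norm_num : 1 < 2) h0, List.sum_cons]
      have h2K : 2 ^ (K + 1) = 2 * 2 ^ K := by ring
      have hq : m / 2 < 2 ^ K := by omega
      rw [hd, ih _ hq]
      rw [Finset.card_filter, Finset.card_filter, Finset.sum_range_succ']
      simp only [Nat.testBit_succ, Nat.testBit_zero]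
      rcases Nat.mod_two_eq_zero_or_one m with h | h <;> simp [h] <;> omega

lemma binDigitSum_xor (K t m : ℕ) (ht : t < K) (hm : m < 2 ^ K) (hbit : m.testBit t = false) :
    binDigitSum (m ^^^ 2 ^ t) = binDigitSum m + 1 := by
  have hx : m ^^^ 2 ^ t < 2 ^ K := by
    apply Nat.lt_pow_two_of_testBit
    intro i hi
    rw [Nat.testBit_xor, Nat.testBit_two_pow]
    have h1 : m.testBit i = false := Nat.testBit_lt_two_pow
      (lt_of_lt_of_le hm (Nat.pow_le_pow_right (by norm_num) hi))
    have h2 : t ≠ i := by omega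
    simp [h1, h2]
  rw [binDigitSum_eq_card K _ hx, binDigitSum_eq_card K m hm]
  have hset : (range K).filter (fun r => (m ^^^ 2 ^ t).testBit r)
      = insert t ((range K).filter (fun r => m.testBit r)) := by
    ext r
    simp only [mem_filter, mem_insert, mem_range, Nat.testBit_xor, Nat.testBit_two_pow]
    by_cases hrt : r = t
    · subst hrt; simp [hbit, ht]
    · have hhh : t ≠ r := fun h => hrt h.symm
      simp [hrt, hhh]
  rw [hset, Finset.card_insert_of_notMem (by simp [hbit])]

lemma sum_bit_xor {M : Type*} [AddCommMonoid M] (k t : ℕ) (ht : t < k) (m : ℕ)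
    (hbit : m.testBit t = false) (f : ℕ → M) :
    (∑ j ∈ Icc 1 k, if (m ^^^ 2 ^ t).testBit (j - 1) then f j else 0)
      = (∑ j ∈ Icc 1 k, if m.testBit (j - 1) then f j else 0) + f (t + 1) := by
  have hmem : t + 1 ∈ Icc 1 k := by simp; omega
  rw [← Finset.sum_erase_add _ _ hmem, ← Finset.sum_erase_add _ _ hmem]
  have h1 : ∀ j ∈ (Icc 1 k).erase (t + 1),
      (if (m ^^^ 2 ^ t).testBit (j - 1) then f j else 0)
        = (if m.testBit (j - 1) then f j else 0) := by
    intro j hj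
    have hj1 : j ≠ t + 1 := (Finset.mem_erase.mp hj).1
    have hj2 : 1 ≤ j := (Finset.mem_Icc.mp (Finset.mem_erase.mp hj).2).1
    have hne : t ≠ j - 1 := by omega
    rw [Nat.testBit_xor, Nat.testBit_two_pow]
    simp [hne]
  rw [Finset.sum_congr rfl h1]
  have h2 : (m ^^^ 2 ^ t).testBit (t + 1 - 1) = true := by
    simp [Nat.testBit_xor, Nat.testBit_two_pow, hbit]
  have h3 : m.testBit (t + 1 - 1) = false := hbit
  rw [h2, h3]
  simp [add_assoc, add_comm]

/-- Theorem 1: `σ_x^{(A)}(n) = h_x^{(A)}(n) + ∑_{i=2}^{2^k} (-1)^{s(2i-1)} σ_x^{(A)}(n - b_i)`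
where `h_x^{(A)}(n) = ∑_{i ≥ 2, b_i = n} (-1)^{s(2i-1)} b_i(x)`. -/
theorem stmt_8 (k : ℕ) (hk : 1 ≤ k) (a : ℕ → ℕ)
    (hpos : ∀ j, 1 ≤ j → j ≤ k → 0 < a j) (x : ℝ) (n : ℕ) (hn : 1 ≤ n) :
    sigmaSeq k a x n =
      (∑ i ∈ Finset.Icc 2 (2 ^ k),
        if bAssocNat k a i = n then (-1 : ℝ) ^ binDigitSum (2 * i - 1) * bAssoc k a x i else 0)
      + ∑ i ∈ Finset.Icc 2 (2 ^ k),
          (-1 : ℝ) ^ binDigitSum (2 * i - 1) *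
            sigmaSeq k a x ((n : ℤ) - (bAssocNat k a i : ℤ)) := by
  classical
  set N : ℕ → ℕ := fun m => bAssocNat k a (m + 1) with hN
  set ε : ℕ → ℝ := fun m => (-1 : ℝ) ^ binDigitSum m with hε
  have hsigma : ∀ v : ℤ, sigmaSeq k a x v
      = ∑ j ∈ Icc 1 k, (if ((a j : ℤ) ∣ v ∧ 0 < v) then (a j : ℝ) ^ x else 0) := by
    intro v
    unfold sigmaSeq
    by_cases h : 0 < v
    · rw [if_pos h]
      exact Finset.sum_congr rfl fun j _ => by simp [h]
    · rw [if_neg h]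
      exact (Finset.sum_eq_zero fun j _ => by simp [h]).symm
  -- the key cancellation for a fixed j
  have key : ∀ j ∈ Icc 1 k,
      ∑ m ∈ range (2 ^ k),
        (ε m * (if ((a j : ℤ) ∣ (n : ℤ) - (N m : ℤ) ∧ 0 < (n : ℤ) - (N m : ℤ))
            then (a j : ℝ) ^ x else 0)
          - (if N m = n ∧ m.testBit (j - 1) then -ε m * (a j : ℝ) ^ x else 0)) = 0 := by
    intro j hj
    obtain ⟨hj1, hj2⟩ := Finset.mem_Icc.mp hj
    set t := j - 1 with htdef
    have ht : t < k := by omega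
    have hjt : j = t + 1 := by omega
    set f : ℕ → ℝ := fun m =>
        ε m * (if ((a j : ℤ) ∣ (n : ℤ) - (N m : ℤ) ∧ 0 < (n : ℤ) - (N m : ℤ))
            then (a j : ℝ) ^ x else 0)
          - (if N m = n ∧ m.testBit (j - 1) then -ε m * (a j : ℝ) ^ x else 0) with hf
    have hmemx : ∀ m ∈ range (2 ^ k), m ^^^ 2 ^ t ∈ range (2 ^ k) := by
      intro m hm
      rw [Finset.mem_range] at hm ⊢
      apply Nat.lt_pow_two_of_testBit
      intro i hi
      rw [Nat.testBit_xor, Nat.testBit_two_pow]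
      have h1 : m.testBit i = false := Nat.testBit_lt_two_pow
        (lt_of_lt_of_le hm (Nat.pow_le_pow_right (by norm_num) hi))
      have h2 : t ≠ i := by omega
      simp [h1, h2]
    have main : ∀ m ∈ range (2 ^ k), m.testBit t = false → f m + f (m ^^^ 2 ^ t) = 0 := by
      intro m hm hbit
      have hmlt : m < 2 ^ k := Finset.mem_range.mp hm
      have hs : binDigitSum (m ^^^ 2 ^ t) = binDigitSum m + 1 :=
        binDigitSum_xor k t m ht hmlt hbit
      have hNx : N (m ^^^ 2 ^ t) = N m + a j := by
        show bAssocNat k a ((m ^^^ 2 ^ t) + 1) = bAssocNat k a (m + 1) + a j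
        unfold bAssocNat
        simp only [Nat.add_sub_cancel]
        rw [sum_bit_xor k t ht m hbit a, ← hjt]
      have hbit' : (m ^^^ 2 ^ t).testBit (j - 1) = true := by
        rw [← htdef, Nat.testBit_xor, Nat.testBit_two_pow]
        simp [hbit]
      have hbitj : m.testBit (j - 1) = false := hbit
      have hε' : ε (m ^^^ 2 ^ t) = -ε m := by
        rw [hε]; simp only [hs, pow_succ]; ring
      have haj : 0 < a j := hpos j hj1 hj2
      have hA0 : (0 : ℤ) < (a j : ℤ) := by exact_mod_cast haj
      rw [hf]
      simp only [hε', hNx, hbit', hbitj, Bool.false_eq_true, and_false, if_false, and_true]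
      have hsub : (n : ℤ) - ((N m + a j : ℕ) : ℤ) = ((n : ℤ) - (N m : ℤ)) - (a j : ℤ) := by
        push_cast; ring
      by_cases h1 : N m + a j = n
      · have hvA : (n : ℤ) - (N m : ℤ) = (a j : ℤ) := by omega
        have e1 : (if ((a j : ℤ) ∣ (n : ℤ) - (N m : ℤ) ∧ 0 < (n : ℤ) - (N m : ℤ))
            then (a j : ℝ) ^ x else 0) = (a j : ℝ) ^ x := by
          rw [if_pos ⟨hvA ▸ dvd_refl _, by omega⟩]
        have e2 : (if ((a j : ℤ) ∣ (n : ℤ) - ((N m + a j : ℕ) : ℤ) ∧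
            0 < (n : ℤ) - ((N m + a j : ℕ) : ℤ)) then (a j : ℝ) ^ x else 0) = 0 := by
          rw [if_neg]; rintro ⟨-, hp⟩; omega
        rw [e1, e2, if_pos h1]
        ring
      · have hne : (n : ℤ) - (N m : ℤ) ≠ (a j : ℤ) := by omega
        have hiff : ((a j : ℤ) ∣ (n : ℤ) - ((N m + a j : ℕ) : ℤ) ∧
              0 < (n : ℤ) - ((N m + a j : ℕ) : ℤ))
            ↔ ((a j : ℤ) ∣ (n : ℤ) - (N m : ℤ) ∧ 0 < (n : ℤ) - (N m : ℤ)) := by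
          rw [hsub]
          constructor
          · rintro ⟨hd, hp⟩
            have hd' : (a j : ℤ) ∣ (n : ℤ) - (N m : ℤ) := by
              have := dvd_add hd (dvd_refl (a j : ℤ))
              simpa using this
            exact ⟨hd', by omega⟩
          · rintro ⟨hd, hp⟩
            have hd' : (a j : ℤ) ∣ ((n : ℤ) - (N m : ℤ)) - (a j : ℤ) :=
              dvd_sub hd (dvd_refl _)
            have hle : (a j : ℤ) ≤ (n : ℤ) - (N m : ℤ) := Int.le_of_dvd hp hd
            exact ⟨hd', by omega⟩
        rw [if_congr hiff rfl rfl, if_neg h1]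
        ring
    have pair : ∀ m ∈ range (2 ^ k), f m + f (m ^^^ 2 ^ t) = 0 := by
      intro m hm
      rcases Bool.eq_false_or_eq_true (m.testBit t) with hb | hb
      swap
      · exact main m hm hb
      · have hb0 : (m ^^^ 2 ^ t).testBit t = false := by
          rw [Nat.testBit_xor, Nat.testBit_two_pow]
          simp [hb]
        have hcanc : (m ^^^ 2 ^ t) ^^^ 2 ^ t = m := Nat.xor_xor_cancel_right _ _
        have h2 := main (m ^^^ 2 ^ t) (hmemx m hm) hb0
        rw [hcanc] at h2
        linarith [h2]
    refine Finset.sum_involution (fun m _ => m ^^^ 2 ^ t) (fun m hm => pair m hm) ?_ hmemx ?_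
    · intro m hm hfm hcontra
      have hcb : (m ^^^ 2 ^ t).testBit t = m.testBit t := by
        show ((fun m (_ : m ∈ range (2 ^ k)) => m ^^^ 2 ^ t) m hm).testBit t = m.testBit t
        beta_reduce
        rw [hcontra]
      rw [Nat.testBit_xor, Nat.testBit_two_pow] at hcb
      simp at hcb
    · intro m hm
      exact Nat.xor_xor_cancel_right _ _
  -- combined cancellation
  have keyAll : ∑ m ∈ range (2 ^ k),
      (ε m * sigmaSeq k a x ((n : ℤ) - (N m : ℤ))
        - (if N m = n then -ε m * bAssoc k a x (m + 1) else 0)) = 0 := by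
    have expand : ∀ m, ε m * sigmaSeq k a x ((n : ℤ) - (N m : ℤ))
        - (if N m = n then -ε m * bAssoc k a x (m + 1) else 0)
        = ∑ j ∈ Icc 1 k,
            (ε m * (if ((a j : ℤ) ∣ (n : ℤ) - (N m : ℤ) ∧ 0 < (n : ℤ) - (N m : ℤ))
                then (a j : ℝ) ^ x else 0)
              - (if N m = n ∧ m.testBit (j - 1) then -ε m * (a j : ℝ) ^ x else 0)) := by
      intro m
      rw [hsigma, Finset.mul_sum, Finset.sum_sub_distrib]
      congr 1
      unfold bAssoc
      simp only [Nat.add_sub_cancel]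
      by_cases h : N m = n
      · rw [if_pos h, Finset.mul_sum]
        exact Finset.sum_congr rfl fun j _ => by
          by_cases hb : m.testBit (j - 1) <;> simp [hb, h]
      · rw [if_neg h]
        exact (Finset.sum_eq_zero fun j _ => by simp [h]).symm
    rw [Finset.sum_congr rfl fun m _ => expand m, Finset.sum_comm]
    exact Finset.sum_eq_zero key
  -- split off m = 0
  have h1le : (1 : ℕ) ≤ 2 ^ k := Nat.one_le_two_pow
  have hsplit : range (2 ^ k) = insert 0 (Icc 1 (2 ^ k - 1)) := by
    ext m
    simp only [Finset.mem_range, Finset.mem_insert, Finset.mem_Icc]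
    omega
  rw [hsplit, Finset.sum_insert (by simp)] at keyAll
  have hN0 : N 0 = 0 := by
    show bAssocNat k a 1 = 0
    unfold bAssocNat
    exact Finset.sum_eq_zero fun j _ => by simp
  have hε0 : ε 0 = 1 := by rw [hε]; simp [binDigitSum_zero']
  rw [hN0, hε0] at keyAll
  simp only [Nat.cast_zero, sub_zero, one_mul] at keyAll
  have hif0 : (if (0 : ℕ) = n then -(1 : ℝ) * bAssoc k a x (0 + 1) else 0) = 0 := by
    rw [if_neg]; omega
  rw [hif0, sub_zero] at keyAll
  -- reindex the RHS sums
  have hmap : Finset.Icc 2 (2 ^ k) = (Finset.Icc 1 (2 ^ k - 1)).map (addRightEmbedding 1) := by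
    rw [Finset.map_add_right_Icc]
    congr 1
    omega
  have hsign : ∀ m : ℕ, (-1 : ℝ) ^ binDigitSum (2 * (m + 1) - 1) = -ε m := by
    intro m
    have h : 2 * (m + 1) - 1 = 2 * m + 1 := by omega
    rw [h, binDigitSum_two_mul_add_one, hε, pow_succ]
    ring
  have e1 : (∑ i ∈ Finset.Icc 2 (2 ^ k),
      if bAssocNat k a i = n then (-1 : ℝ) ^ binDigitSum (2 * i - 1) * bAssoc k a x i else 0)
      = ∑ m ∈ Icc 1 (2 ^ k - 1),
          (if N m = n then -ε m * bAssoc k a x (m + 1) else 0) := by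
    rw [hmap, Finset.sum_map]
    refine Finset.sum_congr rfl fun m _ => ?_
    simp only [addRightEmbedding_apply]
    by_cases h : bAssocNat k a (m + 1) = n
    · rw [if_pos h, if_pos h, hsign]
    · rw [if_neg h, if_neg h]
  have e2 : (∑ i ∈ Finset.Icc 2 (2 ^ k), (-1 : ℝ) ^ binDigitSum (2 * i - 1) *
        sigmaSeq k a x ((n : ℤ) - (bAssocNat k a i : ℤ)))
      = -∑ m ∈ Icc 1 (2 ^ k - 1), ε m * sigmaSeq k a x ((n : ℤ) - (N m : ℤ)) := by
    rw [hmap, Finset.sum_map, ← Finset.sum_neg_distrib]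
    refine Finset.sum_congr rfl fun m _ => ?_
    simp only [addRightEmbedding_apply]
    rw [hsign]
    ring
  rw [e1, e2]
  rw [Finset.sum_sub_distrib] at keyAll
  linarith [keyAll]
end

section
/- For n ≥ 1, with the convention σ_x(m) = 0 for m ≤ 0, the divisor power-sum function satisfies σ_x(n) = h_x(n) + ∑_{m≥1} (-1)^{m-1} [ σ_x(n - m(3m-1)/2) + σ_x(n - m(3m+1)/2) ], where h_x(n) = ∑_{i ≥ 2, b_i = n} (-1)^{s(2i-1)} b_i(x), with b_i(x) = ∑_{j ∈ S_i} j^x and b_i = ∑_{j ∈ S_i} j, where i - 1 = ∑_{j ∈ S_i} 2^{j-1} is the binary expansion of i-1. -/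
/-- `b_i(x) = ∑_{j ∈ S_i} j^x` where `i - 1 = ∑_{j ∈ S_i} 2^{j-1}` is the binary
expansion of `i-1` (all bits of `i-1` occur at positions `j-1 < i`). -/
noncomputable def bNatSeq (x : ℝ) (i : ℕ) : ℝ :=
  ∑ j ∈ Finset.Icc 1 i, if (i - 1).testBit (j - 1) then (j : ℝ) ^ x else 0

/-- `b_i = b_i(1) = ∑_{j ∈ S_i} j`. -/
def bNat (i : ℕ) : ℕ :=
  ∑ j ∈ Finset.Icc 1 i, if (i - 1).testBit (j - 1) then j else 0

/-- `σ_x(n) = ∑_{d ∣ n} d^x` for `n ≥ 1`, and `0` for `n ≤ 0`. -/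
noncomputable def sigmaX (x : ℝ) (n : ℤ) : ℝ :=
  if 0 < n then ∑ d ∈ n.toNat.divisors, (d : ℝ) ^ x else 0


namespace Stmt12
open Finset

/-- distinct partitions of k (as finsets of positive integers summing to k) -/
def DP (k : ℕ) : Finset (Finset ℕ) := (Icc 1 k).powerset.filter (fun S => S.sum id = k)

lemma mem_DP {k : ℕ} {S : Finset ℕ} : S ∈ DP k ↔ S ⊆ Icc 1 k ∧ S.sum id = k := by
  simp [DP]

lemma subset_Icc_of_sum {S : Finset ℕ} {k : ℕ} (h0 : 0 ∉ S) (hs : S.sum id = k) :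
    S ⊆ Icc 1 k := by
  intro p hp
  have h1 : 1 ≤ p := Nat.one_le_iff_ne_zero.2 (by rintro rfl; exact h0 hp)
  have h2 : p ≤ k := hs ▸ Finset.single_le_sum (f := id) (fun i _ => Nat.zero_le i) hp
  exact mem_Icc.2 ⟨h1, h2⟩

lemma zero_not_mem_of_mem_DP {k : ℕ} {S : Finset ℕ} (h : S ∈ DP k) : 0 ∉ S := by
  intro h0
  have := (mem_DP.1 h).1 h0
  simp at this

lemma nonempty_of_mem_DP {k : ℕ} {S : Finset ℕ} (hk : 1 ≤ k) (h : S ∈ DP k) : S.Nonempty := by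
  rcases S.eq_empty_or_nonempty with rfl | h'
  · exfalso; have := (mem_DP.1 h).2; simp at this; omega
  · exact h'

def sMax (S : Finset ℕ) : ℕ := S.sup id

lemma le_sMax {S : Finset ℕ} {p : ℕ} (hp : p ∈ S) : p ≤ sMax S := Finset.le_sup (f := id) hp

lemma sMax_mem {S : Finset ℕ} (hne : S.Nonempty) : sMax S ∈ S := by
  have : sMax S = S.max' hne := by
    rw [Finset.max'_eq_sup' (H := hne), Finset.sup'_eq_sup hne id]; rfl
  rw [this]; exact S.max'_mem hne

lemma sMax_eq_of {S : Finset ℕ} {b : ℕ} (hb : b ∈ S) (hub : ∀ p ∈ S, p ≤ b) : sMax S = b :=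
  le_antisymm (Finset.sup_le hub) (le_sMax hb)

lemma stair_exists (S : Finset ℕ) : ∃ d, sMax S - (d+1) ∉ S ∨ sMax S - (d+1) = 0 :=
  ⟨sMax S, Or.inr (by omega)⟩

/-- length of the maximal "staircase" at the top of `S` -/
def stairLen (S : Finset ℕ) : ℕ := Nat.find (stair_exists S) + 1

lemma stairLen_pos (S : Finset ℕ) : 1 ≤ stairLen S := by
  unfold stairLen; omega

lemma stair_not_mem {S : Finset ℕ} (h0 : 0 ∉ S) : sMax S - stairLen S ∉ S := by
  have := Nat.find_spec (stair_exists S)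
  rcases this with h | h
  · exact h
  · unfold stairLen; rw [h]; exact h0

lemma stair_mem {S : Finset ℕ} (h0 : 0 ∉ S) (hne : S.Nonempty) :
    ∀ i < stairLen S, sMax S - i ∈ S := by
  intro i hi
  rcases Nat.eq_zero_or_pos i with rfl | hpos
  · simpa using sMax_mem hne
  · have := Nat.find_min (stair_exists S) (m := i - 1) (by unfold stairLen at hi; omega)
    push_neg at this
    have hi1 : i - 1 + 1 = i := by omega
    rw [hi1] at this
    exact this.1

lemma stairLen_ge_of {S : Finset ℕ} (h0 : 0 ∉ S) {l : ℕ}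
    (h : ∀ i, i + 1 < l → sMax S - (i+1) ∈ S) : l ≤ stairLen S := by
  by_contra hc
  push_neg at hc
  have hd : Nat.find (stair_exists S) + 1 < l := by unfold stairLen at hc; omega
  have hmem := h _ hd
  rcases Nat.find_spec (stair_exists S) with hsp | hsp
  · exact hsp hmem
  · rw [hsp] at hmem; exact h0 hmem

lemma stairLen_eq_of {S : Finset ℕ} (h0 : 0 ∉ S) {l : ℕ} (h1 : 1 ≤ l)
    (h2 : ∀ i < l, sMax S - i ∈ S) (h3 : sMax S - l ∉ S) : stairLen S = l := by
  have hge : l ≤ stairLen S := stairLen_ge_of h0 (fun i hi => h2 (i+1) hi)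
  have : ¬ (l < stairLen S) := by
    intro hlt
    exact h3 (stair_mem h0 ⟨_, h2 0 h1⟩ l hlt)
  omega

lemma stairLen_le_sMax {S : Finset ℕ} (h0 : 0 ∉ S) (hne : S.Nonempty) :
    stairLen S ≤ sMax S := by
  by_contra hc
  push_neg at hc
  exact h0 (by simpa using stair_mem h0 hne (sMax S) hc)


lemma block_mem {S : Finset ℕ} (h0 : 0 ∉ S) (hne : S.Nonempty) {q : ℕ}
    (h1 : sMax S + 1 ≤ q + stairLen S) (h2 : q ≤ sMax S) : q ∈ S := by
  have h3 : sMax S - (sMax S - q) = q := by omega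
  have h4 : sMax S - q < stairLen S := by omega
  have := stair_mem h0 hne _ h4
  rwa [h3] at this

def up (c p : ℕ) : ℕ := if c ≤ p then p + 1 else p
def down (c p : ℕ) : ℕ := if c ≤ p then p - 1 else p

lemma up_inj (c : ℕ) : Function.Injective (up c) := by
  intro a b h; unfold up at h; split_ifs at h <;> omega

def IsPent (S : Finset ℕ) : Prop :=
  ∃ a ∈ Icc 1 (sMax S), S = Icc a (2*a-1) ∨ S = Icc (a+1) (2*a)

instance : DecidablePred IsPent := fun S => by unfold IsPent; infer_instance

lemma isPent_of₁ {S : Finset ℕ} {a : ℕ} (ha : 1 ≤ a) (h : S = Icc a (2*a-1)) : IsPent S := by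
  refine ⟨a, ?_, Or.inl h⟩
  have : a ∈ S := by rw [h]; exact mem_Icc.2 ⟨le_refl a, by omega⟩
  exact mem_Icc.2 ⟨ha, le_sMax this⟩

lemma isPent_of₂ {S : Finset ℕ} {a : ℕ} (ha : 1 ≤ a) (h : S = Icc (a+1) (2*a)) : IsPent S := by
  refine ⟨a, ?_, Or.inr h⟩
  have : a + 1 ∈ S := by rw [h]; exact mem_Icc.2 ⟨le_refl _, by omega⟩
  exact mem_Icc.2 ⟨ha, by have := le_sMax this; omega⟩

def franklin (S : Finset ℕ) : Finset ℕ :=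
  if h : S.Nonempty then
    if S.min' h ≤ stairLen S then (S.erase (S.min' h)).image (up (sMax S + 1 - S.min' h))
    else insert (stairLen S) (S.image (down (sMax S + 1 - stairLen S)))
  else S

lemma case1_spec {S : Finset ℕ} (h0 : 0 ∉ S) (hne : S.Nonempty) (hnp : ¬ IsPent S)
    (hc : S.min' hne ≤ stairLen S) :
    0 ∉ (S.erase (S.min' hne)).image (up (sMax S + 1 - S.min' hne)) ∧
    ((S.erase (S.min' hne)).image (up (sMax S + 1 - S.min' hne))).Nonempty ∧
    ¬ IsPent ((S.erase (S.min' hne)).image (up (sMax S + 1 - S.min' hne))) ∧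
    ((S.erase (S.min' hne)).image (up (sMax S + 1 - S.min' hne))).sum id = S.sum id ∧
    ((S.erase (S.min' hne)).image (up (sMax S + 1 - S.min' hne))).card + 1 = S.card ∧
    franklin ((S.erase (S.min' hne)).image (up (sMax S + 1 - S.min' hne))) = S := by
  set M := sMax S with hM
  set s := S.min' hne with hs
  set l := stairLen S with hl
  set c := M + 1 - s with hcdef
  set T := (S.erase s).image (up c) with hT
  have hsmem : s ∈ S := S.min'_mem hne
  have hs1 : 1 ≤ s := Nat.one_le_iff_ne_zero.2 (fun h => h0 (h ▸ hsmem))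
  have hsM : s ≤ M := le_sMax hsmem
  have hmin : ∀ p ∈ S, s ≤ p := fun p hp => S.min'_le p hp
  have hl1 : 1 ≤ l := stairLen_pos S
  have hlM : l ≤ M := stairLen_le_sMax h0 hne
  -- main inequality 2s ≤ M
  have hD1 : 2 * s ≤ M := by
    by_contra h'
    push_neg at h'
    have hll : l ≤ M - s + 1 := by
      by_contra h2
      push_neg at h2
      have h3 := stair_mem h0 hne (M - s + 1) h2
      have h4 : M - (M - s + 1) = s - 1 := by omega
      rw [h4] at h3
      have := hmin _ h3
      omega
    have hMeq : M = 2 * s - 1 := by omega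
    have hSeq : S = Icc s M := by
      ext q
      simp only [mem_Icc]
      constructor
      · intro hq; exact ⟨hmin q hq, le_sMax hq⟩
      · rintro ⟨hq1, hq2⟩
        exact block_mem h0 hne (by omega) hq2
    exact hnp (isPent_of₁ hs1 (by rw [hSeq, hMeq]))
  have hblock : ∀ q, c ≤ q → q ≤ M → q ∈ S := by
    intro q hq1 hq2
    exact block_mem h0 hne (by omega) hq2
  have hcs : s < c := by omega
  have hc1 : 1 ≤ c := by omega
  have hmemT : ∀ p, p ∈ T ↔ (p ∈ S ∧ p ≠ s ∧ p < c) ∨ (c + 1 ≤ p ∧ p ≤ M + 1) := by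
    intro p
    rw [hT]
    simp only [mem_image, mem_erase]
    constructor
    · rintro ⟨q, ⟨hqs, hqS⟩, rfl⟩
      have hqM := le_sMax hqS
      unfold up
      split
      · right; constructor <;> omega
      · left; exact ⟨hqS, hqs, by omega⟩
    · rintro (⟨h1, h2, h3⟩ | ⟨h1, h2⟩)
      · exact ⟨p, ⟨h2, h1⟩, by unfold up; rw [if_neg (by omega)]⟩
      · refine ⟨p - 1, ⟨by omega, hblock (p-1) (by omega) (by omega)⟩, ?_⟩
        unfold up; rw [if_pos (by omega)]; omega
  have hT0 : 0 ∉ T := by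
    rw [hmemT]
    rintro (⟨h1, _, _⟩ | ⟨h1, _⟩)
    · exact h0 h1
    · omega
  have hTtop : M + 1 ∈ T := (hmemT _).2 (Or.inr ⟨by omega, le_refl _⟩)
  have hTne : T.Nonempty := ⟨M + 1, hTtop⟩
  have hTub : ∀ p ∈ T, p ≤ M + 1 := by
    intro p hp
    rcases (hmemT p).1 hp with ⟨h1, _, _⟩ | ⟨_, h2⟩
    · have := le_sMax h1; omega
    · exact h2
  have hTmax : sMax T = M + 1 := sMax_eq_of hTtop hTub
  have hTlb : ∀ p ∈ T, s + 1 ≤ p := by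
    intro p hp
    rcases (hmemT p).1 hp with ⟨h1, h2, _⟩ | ⟨h1, _⟩
    · have := hmin _ h1; omega
    · omega
  have hTmin : s + 1 ≤ T.min' hTne := hTlb _ (T.min'_mem hTne)
  have hTl : stairLen T = s := by
    refine stairLen_eq_of hT0 hs1 ?_ ?_
    · intro i hi
      rw [hTmax]
      exact (hmemT _).2 (Or.inr ⟨by omega, by omega⟩)
    · rw [hTmax]
      rw [hmemT]
      rintro (⟨_, _, h3⟩ | ⟨h1, _⟩) <;> omega
  have hTnp : ¬ IsPent T := by
    rintro ⟨a, ha, heq | heq⟩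
    · rw [mem_Icc] at ha
      have ha1 : 1 ≤ a := ha.1
      have haT : a ∈ T := by rw [heq]; exact mem_Icc.2 ⟨le_refl _, by omega⟩
      have hamax : sMax T = 2*a - 1 := by
        refine sMax_eq_of ?_ ?_
        · rw [heq]; exact mem_Icc.2 ⟨by omega, le_refl _⟩
        · intro p hp; rw [heq] at hp; exact (mem_Icc.1 hp).2
      have hstair : stairLen T = a := by
        refine stairLen_eq_of hT0 ha1 ?_ ?_
        · intro i hi
          rw [hamax, heq]
          exact mem_Icc.2 ⟨by omega, by omega⟩
        · rw [hamax, heq]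
          intro hmem
          rw [mem_Icc] at hmem
          omega
      have := hTlb _ haT
      omega
    · rw [mem_Icc] at ha
      have ha1 : 1 ≤ a := ha.1
      have hamax : sMax T = 2*a := by
        refine sMax_eq_of ?_ ?_
        · rw [heq]; exact mem_Icc.2 ⟨by omega, le_refl _⟩
        · intro p hp; rw [heq] at hp; exact (mem_Icc.1 hp).2
      rw [hTmax] at hamax
      have hstair : stairLen T = a := by
        refine stairLen_eq_of hT0 ha1 ?_ ?_
        · intro i hi
          rw [hTmax, heq]
          exact mem_Icc.2 ⟨by omega, by omega⟩
        · rw [hTmax, heq]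
          intro hmem
          rw [mem_Icc] at hmem
          omega
      rw [hTl] at hstair
      omega
  have hfilter : (S.erase s).filter (fun q => c ≤ q) = Icc c M := by
    ext q
    simp only [mem_filter, mem_erase, mem_Icc]
    constructor
    · rintro ⟨⟨h1, h2⟩, h3⟩
      exact ⟨h3, le_sMax h2⟩
    · rintro ⟨h1, h2⟩
      exact ⟨⟨by omega, hblock q h1 h2⟩, h1⟩
  have hsum : T.sum id = S.sum id := by
    have e0 : T.sum id = (S.erase s).sum (up c) := Finset.sum_image (fun a _ b _ h => up_inj c h)
    have e1 : (S.erase s).sum (up c) = (S.erase s).sum id + ((S.erase s).filter (fun q => c ≤ q)).card := by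
      rw [Finset.card_filter, ← Finset.sum_add_distrib]
      refine Finset.sum_congr rfl ?_
      intro q hq
      unfold up
      split <;> simp
    have e2 : ((S.erase s).filter (fun q => c ≤ q)).card = s := by
      rw [hfilter, Nat.card_Icc]; omega
    have e3 : (S.erase s).sum id + s = S.sum id := by
      have := Finset.sum_erase_add S id hsmem
      simpa using this
    rw [e0, e1, e2]
    omega
  have hcard : T.card + 1 = S.card := by
    have e0 : T.card = (S.erase s).card := Finset.card_image_of_injective _ (up_inj c)
    rw [e0, Finset.card_erase_of_mem hsmem]
    have : 1 ≤ S.card := Finset.card_pos.2 hne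
    have hSlt : s ≠ M := by omega
    have hMmem : M ∈ S := sMax_mem hne
    have : 2 ≤ S.card := Finset.one_lt_card.2 ⟨s, hsmem, M, hMmem, hSlt⟩
    omega
  refine ⟨hT0, hTne, hTnp, hsum, hcard, ?_⟩
  -- franklin T = S
  have hcond : ¬ (T.min' hTne ≤ stairLen T) := by rw [hTl]; omega
  rw [franklin, dif_pos hTne, if_neg hcond, hTl, hTmax]
  have hthr : M + 1 + 1 - s = c + 1 := by omega
  rw [hthr]
  ext p
  simp only [mem_insert, mem_image]
  constructor
  · rintro (rfl | ⟨q, hqT, rfl⟩)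
    · exact hsmem
    · rcases (hmemT q).1 hqT with ⟨h1, h2, h3⟩ | ⟨h1, h2⟩
      · rw [down, if_neg (by omega)]
        exact h1
      · rw [down, if_pos (by omega)]
        exact hblock _ (by omega) (by omega)
  · intro hp
    by_cases hps : p = s
    · exact Or.inl hps
    · right
      by_cases hpc : p < c
      · exact ⟨p, (hmemT p).2 (Or.inl ⟨hp, hps, hpc⟩), by rw [down, if_neg (by omega)]⟩
      · refine ⟨p + 1, (hmemT _).2 (Or.inr ⟨by omega, by have := le_sMax hp; omega⟩), ?_⟩
        rw [down, if_pos (by omega)]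
        omega


lemma case2_spec {S : Finset ℕ} (h0 : 0 ∉ S) (hne : S.Nonempty) (hnp : ¬ IsPent S)
    (hc : stairLen S < S.min' hne) :
    0 ∉ insert (stairLen S) (S.image (down (sMax S + 1 - stairLen S))) ∧
    (insert (stairLen S) (S.image (down (sMax S + 1 - stairLen S)))).Nonempty ∧
    ¬ IsPent (insert (stairLen S) (S.image (down (sMax S + 1 - stairLen S)))) ∧
    (insert (stairLen S) (S.image (down (sMax S + 1 - stairLen S)))).sum id = S.sum id ∧
    (insert (stairLen S) (S.image (down (sMax S + 1 - stairLen S)))).card = S.card + 1 ∧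
    franklin (insert (stairLen S) (S.image (down (sMax S + 1 - stairLen S)))) = S := by
  set M := sMax S with hM
  set s := S.min' hne with hs
  set l := stairLen S with hl
  set c := M + 1 - l with hcdef
  set T := insert l (S.image (down c)) with hT
  have hsmem : s ∈ S := S.min'_mem hne
  have hs1 : 1 ≤ s := Nat.one_le_iff_ne_zero.2 (fun h => h0 (h ▸ hsmem))
  have hsM : s ≤ M := le_sMax hsmem
  have hmin : ∀ p ∈ S, s ≤ p := fun p hp => S.min'_le p hp
  have hl1 : 1 ≤ l := stairLen_pos S
  have hlM : l ≤ M := stairLen_le_sMax h0 hne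
  have hnm : M - l ∉ S := stair_not_mem h0
  have hblock : ∀ q, c ≤ q → q ≤ M → q ∈ S := by
    intro q hq1 hq2
    exact block_mem h0 hne (by omega) hq2
  have hsc : s ≤ c := hmin _ (hblock c (le_refl c) (by omega))
  have hsne : s ≠ M - l := fun h => hnm (h ▸ hsmem)
  -- main inequality 2l+1 ≤ M
  have hM2l : 2 * l + 1 ≤ M := by
    by_contra h'
    push_neg at h'
    -- then s = c = M+1-l, M = 2l, S = Icc (l+1) (2l)
    have hse : s = c := by omega
    have hMeq : M = 2 * l := by omega
    have hSeq : S = Icc (l+1) (2*l) := by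
      ext q
      simp only [mem_Icc]
      constructor
      · intro hq
        have := hmin q hq
        have := le_sMax hq
        omega
      · rintro ⟨h1, h2⟩
        exact hblock q (by omega) (by omega)
    exact hnp (isPent_of₂ hl1 hSeq)
  have hmemT : ∀ p, p ∈ T ↔ p = l ∨ (p ∈ S ∧ p < c) ∨ (M - l ≤ p ∧ p ≤ M - 1) := by
    intro p
    rw [hT]
    simp only [mem_insert, mem_image]
    constructor
    · rintro (rfl | ⟨q, hqS, rfl⟩)
      · exact Or.inl rfl
      · right
        have hqM := le_sMax hqS
        unfold down
        split
        · right; omega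
        · left; exact ⟨hqS, by omega⟩
    · rintro (rfl | ⟨h1, h2⟩ | ⟨h1, h2⟩)
      · exact Or.inl rfl
      · exact Or.inr ⟨p, h1, by rw [down, if_neg (by omega)]⟩
      · refine Or.inr ⟨p + 1, hblock (p+1) (by omega) (by omega), ?_⟩
        rw [down, if_pos (by omega)]
        omega
  have hT0 : 0 ∉ T := by
    rw [hmemT]
    rintro (h | ⟨h1, _⟩ | ⟨h1, _⟩)
    · omega
    · exact h0 h1
    · omega
  have hTmem_l : l ∈ T := (hmemT _).2 (Or.inl rfl)
  have hTne : T.Nonempty := ⟨l, hTmem_l⟩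
  have hTub : ∀ p ∈ T, p ≤ M - 1 := by
    intro p hp
    rcases (hmemT p).1 hp with rfl | ⟨h1, h2⟩ | ⟨_, h2⟩
    · omega
    · have : p ≠ M - l := fun h => hnm (h ▸ h1)
      omega
    · exact h2
  have hTtop : M - 1 ∈ T := (hmemT _).2 (Or.inr (Or.inr ⟨by omega, le_refl _⟩))
  have hTmax : sMax T = M - 1 := sMax_eq_of hTtop hTub
  have hTlb : ∀ p ∈ T, l ≤ p := by
    intro p hp
    rcases (hmemT p).1 hp with rfl | ⟨h1, _⟩ | ⟨h1, _⟩
    · exact le_refl _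
    · have := hmin _ h1; omega
    · omega
  have hTmin : T.min' hTne = l :=
    le_antisymm (T.min'_le _ hTmem_l) (Finset.le_min' _ _ _ hTlb)
  have hTstair : l ≤ stairLen T := by
    refine stairLen_ge_of hT0 ?_
    intro i hi
    rw [hTmax]
    exact (hmemT _).2 (Or.inr (Or.inr ⟨by omega, by omega⟩))
  have hTnp : ¬ IsPent T := by
    rintro ⟨a, ha, heq | heq⟩
    · rw [mem_Icc] at ha
      have ha1 : 1 ≤ a := ha.1
      have hal : a = l := by
        have h1 : l ≥ a := by
          have := hTmem_l; rw [heq] at this; exact (mem_Icc.1 this).1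
        have h2 : a ∈ T := by rw [heq]; exact mem_Icc.2 ⟨le_refl _, by omega⟩
        have := hTlb _ h2
        omega
      have hmx : M - 1 ≤ 2*a - 1 := by
        have := hTtop; rw [heq] at this; exact (mem_Icc.1 this).2
      omega
    · rw [mem_Icc] at ha
      have ha1 : 1 ≤ a := ha.1
      have hal : a + 1 = l := by
        have h1 : l ≥ a + 1 := by
          have := hTmem_l; rw [heq] at this; exact (mem_Icc.1 this).1
        have h2 : a + 1 ∈ T := by rw [heq]; exact mem_Icc.2 ⟨le_refl _, by omega⟩
        have := hTlb _ h2
        omega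
      have hmx : M - 1 ≤ 2*a := by
        have := hTtop; rw [heq] at this; exact (mem_Icc.1 this).2
      have hmx2 : 2*a ≤ M - 1 := by
        have h2 : 2*a ∈ T := by rw [heq]; exact mem_Icc.2 ⟨by omega, le_refl _⟩
        exact hTub _ h2
      omega
  have hinjS : ∀ q1 ∈ S, ∀ q2 ∈ S, down c q1 = down c q2 → q1 = q2 := by
    intro q1 hq1 q2 hq2 h
    have hne1 : q1 ≠ M - l := fun h' => hnm (h' ▸ hq1)
    have hne2 : q2 ≠ M - l := fun h' => hnm (h' ▸ hq2)
    unfold down at h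
    split_ifs at h <;> omega
  have hlnotmem : l ∉ S.image (down c) := by
    rw [mem_image]
    rintro ⟨q, hqS, hdq⟩
    have h1 := hmin _ hqS
    have h2 := le_sMax hqS
    have hne1 : q ≠ M - l := fun h' => hnm (h' ▸ hqS)
    unfold down at hdq
    split_ifs at hdq <;> omega
  have hfilter : S.filter (fun q => c ≤ q) = Icc c M := by
    ext q
    simp only [mem_filter, mem_Icc]
    constructor
    · rintro ⟨h1, h2⟩
      exact ⟨h2, le_sMax h1⟩
    · rintro ⟨h1, h2⟩
      exact ⟨hblock q h1 h2, h1⟩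
  have hsum : T.sum id = S.sum id := by
    have e0 : T.sum id = l + (S.image (down c)).sum id := by
      rw [hT, Finset.sum_insert hlnotmem]; rfl
    have e1 : (S.image (down c)).sum id = S.sum (down c) := Finset.sum_image hinjS
    have e2 : S.sum (down c) + (S.filter (fun q => c ≤ q)).card = S.sum id := by
      rw [Finset.card_filter, ← Finset.sum_add_distrib]
      refine Finset.sum_congr rfl ?_
      intro q hq
      unfold down
      split
      · simp only [id]; omega
      · simp
    have e3 : (S.filter (fun q => c ≤ q)).card = l := by
      rw [hfilter, Nat.card_Icc]; omega
    rw [e0, e1]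
    omega
  have hcard : T.card = S.card + 1 := by
    rw [hT, Finset.card_insert_of_notMem hlnotmem, Finset.card_image_of_injOn hinjS]
  refine ⟨hT0, hTne, hTnp, hsum, hcard, ?_⟩
  -- franklin T = S
  have hcond : T.min' hTne ≤ stairLen T := by rw [hTmin]; exact hTstair
  rw [franklin, dif_pos hTne, if_pos hcond, hTmin, hTmax]
  have hthr : M - 1 + 1 - l = M - l := by omega
  rw [hthr]
  ext p
  simp only [mem_image, mem_erase]
  constructor
  · rintro ⟨q, ⟨hql, hqT⟩, rfl⟩
    rcases (hmemT q).1 hqT with rfl | ⟨h1, h2⟩ | ⟨h1, h2⟩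
    · exact absurd rfl hql
    · have : q ≠ M - l := fun h' => hnm (h' ▸ h1)
      rw [up, if_neg (by omega)]
      exact h1
    · rw [up, if_pos (by omega)]
      exact hblock _ (by omega) (by omega)
  · intro hp
    have hp1 := hmin _ hp
    have hp2 := le_sMax hp
    have hp3 : p ≠ M - l := fun h' => hnm (h' ▸ hp)
    by_cases hpc : p < c
    · refine ⟨p, ⟨by omega, (hmemT _).2 (Or.inr (Or.inl ⟨hp, hpc⟩))⟩, ?_⟩
      rw [up, if_neg (by omega)]
    · refine ⟨p - 1, ⟨by omega, (hmemT _).2 (Or.inr (Or.inr ⟨by omega, by omega⟩))⟩, ?_⟩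
      rw [up, if_pos (by omega)]
      omega

lemma franklin_spec {S : Finset ℕ} (h0 : 0 ∉ S) (hne : S.Nonempty) (hnp : ¬ IsPent S) :
    0 ∉ franklin S ∧ (franklin S).Nonempty ∧ ¬ IsPent (franklin S) ∧
    (franklin S).sum id = S.sum id ∧
    ((franklin S).card + 1 = S.card ∨ (franklin S).card = S.card + 1) ∧
    franklin (franklin S) = S := by
  by_cases hc : S.min' hne ≤ stairLen S
  · have h := case1_spec h0 hne hnp hc
    rw [franklin, dif_pos hne, if_pos hc]
    exact ⟨h.1, h.2.1, h.2.2.1, h.2.2.2.1, Or.inl h.2.2.2.2.1, h.2.2.2.2.2⟩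
  · push_neg at hc
    have h := case2_spec h0 hne hnp hc
    rw [franklin, dif_pos hne, if_neg (by omega)]
    exact ⟨h.1, h.2.1, h.2.2.1, h.2.2.2.1, Or.inr h.2.2.2.2.1, h.2.2.2.2.2⟩


def eZ (k : ℕ) : ℤ := ∑ S ∈ DP k, (-1) ^ S.card

def pentZ (k : ℕ) : ℤ :=
  (if k = 0 then 1 else 0) +
    ∑ m ∈ Icc 1 k, (-1 : ℤ) ^ m *
      ((if m * (3 * m - 1) = 2 * k then 1 else 0) + (if m * (3 * m + 1) = 2 * k then 1 else 0))

lemma sum_Icc_len (a d : ℕ) : (Icc a (a + d)).sum id * 2 = (2 * a + d) * (d + 1) := by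
  induction d with
  | zero => simp [Finset.Icc_self]; ring
  | succ d ih =>
    have h1 : a + (d + 1) = (a + d) + 1 := rfl
    rw [h1, ← Finset.insert_Icc_right_eq_Icc_add_one (by omega), Finset.sum_insert (by simp [mem_Icc])]
    have h2 : id (a + d + 1) = a + d + 1 := rfl
    zify at ih ⊢
    linarith [ih]

lemma sum_Icc_pent1 {a : ℕ} (ha : 1 ≤ a) : (Icc a (2 * a - 1)).sum id * 2 = a * (3 * a - 1) := by
  have h1 : 2 * a - 1 = a + (a - 1) := by omega
  rw [h1, sum_Icc_len]
  obtain ⟨c, rfl⟩ : ∃ c, a = c + 1 := ⟨a - 1, by omega⟩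
  have h2 : c + 1 - 1 = c := by omega
  have h3 : 3 * (c + 1) - 1 = 3 * c + 2 := by omega
  rw [h2, h3]; ring

lemma sum_Icc_pent2 {a : ℕ} (ha : 1 ≤ a) : (Icc (a+1) (2 * a)).sum id * 2 = a * (3 * a + 1) := by
  have h1 : 2 * a = (a + 1) + (a - 1) := by omega
  rw [h1, sum_Icc_len]
  obtain ⟨c, rfl⟩ : ∃ c, a = c + 1 := ⟨a - 1, by omega⟩
  have h2 : c + 1 - 1 = c := by omega
  rw [h2]; ring

lemma pent_sq1 {a k : ℕ} (ha : 1 ≤ a) (h : a * (3 * a - 1) = 2 * k) :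
    (6 * a - 1) * (6 * a - 1) = 24 * k + 1 := by
  obtain ⟨c, rfl⟩ : ∃ c, a = c + 1 := ⟨a - 1, by omega⟩
  have h3 : 3 * (c + 1) - 1 = 3 * c + 2 := by omega
  have h6 : 6 * (c + 1) - 1 = 6 * c + 5 := by omega
  rw [h3] at h
  rw [h6]
  nlinarith [h]

lemma pent_sq2 {a k : ℕ} (ha : 1 ≤ a) (h : a * (3 * a + 1) = 2 * k) :
    (6 * a + 1) * (6 * a + 1) = 24 * k + 1 := by nlinarith [h]

lemma pent_unique1 {a b k : ℕ} (ha : 1 ≤ a) (hb : 1 ≤ b)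
    (h1 : a * (3 * a - 1) = 2 * k) (h2 : b * (3 * b - 1) = 2 * k) : a = b := by
  have e1 := pent_sq1 ha h1
  have e2 := pent_sq1 hb h2
  have : 6 * a - 1 = 6 * b - 1 := Nat.mul_self_inj.1 (by omega)
  omega

lemma pent_unique2 {a b k : ℕ} (ha : 1 ≤ a) (hb : 1 ≤ b)
    (h1 : a * (3 * a + 1) = 2 * k) (h2 : b * (3 * b + 1) = 2 * k) : a = b := by
  have e1 := pent_sq2 ha h1
  have e2 := pent_sq2 hb h2
  have : 6 * a + 1 = 6 * b + 1 := Nat.mul_self_inj.1 (by omega)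
  omega

lemma pent_not_both {a b k : ℕ} (ha : 1 ≤ a) (hb : 1 ≤ b)
    (h1 : a * (3 * a - 1) = 2 * k) (h2 : b * (3 * b + 1) = 2 * k) : False := by
  have e1 := pent_sq1 ha h1
  have e2 := pent_sq2 hb h2
  have : 6 * a - 1 = 6 * b + 1 := Nat.mul_self_inj.1 (by omega)
  omega

lemma pent_le {a k : ℕ} (ha : 1 ≤ a) (h : a * (3 * a - 1) = 2 * k ∨ a * (3 * a + 1) = 2 * k) :
    a ≤ k := by
  have h2 : 3 * a - 1 ≥ 2 := by omega
  rcases h with h | h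
  · have := Nat.mul_le_mul_left a h2
    omega
  · have : a * 2 ≤ a * (3 * a + 1) := Nat.mul_le_mul_left a (by omega)
    omega

lemma pent_mem_DP_iff {k : ℕ} {S : Finset ℕ} :
    (S ∈ DP k ∧ IsPent S) ↔
      ((∃ a, 1 ≤ a ∧ a * (3 * a - 1) = 2 * k ∧ S = Icc a (2 * a - 1)) ∨
       (∃ a, 1 ≤ a ∧ a * (3 * a + 1) = 2 * k ∧ S = Icc (a + 1) (2 * a))) := by
  constructor
  · rintro ⟨hDP, a, ha, heq | heq⟩
    · rw [mem_Icc] at ha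
      have hsum : S.sum id = k := (mem_DP.1 hDP).2
      left
      refine ⟨a, ha.1, ?_, heq⟩
      have := sum_Icc_pent1 ha.1
      rw [← heq, hsum] at this
      omega
    · rw [mem_Icc] at ha
      have hsum : S.sum id = k := (mem_DP.1 hDP).2
      right
      refine ⟨a, ha.1, ?_, heq⟩
      have := sum_Icc_pent2 ha.1
      rw [← heq, hsum] at this
      omega
  · rintro (⟨a, ha, hk, rfl⟩ | ⟨a, ha, hk, rfl⟩)
    · have hsum : (Icc a (2*a-1)).sum id = k := by
        have := sum_Icc_pent1 ha; omega
      have h0 : (0:ℕ) ∉ Icc a (2*a-1) := by simp [mem_Icc]; omega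
      exact ⟨mem_DP.2 ⟨subset_Icc_of_sum h0 hsum, hsum⟩, isPent_of₁ ha rfl⟩
    · have hsum : (Icc (a+1) (2*a)).sum id = k := by
        have := sum_Icc_pent2 ha; omega
      have h0 : (0:ℕ) ∉ Icc (a+1) (2*a) := by simp [mem_Icc]
      exact ⟨mem_DP.2 ⟨subset_Icc_of_sum h0 hsum, hsum⟩, isPent_of₂ ha rfl⟩

lemma DP_zero : DP 0 = {∅} := by
  ext S
  simp only [mem_DP, Finset.mem_singleton]
  constructor
  · rintro ⟨h1, _⟩
    have : S ⊆ ∅ := by simpa using h1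
    exact Finset.subset_empty.1 this
  · rintro rfl
    simp

theorem eZ_eq_pentZ (k : ℕ) : eZ k = pentZ k := by
  rcases Nat.eq_zero_or_pos k with rfl | hk
  · simp [eZ, pentZ, DP_zero]
  -- split the sum
  have hsplit : eZ k = (∑ S ∈ (DP k).filter (fun S => IsPent S), (-1:ℤ) ^ S.card)
      + ∑ S ∈ (DP k).filter (fun S => ¬ IsPent S), (-1:ℤ) ^ S.card := by
    rw [eZ, ← Finset.sum_filter_add_sum_filter_not (DP k) (fun S => IsPent S)]
  have hnonpent : ∑ S ∈ (DP k).filter (fun S => ¬ IsPent S), (-1:ℤ) ^ S.card = 0 := by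
    refine Finset.sum_involution (fun S _ => franklin S) ?_ ?_ ?_ ?_
    · intro S hS
      rw [Finset.mem_filter] at hS
      obtain ⟨hDP, hnp⟩ := hS
      have h0 := zero_not_mem_of_mem_DP hDP
      have hne := nonempty_of_mem_DP hk hDP
      obtain ⟨_, _, _, _, hcard, _⟩ := franklin_spec h0 hne hnp
      rcases hcard with h | h
      · rw [← h, pow_succ]; ring
      · rw [h, pow_succ]; ring
    · intro S hS _
      rw [Finset.mem_filter] at hS
      obtain ⟨hDP, hnp⟩ := hS
      have h0 := zero_not_mem_of_mem_DP hDP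
      have hne := nonempty_of_mem_DP hk hDP
      obtain ⟨_, _, _, _, hcard, _⟩ := franklin_spec h0 hne hnp
      intro heq
      have heq' : franklin S = S := heq
      rw [heq'] at hcard
      omega
    · intro S hS
      rw [Finset.mem_filter] at hS
      obtain ⟨hDP, hnp⟩ := hS
      have h0 := zero_not_mem_of_mem_DP hDP
      have hne := nonempty_of_mem_DP hk hDP
      obtain ⟨hf0, hfne, hfnp, hfsum, _, _⟩ := franklin_spec h0 hne hnp
      rw [Finset.mem_filter]
      have hsum : (franklin S).sum id = k := by rw [hfsum]; exact (mem_DP.1 hDP).2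
      exact ⟨mem_DP.2 ⟨subset_Icc_of_sum hf0 hsum, hsum⟩, hfnp⟩
    · intro S hS
      rw [Finset.mem_filter] at hS
      obtain ⟨hDP, hnp⟩ := hS
      have h0 := zero_not_mem_of_mem_DP hDP
      have hne := nonempty_of_mem_DP hk hDP
      exact (franklin_spec h0 hne hnp).2.2.2.2.2
  rw [hsplit, hnonpent, add_zero, pentZ, if_neg (by omega), zero_add]
  -- now evaluate the pentagonal part
  by_cases hA : ∃ a, 1 ≤ a ∧ a * (3 * a - 1) = 2 * k
  · obtain ⟨a, ha1, hak⟩ := hA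
    have hfilter : (DP k).filter (fun S => IsPent S) = {Icc a (2*a-1)} := by
      ext S
      rw [Finset.mem_filter, Finset.mem_singleton, pent_mem_DP_iff]
      constructor
      · rintro (⟨b, hb1, hbk, rfl⟩ | ⟨b, hb1, hbk, rfl⟩)
        · rw [pent_unique1 hb1 ha1 hbk hak]
        · exact (pent_not_both ha1 hb1 hak hbk).elim
      · rintro rfl
        exact Or.inl ⟨a, ha1, hak, rfl⟩
    rw [hfilter, Finset.sum_singleton, Nat.card_Icc]
    have hcard : 2*a - 1 + 1 - a = a := by omega
    rw [hcard]
    rw [Finset.sum_eq_single_of_mem a (mem_Icc.2 ⟨ha1, pent_le ha1 (Or.inl hak)⟩)]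
    · rw [if_pos hak, if_neg (fun h => pent_not_both ha1 ha1 hak h)]
      ring
    · intro b hb hba
      rw [mem_Icc] at hb
      rw [if_neg, if_neg]
      · ring
      · intro h; exact pent_not_both ha1 hb.1 hak h
      · intro h; exact hba (pent_unique1 hb.1 ha1 h hak)
  · by_cases hB : ∃ a, 1 ≤ a ∧ a * (3 * a + 1) = 2 * k
    · obtain ⟨a, ha1, hak⟩ := hB
      have hfilter : (DP k).filter (fun S => IsPent S) = {Icc (a+1) (2*a)} := by
        ext S
        rw [Finset.mem_filter, Finset.mem_singleton, pent_mem_DP_iff]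
        constructor
        · rintro (⟨b, hb1, hbk, rfl⟩ | ⟨b, hb1, hbk, rfl⟩)
          · exact (pent_not_both hb1 ha1 hbk hak).elim
          · rw [pent_unique2 hb1 ha1 hbk hak]
        · rintro rfl
          exact Or.inr ⟨a, ha1, hak, rfl⟩
      rw [hfilter, Finset.sum_singleton, Nat.card_Icc]
      have hcard : 2*a + 1 - (a+1) = a := by omega
      rw [hcard]
      rw [Finset.sum_eq_single_of_mem a (mem_Icc.2 ⟨ha1, pent_le ha1 (Or.inr hak)⟩)]
      · rw [if_pos hak, if_neg (fun h => hA ⟨a, ha1, h⟩)]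
        ring
      · intro b hb hba
        rw [mem_Icc] at hb
        rw [if_neg, if_neg]
        · ring
        · intro h; exact hba (pent_unique2 hb.1 ha1 h hak)
        · intro h; exact hA ⟨b, hb.1, h⟩
    · have hfilter : (DP k).filter (fun S => IsPent S) = ∅ := by
        ext S
        rw [Finset.mem_filter, pent_mem_DP_iff]
        simp only [Finset.notMem_empty, iff_false]
        rintro (⟨b, hb1, hbk, _⟩ | ⟨b, hb1, hbk, _⟩)
        · exact hA ⟨b, hb1, hbk⟩
        · exact hB ⟨b, hb1, hbk⟩
      rw [hfilter, Finset.sum_empty]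
      symm
      refine Finset.sum_eq_zero ?_
      intro m hm
      rw [mem_Icc] at hm
      rw [if_neg (fun h => hA ⟨m, hm.1, h⟩), if_neg (fun h => hB ⟨m, hm.1, h⟩)]
      ring


def EjZ (j k : ℕ) : ℤ := ∑ S ∈ (DP k).filter (fun S => j ∉ S), (-1) ^ S.card

lemma mem_side {j k : ℕ} (hj : 1 ≤ j) :
    ∑ S ∈ (DP k).filter (fun S => j ∈ S), (-1 : ℤ) ^ S.card
      = -(if j ≤ k then EjZ j (k - j) else 0) := by
  by_cases hjk : j ≤ k
  · rw [if_pos hjk, EjZ, ← Finset.sum_neg_distrib]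
    refine Finset.sum_nbij' (fun S => S.erase j) (fun T => insert j T) ?_ ?_ ?_ ?_ ?_
    · intro S hS
      rw [Finset.mem_filter] at hS ⊢
      obtain ⟨hDP, hjS⟩ := hS
      have h0 := zero_not_mem_of_mem_DP hDP
      have hsum : (S.erase j).sum id + j = k := by
        have h3 := Finset.sum_erase_add S id hjS
        rw [(mem_DP.1 hDP).2] at h3
        simpa using h3
      have h0' : 0 ∉ S.erase j := fun h => h0 (Finset.mem_of_mem_erase h)
      have hsum' : (S.erase j).sum id = k - j := by omega
      exact ⟨mem_DP.2 ⟨subset_Icc_of_sum h0' hsum', hsum'⟩, Finset.notMem_erase j S⟩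
    · intro T hT
      rw [Finset.mem_filter] at hT ⊢
      obtain ⟨hDP, hjT⟩ := hT
      have h0 := zero_not_mem_of_mem_DP hDP
      have hsum : (insert j T).sum id = k := by
        rw [Finset.sum_insert hjT]
        have h2 := (mem_DP.1 hDP).2
        simp only [id] at h2 ⊢
        omega
      have h0' : 0 ∉ insert j T := by
        rw [Finset.mem_insert]
        rintro (h | h)
        · omega
        · exact h0 h
      exact ⟨mem_DP.2 ⟨subset_Icc_of_sum h0' hsum, hsum⟩, Finset.mem_insert_self j T⟩
    · intro S hS
      rw [Finset.mem_filter] at hS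
      exact Finset.insert_erase hS.2
    · intro T hT
      rw [Finset.mem_filter] at hT
      exact Finset.erase_insert hT.2
    · intro S hS
      rw [Finset.mem_filter] at hS
      have hjS := hS.2
      have hcard : S.card = (S.erase j).card + 1 := by
        rw [Finset.card_erase_of_mem hjS]
        have : 1 ≤ S.card := Finset.card_pos.2 ⟨j, hjS⟩
        omega
      rw [hcard, pow_succ]
      ring
  · rw [if_neg hjk, neg_zero]
    refine Finset.sum_eq_zero ?_
    intro S hS
    rw [Finset.mem_filter] at hS
    exfalso
    have := (mem_DP.1 hS.1).1 hS.2
    rw [mem_Icc] at this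
    omega

lemma eZ_split {j : ℕ} (k : ℕ) (hj : 1 ≤ j) :
    eZ k = EjZ j k - (if j ≤ k then EjZ j (k - j) else 0) := by
  have h1 : eZ k = (∑ S ∈ (DP k).filter (fun S => j ∈ S), (-1 : ℤ) ^ S.card)
      + ∑ S ∈ (DP k).filter (fun S => ¬ (j ∈ S)), (-1 : ℤ) ^ S.card := by
    rw [eZ, ← Finset.sum_filter_add_sum_filter_not (DP k) (fun S => j ∈ S)]
  have h2 : ∑ S ∈ (DP k).filter (fun S => ¬ (j ∈ S)), (-1 : ℤ) ^ S.card = EjZ j k := rfl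
  rw [h1, h2, mem_side hj]
  ring

lemma telescope {j : ℕ} (hj : 1 ≤ j) :
    ∀ n, j ≤ n → ∑ t ∈ Icc 1 (n / j), eZ (n - j * t) = EjZ j (n - j) := by
  intro n
  induction n using Nat.strong_induction_on with
  | _ n ih =>
    intro hjn
    have hj0 : 0 < j := hj
    by_cases h2 : j ≤ n - j
    · -- n ≥ 2j
      have hd : n / j = (n - j) / j + 1 := by
        conv_lhs => rw [show n = (n - j) + j by omega]
        rw [Nat.add_div_right _ hj0]
      have hT1 : 1 ≤ (n - j) / j + 1 := Nat.le_add_left 1 _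
      rw [hd, ← Finset.insert_Icc_add_one_left_eq_Icc hT1, Finset.sum_insert (by simp)]
      have hre : ∑ t ∈ Icc (1+1) ((n-j)/j + 1), eZ (n - j * t)
          = ∑ t ∈ Icc 1 ((n-j)/j), eZ ((n - j) - j * t) := by
        have hmap : Icc (1+1) ((n-j)/j + 1) = (Icc 1 ((n-j)/j)).map (addRightEmbedding 1) := by
          rw [Finset.map_add_right_Icc]
        rw [hmap, Finset.sum_map]
        refine Finset.sum_congr rfl ?_
        intro t ht
        simp only [addRightEmbedding_apply]
        congr 1
        rw [mul_add, mul_one]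
        omega

      have hIH := ih (n - j) (by omega) h2
      rw [hre, hIH]
      have hsplit := eZ_split (j := j) (n - j) hj
      rw [if_pos h2] at hsplit
      have harg : n - j * 1 = n - j := by omega
      rw [harg]
      omega
    · -- j ≤ n < 2j
      have hT : n / j = 1 := by
        refine Nat.div_eq_of_lt_le (by omega) (by omega)
      rw [hT, Finset.Icc_self, Finset.sum_singleton]
      have hsplit := eZ_split (j := j) (n - j) hj
      rw [if_neg (by omega)] at hsplit
      have harg : n - j * 1 = n - j := by omega
      rw [harg]
      omega


lemma sub_one_injOn {T : Finset ℕ} (h0 : 0 ∉ T) :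
    ∀ x ∈ T, ∀ y ∈ T, x - 1 = y - 1 → x = y := by
  intro x hx y hy h
  have hx0 : x ≠ 0 := fun h' => h0 (h' ▸ hx)
  have hy0 : y ≠ 0 := fun h' => h0 (h' ▸ hy)
  omega

lemma sum_pow_split (T : Finset ℕ) :
    ∑ j ∈ T, 2^j = (if 0 ∈ T then 1 else 0) + 2 * ∑ j ∈ (T.erase 0).image (fun x => x - 1), 2^j := by
  have h0' : (0:ℕ) ∉ T.erase 0 := Finset.notMem_erase 0 T
  have h1 : ∑ j ∈ (T.erase 0).image (fun x => x-1), 2^j = ∑ j ∈ T.erase 0, 2^(j-1) :=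
    Finset.sum_image (sub_one_injOn h0')
  have h2 : ∑ j ∈ T.erase 0, 2^j = 2 * ∑ j ∈ T.erase 0, 2^(j-1) := by
    rw [Finset.mul_sum]
    refine Finset.sum_congr rfl ?_
    intro j hj
    have hj0 : j ≠ 0 := Finset.ne_of_mem_erase hj
    calc 2^j = 2^(j-1+1) := by rw [show j - 1 + 1 = j by omega]
    _ = 2 * 2^(j-1) := by rw [pow_succ]; ring
  by_cases h0 : 0 ∈ T
  · rw [if_pos h0, h1, ← h2]
    have := Finset.sum_erase_add T (fun j => 2^j) h0
    simp only [pow_zero] at this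
    omega
  · rw [if_neg h0, h1, ← h2, Finset.erase_eq_of_notMem h0]
    omega

lemma testBit_finsetSum : ∀ (t : ℕ) (T : Finset ℕ), ((∑ j ∈ T, 2^j).testBit t = true ↔ t ∈ T) := by
  intro t
  induction t with
  | zero =>
    intro T
    rw [Nat.testBit_zero]
    have h := sum_pow_split T
    by_cases h0 : 0 ∈ T
    · rw [if_pos h0] at h
      simp only [decide_eq_true_eq]
      constructor
      · intro _; exact h0
      · intro _; omega
    · rw [if_neg h0] at h
      simp only [decide_eq_true_eq]
      constructor
      · intro hh; omega
      · intro hh; exact absurd hh h0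
  | succ t ih =>
    intro T
    rw [Nat.testBit_succ]
    have h := sum_pow_split T
    have hdiv : (∑ j ∈ T, 2^j) / 2 = ∑ j ∈ (T.erase 0).image (fun x => x - 1), 2^j := by
      by_cases h0 : 0 ∈ T
      · rw [if_pos h0] at h; omega
      · rw [if_neg h0] at h; omega
    rw [hdiv, ih]
    simp only [Finset.mem_image, Finset.mem_erase]
    constructor
    · rintro ⟨x, ⟨hx0, hxT⟩, hx⟩
      have : x = t + 1 := by omega
      rwa [← this]
    · intro hT
      exact ⟨t+1, ⟨by omega, hT⟩, rfl⟩


lemma binDigitSum_zero : binDigitSum 0 = 0 := by simp [binDigitSum]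

lemma binDigitSum_rec {N : ℕ} (hN : 0 < N) : binDigitSum N = N % 2 + binDigitSum (N / 2) := by
  unfold binDigitSum
  rw [Nat.digits_def' (by norm_num : (1:ℕ) < 2) hN]
  simp

lemma binDigitSum_two_mul_add_one (m : ℕ) : binDigitSum (2*m+1) = binDigitSum m + 1 := by
  rw [binDigitSum_rec (by omega)]
  have h1 : (2*m+1) % 2 = 1 := by omega
  have h2 : (2*m+1) / 2 = m := by omega
  rw [h1, h2]
  omega

lemma binDigitSum_pow_sum : ∀ N (T : Finset ℕ), (∑ j ∈ T, 2^j) = N → binDigitSum N = T.card := by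
  intro N
  induction N using Nat.strong_induction_on with
  | _ N ih =>
    intro T hT
    rcases Nat.eq_zero_or_pos N with rfl | hpos
    · have hTe : T = ∅ := by
        by_contra h
        obtain ⟨j, hj⟩ := Finset.nonempty_of_ne_empty h
        have h1 : 2^j ≤ ∑ j ∈ T, 2^j :=
          Finset.single_le_sum (f := fun j => 2^j) (fun i _ => Nat.zero_le _) hj
        have h2 : 0 < 2^j := Nat.pow_pos (by norm_num)
        omega
      rw [hTe]
      simpa using binDigitSum_zero
    · have hsplit := sum_pow_split T
      rw [hT] at hsplit
      have h0' : (0:ℕ) ∉ T.erase 0 := Finset.notMem_erase 0 T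
      have hcard : ((T.erase 0).image (fun x => x - 1)).card = (T.erase 0).card :=
        Finset.card_image_of_injOn (sub_one_injOn h0')
      have hrec := binDigitSum_rec hpos
      by_cases h0 : 0 ∈ T
      · rw [if_pos h0] at hsplit
        have hIH := ih (N / 2) (by omega) ((T.erase 0).image (fun x => x - 1)) (by omega)
        have hce : (T.erase 0).card = T.card - 1 := by
          rw [Finset.card_erase_of_mem h0]
        have hc1 : 1 ≤ T.card := Finset.card_pos.2 ⟨0, h0⟩
        have hm2 : N % 2 = 1 := by omega
        rw [hrec, hIH, hcard, hce, hm2]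
        omega
      · rw [if_neg h0] at hsplit
        have hIH := ih (N / 2) (by omega) ((T.erase 0).image (fun x => x - 1)) (by omega)
        have hce : T.erase 0 = T := Finset.erase_eq_of_notMem h0
        have hm2 : N % 2 = 0 := by omega
        rw [hrec, hIH, hcard, hce, hm2]
        omega

/-- the set of parts encoded by the bits of `i-1` -/
def Psi (i : ℕ) : Finset ℕ := (Icc 1 i).filter (fun j => (i-1).testBit (j-1))

lemma Psi_zero_not_mem (i : ℕ) : 0 ∉ Psi i := by
  simp [Psi, mem_filter, mem_Icc]

lemma bNat_eq (i : ℕ) : bNat i = (Psi i).sum id := by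
  unfold bNat Psi
  rw [Finset.sum_filter]
  rfl

lemma bNatSeq_eq (x : ℝ) (i : ℕ) : bNatSeq x i = ∑ j ∈ Psi i, (j:ℝ)^x := by
  unfold bNatSeq Psi
  rw [Finset.sum_filter]

lemma testBit_shift {S : Finset ℕ} (h0 : 0 ∉ S) (t : ℕ) :
    ((∑ j ∈ S, 2^(j-1)).testBit t = true) ↔ (t+1) ∈ S := by
  have h1 : ∑ j ∈ S, 2^(j-1) = ∑ j ∈ S.image (fun x => x - 1), 2^j :=
    (Finset.sum_image (sub_one_injOn h0)).symm
  rw [h1, testBit_finsetSum]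
  simp only [Finset.mem_image]
  constructor
  · rintro ⟨x, hxS, hx⟩
    have hx0 : x ≠ 0 := fun h' => h0 (h' ▸ hxS)
    have : x = t + 1 := by omega
    rwa [← this]
  · intro h
    exact ⟨t+1, h, rfl⟩

lemma le_sum_pow {S : Finset ℕ} {q : ℕ} (hq : q ∈ S) : q ≤ ∑ j ∈ S, 2^(j-1) := by
  have h1 : 2^(q-1) ≤ ∑ j ∈ S, 2^(j-1) :=
    Finset.single_le_sum (f := fun j => 2^(j-1)) (fun i _ => Nat.zero_le _) hq
  have h2 : q - 1 < 2^(q-1) := Nat.lt_two_pow_self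
  omega

lemma Psi_of {S : Finset ℕ} (h0 : 0 ∉ S) : Psi (1 + ∑ j ∈ S, 2^(j-1)) = S := by
  set m := ∑ j ∈ S, 2^(j-1) with hm
  have hm1 : 1 + m - 1 = m := by omega
  ext q
  rw [Psi, Finset.mem_filter, mem_Icc, hm1]
  constructor
  · rintro ⟨⟨hq1, hq2⟩, hbit⟩
    have := (testBit_shift h0 (q-1)).1 hbit
    rwa [show q - 1 + 1 = q by omega] at this
  · intro hq
    have hq1 : 1 ≤ q := by
      rcases Nat.eq_zero_or_pos q with rfl | h
      · exact absurd hq h0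
      · exact h
    refine ⟨⟨hq1, by have := le_sum_pow hq; omega⟩, ?_⟩
    rw [testBit_shift h0, show q - 1 + 1 = q by omega]
    exact hq

lemma Psi_inv {i : ℕ} (hi : 2 ≤ i) : 1 + ∑ j ∈ Psi i, 2^(j-1) = i := by
  have h0 : 0 ∉ Psi i := Psi_zero_not_mem i
  have key : ∀ t, ((∑ j ∈ Psi i, 2^(j-1)).testBit t) = ((i-1).testBit t) := by
    intro t
    rw [Bool.eq_iff_iff, testBit_shift h0]
    rw [Psi, Finset.mem_filter, mem_Icc]
    constructor
    · rintro ⟨_, hbit⟩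
      simpa using hbit
    · intro hbit
      have hti : t + 1 ≤ i := by
        by_contra hc
        push_neg at hc
        have : i - 1 < 2^t := by
          have := Nat.lt_two_pow_self (n := t)
          omega
        rw [Nat.testBit_eq_false_of_lt this] at hbit
        exact absurd hbit (by simp)
      exact ⟨⟨by omega, hti⟩, by simpa using hbit⟩
  have := Nat.eq_of_testBit_eq key
  omega

lemma card_Psi {i : ℕ} (hi : 2 ≤ i) : binDigitSum (i-1) = (Psi i).card := by
  have h0 : 0 ∉ Psi i := Psi_zero_not_mem i
  have hsum : ∑ j ∈ (Psi i).image (fun x => x - 1), 2^j = i - 1 := by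
    rw [Finset.sum_image (sub_one_injOn h0)]
    have := Psi_inv hi
    omega
  rw [binDigitSum_pow_sum (i-1) _ hsum, Finset.card_image_of_injOn (sub_one_injOn h0)]


lemma sigmaX_expand (x : ℝ) {n : ℕ} (hn : 1 ≤ n) (g : ℕ) :
    sigmaX x ((n:ℤ) - (g:ℕ)) =
      ∑ j ∈ Icc 1 n, (if g < n ∧ j ∣ (n - g) then (1:ℝ) else 0) * (j:ℝ)^x := by
  by_cases hg : g < n
  · have hpos : (0:ℤ) < (n:ℤ) - (g:ℕ) := by omega
    rw [sigmaX, if_pos hpos]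
    have htn : ((n:ℤ) - (g:ℕ)).toNat = n - g := by omega
    rw [htn]
    have hre : ∑ j ∈ Icc 1 n, (if g < n ∧ j ∣ (n - g) then (1:ℝ) else 0) * (j:ℝ)^x
        = ∑ j ∈ (Icc 1 n).filter (fun j => g < n ∧ j ∣ (n - g)), (j:ℝ)^x := by
      rw [Finset.sum_filter]
      refine Finset.sum_congr rfl ?_
      intro j _
      by_cases h : g < n ∧ j ∣ (n - g)
      · rw [if_pos h, if_pos h, one_mul]
      · rw [if_neg h, if_neg h, zero_mul]
    rw [hre]
    congr 1
    ext d
    rw [Finset.mem_filter, Nat.mem_divisors, mem_Icc]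
    constructor
    · rintro ⟨h1, h2⟩
      have hd1 : 1 ≤ d := Nat.pos_of_dvd_of_pos h1 (by omega)
      have hd2 : d ≤ n - g := Nat.le_of_dvd (by omega) h1
      exact ⟨⟨hd1, by omega⟩, hg, h1⟩
    · rintro ⟨⟨h1, h2⟩, _, h3⟩
      exact ⟨h3, by omega⟩
  · rw [sigmaX, if_neg (by omega)]
    symm
    refine Finset.sum_eq_zero ?_
    intro j _
    rw [if_neg (fun h => hg h.1), zero_mul]

lemma sigmaX_self (x : ℝ) {n : ℕ} (hn : 1 ≤ n) :
    sigmaX x (n:ℤ) = ∑ j ∈ Icc 1 n, (if j ∣ n then (1:ℝ) else 0) * (j:ℝ)^x := by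
  have h := sigmaX_expand x hn 0
  simp only [Nat.cast_zero, sub_zero, Nat.sub_zero] at h
  rw [h]
  refine Finset.sum_congr rfl ?_
  intro j _
  congr 1
  by_cases hd : j ∣ n
  · rw [if_pos ⟨by omega, hd⟩, if_pos hd]
  · rw [if_neg (fun hh => hd hh.2), if_neg hd]

lemma geom_sum (n : ℕ) : ∑ j ∈ Icc 1 n, 2^(j-1) = 2^n - 1 := by
  induction n with
  | zero => simp
  | succ n ih =>
    rw [← Finset.insert_Icc_right_eq_Icc_add_one (by omega), Finset.sum_insert (by simp)]
    have h2 : (1:ℕ) ≤ 2^n := Nat.one_le_two_pow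
    have h3 : (2:ℕ)^(n+1) = 2 * 2^n := by rw [pow_succ]; ring
    have h4 : (2:ℕ)^(n+1-1) = 2^n := by norm_num
    omega

lemma bds21 {i : ℕ} (hi : 1 ≤ i) : binDigitSum (2*i - 1) = binDigitSum (i-1) + 1 := by
  rw [show 2*i - 1 = 2*(i-1)+1 by omega, binDigitSum_two_mul_add_one]

lemma h_term (x : ℝ) {n : ℕ} (hn : 1 ≤ n) :
    (∑ i ∈ Icc 2 (2^n), if bNat i = n then (-1:ℝ)^binDigitSum (2*i-1) * bNatSeq x i else 0)
      = ∑ S ∈ DP n, (-1:ℝ)^(S.card + 1) * ∑ j ∈ S, (j:ℝ)^x := by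
  rw [← Finset.sum_filter]
  refine Finset.sum_nbij' (fun i => Psi i) (fun S => 1 + ∑ j ∈ S, 2^(j-1)) ?_ ?_ ?_ ?_ ?_
  · intro i hi
    rw [Finset.mem_filter] at hi
    obtain ⟨_, hb⟩ := hi
    have hsum : (Psi i).sum id = n := by rw [← bNat_eq]; exact hb
    exact mem_DP.2 ⟨subset_Icc_of_sum (Psi_zero_not_mem i) hsum, hsum⟩
  · intro S hS
    have h0 := zero_not_mem_of_mem_DP hS
    have hne := nonempty_of_mem_DP hn hS
    show (1 + ∑ j ∈ S, 2^(j-1)) ∈ (Icc 2 (2^n)).filter (fun i => bNat i = n)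
    rw [Finset.mem_filter]
    constructor
    · rw [mem_Icc]
      constructor
      · obtain ⟨q, hq⟩ := hne
        have := le_sum_pow hq
        have hq1 : 1 ≤ q := Nat.one_le_iff_ne_zero.2 (fun h => h0 (h ▸ hq))
        omega
      · have hsub : S ⊆ Icc 1 n := (mem_DP.1 hS).1
        have hle : ∑ j ∈ S, 2^(j-1) ≤ ∑ j ∈ Icc 1 n, 2^(j-1) :=
          Finset.sum_le_sum_of_subset hsub
        rw [geom_sum] at hle
        have h2 : (1:ℕ) ≤ 2^n := Nat.one_le_two_pow
        omega
    · rw [bNat_eq, Psi_of h0]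
      exact (mem_DP.1 hS).2
  · intro i hi
    rw [Finset.mem_filter, mem_Icc] at hi
    exact Psi_inv hi.1.1
  · intro S hS
    exact Psi_of (zero_not_mem_of_mem_DP hS)
  · intro i hi
    rw [Finset.mem_filter, mem_Icc] at hi
    obtain ⟨⟨hi2, _⟩, _⟩ := hi
    rw [bNatSeq_eq, bds21 (by omega), card_Psi hi2]

lemma coefZ {j n : ℕ} (hj : 1 ≤ j) (hjn : j ≤ n) :
    ∑ S ∈ DP n, (if j ∈ S then (-1:ℤ)^(S.card+1) else 0) = EjZ j (n - j) := by
  rw [← Finset.sum_filter]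
  have h1 : ∑ S ∈ (DP n).filter (fun S => j ∈ S), (-1:ℤ)^(S.card+1)
      = -∑ S ∈ (DP n).filter (fun S => j ∈ S), (-1:ℤ)^S.card := by
    rw [← Finset.sum_neg_distrib]
    refine Finset.sum_congr rfl ?_
    intro S _
    rw [pow_succ]
    ring
  rw [h1, mem_side hj, if_pos hjn]
  ring

lemma h_term2 (x : ℝ) {n : ℕ} (hn : 1 ≤ n) :
    ∑ S ∈ DP n, (-1:ℝ)^(S.card + 1) * ∑ j ∈ S, (j:ℝ)^x
      = ∑ j ∈ Icc 1 n, ((EjZ j (n - j) : ℤ) : ℝ) * (j:ℝ)^x := by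
  have step1 : ∑ S ∈ DP n, (-1:ℝ)^(S.card + 1) * ∑ j ∈ S, (j:ℝ)^x
      = ∑ S ∈ DP n, ∑ j ∈ Icc 1 n,
          (if j ∈ S then (-1:ℝ)^(S.card+1) * (j:ℝ)^x else 0) := by
    refine Finset.sum_congr rfl ?_
    intro S hS
    have hsub : S ⊆ Icc 1 n := (mem_DP.1 hS).1
    rw [Finset.sum_ite_mem, Finset.inter_eq_right.2 hsub, Finset.mul_sum]
  rw [step1, Finset.sum_comm]
  refine Finset.sum_congr rfl ?_
  intro j hj
  rw [mem_Icc] at hj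
  have e1 : ∑ S ∈ DP n, (if j ∈ S then (-1:ℝ)^(S.card+1) * (j:ℝ)^x else 0)
      = (∑ S ∈ DP n, (if j ∈ S then (-1:ℝ)^(S.card+1) else 0)) * (j:ℝ)^x := by
    rw [Finset.sum_mul]
    refine Finset.sum_congr rfl ?_
    intro S _
    by_cases h : j ∈ S
    · rw [if_pos h, if_pos h]
    · rw [if_neg h, if_neg h, zero_mul]
  rw [e1]
  congr 1
  have e2 : ∑ S ∈ DP n, (if j ∈ S then (-1:ℝ)^(S.card+1) else 0)
      = ((∑ S ∈ DP n, (if j ∈ S then (-1:ℤ)^(S.card+1) else 0) : ℤ) : ℝ) := by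
    push_cast
    rfl
  rw [e2, coefZ hj.1 hj.2]

lemma even_pent1 (m : ℕ) : ∃ g, m * (3 * m - 1) = 2 * g := by
  rcases Nat.even_or_odd m with ⟨c, hc⟩ | ⟨c, hc⟩
  · exact ⟨c * (3 * m - 1), by rw [hc]; ring⟩
  · refine ⟨m * (3 * c + 1), ?_⟩
    have h1 : 3 * m - 1 = 2 * (3 * c + 1) := by omega
    rw [h1]; ring

lemma even_pent2 (m : ℕ) : ∃ g, m * (3 * m + 1) = 2 * g := by
  rcases Nat.even_or_odd m with ⟨c, hc⟩ | ⟨c, hc⟩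
  · exact ⟨c * (3 * m + 1), by rw [hc]; ring⟩
  · refine ⟨m * (3 * c + 2), ?_⟩
    have h1 : 3 * m + 1 = 2 * (3 * c + 2) := by omega
    rw [h1]; ring

lemma count_t {j n g : ℕ} (hj : 1 ≤ j) (hg : 1 ≤ g) :
    ∑ t ∈ Icc 1 (n / j), (if n - j * t = g then (1:ℤ) else 0)
      = if g < n ∧ j ∣ (n - g) then 1 else 0 := by
  have hj0 : 0 < j := hj
  have hbound : ∀ t ∈ Icc 1 (n / j), j * t ≤ n := by
    intro t ht
    rw [mem_Icc] at ht
    have := (Nat.le_div_iff_mul_le hj0).1 ht.2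
    rwa [Nat.mul_comm]
  by_cases hcond : g < n ∧ j ∣ (n - g)
  · obtain ⟨hgn, c, hc⟩ := hcond
    have hc1 : 1 ≤ c := by
      rcases Nat.eq_zero_or_pos c with rfl | h
      · omega
      · exact h
    have hcmem : c ∈ Icc 1 (n / j) := by
      rw [mem_Icc]
      refine ⟨hc1, (Nat.le_div_iff_mul_le hj0).2 ?_⟩
      rw [Nat.mul_comm]
      omega
    rw [if_pos ⟨hgn, c, hc⟩, Finset.sum_eq_single_of_mem c hcmem]
    · rw [if_pos (by omega)]
    · intro t ht hne
      rw [if_neg]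
      intro heq
      have h1 := hbound t ht
      have h2 : j * t = j * c := by omega
      exact hne (Nat.eq_of_mul_eq_mul_left hj0 h2)
  · rw [if_neg hcond]
    refine Finset.sum_eq_zero ?_
    intro t ht
    rw [if_neg]
    intro heq
    have h1 := hbound t ht
    rw [mem_Icc] at ht
    have h2 : 1 ≤ j * t := by
      have := Nat.mul_le_mul hj ht.1
      omega
    refine hcond ⟨by omega, ⟨t, by omega⟩⟩

lemma pentZ_ext {k n : ℕ} (hk : k ≤ n) :
    pentZ k = (if k = 0 then 1 else 0) +
      ∑ m ∈ Icc 1 n, (-1 : ℤ) ^ m *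
        ((if m * (3 * m - 1) = 2 * k then 1 else 0)
          + (if m * (3 * m + 1) = 2 * k then 1 else 0)) := by
  rw [pentZ]
  congr 1
  refine Finset.sum_subset (Finset.Icc_subset_Icc_right hk) ?_
  intro m hm hnm
  rw [mem_Icc] at hm hnm
  have hm1 : 1 ≤ m := hm.1
  have hmk : ¬ (m ≤ k) := by omega
  rw [if_neg, if_neg]
  · ring
  · intro h
    exact hmk (pent_le hm1 (Or.inr h))
  · intro h
    exact hmk (pent_le hm1 (Or.inl h))

lemma div_ind {j n : ℕ} (hj : 1 ≤ j) (hn : 1 ≤ n) :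
    ∑ t ∈ Icc 1 (n / j), (if n - j * t = 0 then (1:ℤ) else 0)
      = if j ∣ n then 1 else 0 := by
  have hj0 : 0 < j := hj
  have hbound : ∀ t ∈ Icc 1 (n / j), j * t ≤ n := by
    intro t ht
    rw [mem_Icc] at ht
    have := (Nat.le_div_iff_mul_le hj0).1 ht.2
    rwa [Nat.mul_comm]
  by_cases hd : j ∣ n
  · obtain ⟨c, hc⟩ := hd
    have hc1 : 1 ≤ c := by
      rcases Nat.eq_zero_or_pos c with rfl | h
      · omega
      · exact h
    have hcmem : c ∈ Icc 1 (n / j) := by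
      rw [mem_Icc]
      exact ⟨hc1, (Nat.le_div_iff_mul_le hj0).2 (by rw [Nat.mul_comm]; omega)⟩
    rw [if_pos ⟨c, hc⟩, Finset.sum_eq_single_of_mem c hcmem]
    · rw [if_pos (by omega)]
    · intro t ht hne
      rw [if_neg]
      intro heq
      have h1 := hbound t ht
      have h2 : j * t = j * c := by omega
      exact hne (Nat.eq_of_mul_eq_mul_left hj0 h2)
  · rw [if_neg hd]
    refine Finset.sum_eq_zero ?_
    intro t ht
    rw [if_neg]
    intro heq
    have h1 := hbound t ht
    exact hd ⟨t, by omega⟩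

lemma per_j {j n : ℕ} (hj : 1 ≤ j) (hjn : j ≤ n) :
    (if j ∣ n then (1:ℤ) else 0)
      = EjZ j (n - j)
        + ∑ m ∈ Icc 1 n, (-1:ℤ)^(m-1) *
            ((if m*(3*m-1)/2 < n ∧ j ∣ (n - m*(3*m-1)/2) then 1 else 0)
              + (if m*(3*m+1)/2 < n ∧ j ∣ (n - m*(3*m+1)/2) then 1 else 0)) := by
  have hn : 1 ≤ n := le_trans hj hjn
  have hA : ∑ t ∈ Icc 1 (n / j), pentZ (n - j * t) = EjZ j (n - j) := by
    rw [← telescope hj n hjn]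
    refine Finset.sum_congr rfl ?_
    intro t _
    exact (eZ_eq_pentZ _).symm
  have hB : ∑ t ∈ Icc 1 (n / j), pentZ (n - j * t)
      = (if j ∣ n then (1:ℤ) else 0)
        + ∑ m ∈ Icc 1 n, (-1:ℤ)^m *
            ((if m*(3*m-1)/2 < n ∧ j ∣ (n - m*(3*m-1)/2) then 1 else 0)
              + (if m*(3*m+1)/2 < n ∧ j ∣ (n - m*(3*m+1)/2) then 1 else 0)) := by
    have hexp : ∀ t ∈ Icc 1 (n / j), pentZ (n - j * t)
        = (if n - j * t = 0 then (1:ℤ) else 0) +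
          ∑ m ∈ Icc 1 n, (-1 : ℤ) ^ m *
            ((if m * (3 * m - 1) = 2 * (n - j * t) then 1 else 0)
              + (if m * (3 * m + 1) = 2 * (n - j * t) then 1 else 0)) :=
      fun t _ => pentZ_ext (by omega)
    rw [Finset.sum_congr rfl hexp, Finset.sum_add_distrib, div_ind hj hn]
    congr 1
    rw [Finset.sum_comm]
    refine Finset.sum_congr rfl ?_
    intro m hm
    rw [mem_Icc] at hm
    have hm1 : 1 ≤ m := hm.1
    rw [← Finset.mul_sum, Finset.sum_add_distrib]
    congr 1
    congr 1
    · obtain ⟨g, hg⟩ := even_pent1 m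
      have hgdiv : m*(3*m-1)/2 = g := by omega
      have hg1 : 1 ≤ g := by
        have : 2 ≤ m * (3*m-1) := by
          have h1 : 2 ≤ 3*m - 1 := by omega
          have := Nat.mul_le_mul hm1 h1
          omega
        omega
      rw [hgdiv]
      rw [← count_t hj hg1]
      refine Finset.sum_congr rfl ?_
      intro t _
      congr 1
      exact propext ⟨fun h => by omega, fun h => by omega⟩
    · obtain ⟨g, hg⟩ := even_pent2 m
      have hgdiv : m*(3*m+1)/2 = g := by omega
      have hg1 : 1 ≤ g := by
        have h1 : m * 1 ≤ m * (3*m+1) := Nat.mul_le_mul_left m (by omega)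
        omega
      rw [hgdiv]
      rw [← count_t hj hg1]
      refine Finset.sum_congr rfl ?_
      intro t _
      congr 1
      exact propext ⟨fun h => by omega, fun h => by omega⟩
  have hsign : ∑ m ∈ Icc 1 n, (-1:ℤ)^(m-1) *
            ((if m*(3*m-1)/2 < n ∧ j ∣ (n - m*(3*m-1)/2) then 1 else 0)
              + (if m*(3*m+1)/2 < n ∧ j ∣ (n - m*(3*m+1)/2) then 1 else 0))
      = -∑ m ∈ Icc 1 n, (-1:ℤ)^m *
            ((if m*(3*m-1)/2 < n ∧ j ∣ (n - m*(3*m-1)/2) then 1 else 0)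
              + (if m*(3*m+1)/2 < n ∧ j ∣ (n - m*(3*m+1)/2) then 1 else 0)) := by
    rw [← Finset.sum_neg_distrib]
    refine Finset.sum_congr rfl ?_
    intro m hm
    rw [mem_Icc] at hm
    have : m = (m - 1) + 1 := by omega
    rw [this, pow_succ]
    have h2 : m - 1 + 1 - 1 = m - 1 := by omega
    rw [h2]
    ring
  rw [hsign]
  rw [hB] at hA
  linarith [hA]

theorem main (x : ℝ) (n : ℕ) (hn : 1 ≤ n) :
    sigmaX x n =
      (∑ i ∈ Finset.Icc 2 (2 ^ n),
        if bNat i = n then (-1 : ℝ) ^ binDigitSum (2 * i - 1) * bNatSeq x i else 0)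
      + ∑ m ∈ Finset.Icc 1 n, (-1 : ℝ) ^ (m - 1) *
          (sigmaX x ((n : ℤ) - (m * (3 * m - 1) / 2 : ℕ)) +
           sigmaX x ((n : ℤ) - (m * (3 * m + 1) / 2 : ℕ))) := by
  rw [sigmaX_self x hn, h_term x hn, h_term2 x hn]
  have hpent : ∀ m ∈ Icc 1 n,
      (-1:ℝ)^(m-1) * (sigmaX x ((n : ℤ) - (m * (3 * m - 1) / 2 : ℕ)) +
           sigmaX x ((n : ℤ) - (m * (3 * m + 1) / 2 : ℕ)))
      = ∑ j ∈ Icc 1 n,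
          ((-1:ℝ)^(m-1) *
            ((if m * (3 * m - 1) / 2 < n ∧ j ∣ (n - m * (3 * m - 1) / 2) then (1:ℝ) else 0)
              + (if m * (3 * m + 1) / 2 < n ∧ j ∣ (n - m * (3 * m + 1) / 2) then (1:ℝ) else 0)))
            * (j:ℝ)^x := by
    intro m _
    rw [sigmaX_expand x hn (m * (3 * m - 1) / 2), sigmaX_expand x hn (m * (3 * m + 1) / 2)]
    rw [← Finset.sum_add_distrib, Finset.mul_sum]
    refine Finset.sum_congr rfl ?_
    intro j _
    ring
  rw [Finset.sum_congr rfl hpent, Finset.sum_comm, ← Finset.sum_add_distrib]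
  refine Finset.sum_congr rfl ?_
  intro j hj
  rw [mem_Icc] at hj
  rw [← Finset.sum_mul, ← add_mul]
  congr 1
  have hZ := per_j hj.1 hj.2
  exact_mod_cast hZ

end Stmt12

/-- Theorem 2: pentagonal recursion for `σ_x` with compensating sequence
`h_x(n) = ∑_{i ≥ 2, b_i = n} (-1)^{s(2i-1)} b_i(x)` (all such `i` satisfy `i ≤ 2^n`). -/
theorem stmt_12 (x : ℝ) (n : ℕ) (hn : 1 ≤ n) :
    sigmaX x n =
      (∑ i ∈ Finset.Icc 2 (2 ^ n),
        if bNat i = n then (-1 : ℝ) ^ binDigitSum (2 * i - 1) * bNatSeq x i else 0)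
      + ∑ m ∈ Finset.Icc 1 n, (-1 : ℝ) ^ (m - 1) *
          (sigmaX x ((n : ℤ) - (m * (3 * m - 1) / 2 : ℕ)) +
           sigmaX x ((n : ℤ) - (m * (3 * m + 1) / 2 : ℕ))) :=
  Stmt12.main x n hn
end
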